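/- arXiv:2404.02086 — 7 statements merged into one kernel-verified Lean document; each statement's English description precedes it below -/
import Mathlib

section
/- Let n ≥ 1, 0 < λ ≤ Λ, μ ∈ (0,1] and M ≥ 0. Let A : ℝⁿ → ℝ^{n×n} be a uniformly elliptic matrix field with constants λ, Λ satisfying ‖A(x) − A(y)‖ ≤ M|x − y|^μ for all x, y ∈ ℝⁿ. Fix x₀ ∈ ℝⁿ and r, ρ > 0, and define B(y) := A(x₀)^{−1/2} · A(x₀ + r·A(x₀)^{1/2} y) · A(x₀)^{−1/2}. Then for every x ∈ ℝⁿ with |x| < ρ and every ν ∈ ℝⁿ with |ν| = 1, one has |⟨B(x)ν, ν⟩^{1/2} − 1| ≤ (Λ^{(μ+1)/2}/(2λ^{3/2}))·M·(rρ)^μ. -/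
open scoped RealInnerProductSpace Matrix.Norms.L2Operator

/-- The square root of a positive semidefinite matrix (junk value `0` if the matrix is
not positive semidefinite). -/
noncomputable def matrixSqrt {n : ℕ} (A : Matrix (Fin n) (Fin n) ℝ) :
    Matrix (Fin n) (Fin n) ℝ :=
  @dite _ A.PosSemidef (Classical.dec _) (fun h => (h.1.eigenvectorUnitary : Matrix (Fin n) (Fin n) ℝ) *
    Matrix.diagonal ((RCLike.ofReal : ℝ → ℝ) ∘ Real.sqrt ∘ h.1.eigenvalues) *
    (star h.1.eigenvectorUnitary : Matrix (Fin n) (Fin n) ℝ)) (fun _ => 0)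

open scoped Matrix in
private lemma tE_mul' {n : ℕ} (M N : Matrix (Fin n) (Fin n) ℝ) (v : EuclideanSpace ℝ (Fin n)) :
    Matrix.toEuclideanLin (M * N) v = Matrix.toEuclideanLin M (Matrix.toEuclideanLin N v) := by
  simp [Matrix.toEuclideanLin_apply, Matrix.mulVec_mulVec]

private lemma tE_one' {n : ℕ} (v : EuclideanSpace ℝ (Fin n)) :
    Matrix.toEuclideanLin (1 : Matrix (Fin n) (Fin n) ℝ) v = v := by
  simp [Matrix.toEuclideanLin_apply]

private lemma tE_norm_le' {n : ℕ} (M : Matrix (Fin n) (Fin n) ℝ) (v : EuclideanSpace ℝ (Fin n)) :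
    ‖Matrix.toEuclideanLin M v‖ ≤ ‖M‖ * ‖v‖ := by
  rw [Matrix.l2_opNorm_def]
  exact ((Matrix.toEuclideanLin.trans LinearMap.toContinuousLinearMap) M).le_opNorm v

private lemma isHermitian_of_isSymm' {n : ℕ} {M : Matrix (Fin n) (Fin n) ℝ} (h : M.IsSymm) :
    M.IsHermitian := by
  rwa [Matrix.IsHermitian, Matrix.conjTranspose_eq_transpose_of_trivial]

open scoped Matrix in
private lemma quad_eq' {n : ℕ} (M : Matrix (Fin n) (Fin n) ℝ) (v : Fin n → ℝ) :
    star v ⬝ᵥ (M *ᵥ v) =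
      ⟪Matrix.toEuclideanLin M ((WithLp.equiv 2 _).symm v), (WithLp.equiv 2 _).symm v⟫ := by
  change _ = v ⬝ᵥ star (M *ᵥ v)
  simp [dotProduct_comm]

/-- Pointwise near-isotropy of the transformed anisotropy
`B(y) = A(x₀)^{−1/2} A(x₀ + r A(x₀)^{1/2} y) A(x₀)^{−1/2}`: for `|x| < ρ` and `|ν| = 1`,
`|⟨B(x)ν, ν⟩^{1/2} − 1| ≤ (Λ^{(μ+1)/2}/(2λ^{3/2})) M (rρ)^μ`. -/
theorem transformed_anisotropy_near_isotropy
    (n : ℕ) (hn : 1 ≤ n) (lam Lam : ℝ) (hlam : 0 < lam) (hlamLam : lam ≤ Lam)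
    (μ : ℝ) (hμ : μ ∈ Set.Ioc (0 : ℝ) 1) (M : ℝ) (hM : 0 ≤ M)
    (A : EuclideanSpace ℝ (Fin n) → Matrix (Fin n) (Fin n) ℝ)
    (hAsymm : ∀ x, (A x).IsSymm)
    (hAell : ∀ (x ξ : EuclideanSpace ℝ (Fin n)),
      lam * ‖ξ‖ ^ 2 ≤ ⟪Matrix.toEuclideanLin (A x) ξ, ξ⟫ ∧
      ⟪Matrix.toEuclideanLin (A x) ξ, ξ⟫ ≤ Lam * ‖ξ‖ ^ 2)
    (hAholder : ∀ x y : EuclideanSpace ℝ (Fin n), ‖A x - A y‖ ≤ M * ‖x - y‖ ^ μ)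
    (x₀ : EuclideanSpace ℝ (Fin n)) (r ρ : ℝ) (hr : 0 < r) (hρ : 0 < ρ)
    (B : EuclideanSpace ℝ (Fin n) → Matrix (Fin n) (Fin n) ℝ)
    (hB : ∀ y, B y = (matrixSqrt (A x₀))⁻¹ *
      A (x₀ + r • Matrix.toEuclideanLin (matrixSqrt (A x₀)) y) * (matrixSqrt (A x₀))⁻¹) :
    ∀ x ν : EuclideanSpace ℝ (Fin n), ‖x‖ < ρ → ‖ν‖ = 1 →
      |Real.sqrt ⟪Matrix.toEuclideanLin (B x) ν, ν⟫ - 1| ≤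
        Lam ^ ((μ + 1) / 2) / (2 * lam ^ ((3 : ℝ) / 2)) * M * (r * ρ) ^ μ := by
  intro x ν hx hν
  obtain ⟨hμ0, hμ1⟩ := hμ
  have hLam : (0:ℝ) < Lam := lt_of_lt_of_le hlam hlamLam
  -- A x₀ is positive definite
  have hSherm : (A x₀).IsHermitian := isHermitian_of_isSymm' (hAsymm x₀)
  have hSpd : (A x₀).PosDef := by
    refine Matrix.PosDef.of_dotProduct_mulVec_pos hSherm (fun v hv => ?_)
    rw [quad_eq']
    refine lt_of_lt_of_le ?_ (hAell x₀ ((WithLp.equiv 2 _).symm v)).1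
    have hvne : ((WithLp.equiv 2 (Fin n → ℝ)).symm v) ≠ 0 := by
      simpa using (Equiv.symm (WithLp.equiv 2 (Fin n → ℝ))).injective.ne_iff.mpr hv
    have : 0 < ‖(WithLp.equiv 2 (Fin n → ℝ)).symm v‖ := norm_pos_iff.mpr hvne
    positivity
  have hpsd := hSpd.posSemidef
  set P := matrixSqrt (A x₀) with hPdef
  have hP : P = (hpsd.1.eigenvectorUnitary : Matrix (Fin n) (Fin n) ℝ) *
      Matrix.diagonal ((RCLike.ofReal : ℝ → ℝ) ∘ Real.sqrt ∘ hpsd.1.eigenvalues) *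
      (star hpsd.1.eigenvectorUnitary : Matrix (Fin n) (Fin n) ℝ) := by
    rw [hPdef, matrixSqrt, dif_pos hpsd]
  have hPpsd : P.PosSemidef := by
    rw [hP]
    have hD : (Matrix.diagonal ((RCLike.ofReal : ℝ → ℝ) ∘ Real.sqrt ∘
        hpsd.1.eigenvalues)).PosSemidef :=
      Matrix.posSemidef_diagonal_iff.mpr (fun i => by simp [Real.sqrt_nonneg])
    have := hD.mul_mul_conjTranspose_same
      (hpsd.1.eigenvectorUnitary : Matrix (Fin n) (Fin n) ℝ)
    simpa [Matrix.star_eq_conjTranspose] using this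
  have hPP : P * P = A x₀ := by
    rw [hP]
    have hU : (star hpsd.1.eigenvectorUnitary : Matrix (Fin n) (Fin n) ℝ) *
        (hpsd.1.eigenvectorUnitary : Matrix (Fin n) (Fin n) ℝ) = 1 :=
      Unitary.coe_star_mul_self _
    have hd : Matrix.diagonal ((RCLike.ofReal : ℝ → ℝ) ∘ Real.sqrt ∘ hpsd.1.eigenvalues) *
        Matrix.diagonal ((RCLike.ofReal : ℝ → ℝ) ∘ Real.sqrt ∘ hpsd.1.eigenvalues) =
        Matrix.diagonal ((RCLike.ofReal : ℝ → ℝ) ∘ hpsd.1.eigenvalues) := by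
      rw [Matrix.diagonal_mul_diagonal]
      congr 1
      funext i
      simp [Real.mul_self_sqrt (hpsd.eigenvalues_nonneg i)]
    have hs := hpsd.1.spectral_theorem
    rw [Unitary.conjStarAlgAut_apply] at hs
    calc _ = (hpsd.1.eigenvectorUnitary : Matrix (Fin n) (Fin n) ℝ) *
          (Matrix.diagonal ((RCLike.ofReal : ℝ → ℝ) ∘ Real.sqrt ∘ hpsd.1.eigenvalues) *
          ((star hpsd.1.eigenvectorUnitary : Matrix (Fin n) (Fin n) ℝ) *
          (hpsd.1.eigenvectorUnitary : Matrix (Fin n) (Fin n) ℝ)) *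
          Matrix.diagonal ((RCLike.ofReal : ℝ → ℝ) ∘ Real.sqrt ∘ hpsd.1.eigenvalues)) *
          (star hpsd.1.eigenvectorUnitary : Matrix (Fin n) (Fin n) ℝ) := by
          simp only [mul_assoc]
      _ = A x₀ := by rw [hU, mul_one, hd]; exact hs.symm
  have hPherm : P.IsHermitian := hPpsd.1
  have hPdetUnit : IsUnit P.det := by
    have h1 : 0 < (A x₀).det := hSpd.det_pos
    rw [← hPP, Matrix.det_mul] at h1
    have : P.det ≠ 0 := by intro h; rw [h] at h1; simp at h1
    exact this.isUnit
  have hPPinv : P * P⁻¹ = 1 := Matrix.mul_nonsing_inv _ hPdetUnit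
  have hPinvherm : (P⁻¹).IsHermitian := hPpsd.inv.1
  have hPsymm := Matrix.isHermitian_iff_isSymmetric.mp hPherm
  have hPinvsymm := Matrix.isHermitian_iff_isSymmetric.mp hPinvherm
  set z := x₀ + r • Matrix.toEuclideanLin P x with hzdef
  set w := Matrix.toEuclideanLin P⁻¹ ν with hwdef
  have hPw : Matrix.toEuclideanLin P w = ν := by
    rw [hwdef, ← tE_mul', hPPinv, tE_one']
  set t := ⟪Matrix.toEuclideanLin (B x) ν, ν⟫ with htdef
  have ht : t = ⟪Matrix.toEuclideanLin (A z) w, w⟫ := by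
    rw [htdef, hB x, tE_mul', tE_mul', hPinvsymm]
  have hSww : ⟪Matrix.toEuclideanLin (A x₀) w, w⟫ = 1 := by
    rw [← hPP, tE_mul', hPsymm, hPw, real_inner_self_eq_norm_sq, hν, one_pow]
  have hw2 : lam * ‖w‖ ^ 2 ≤ 1 := by
    have := (hAell x₀ w).1; rw [hSww] at this; exact this
  have hwlow : 1 ≤ Lam * ‖w‖ ^ 2 := by
    have := (hAell x₀ w).2; rw [hSww] at this; exact this
  have htlow : lam / Lam ≤ t := by
    rw [ht]
    refine le_trans ?_ (hAell z w).1
    rw [div_le_iff₀ hLam]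
    calc lam = lam * 1 := (mul_one lam).symm
      _ ≤ lam * (Lam * ‖w‖ ^ 2) := by nlinarith
      _ = lam * ‖w‖ ^ 2 * Lam := by ring
  have htpos : 0 < t := lt_of_lt_of_le (div_pos hlam hLam) htlow
  -- Hölder bound on |t - 1|
  have hPx : ‖Matrix.toEuclideanLin P x‖ ≤ Real.sqrt Lam * ‖x‖ := by
    have h1 : ‖Matrix.toEuclideanLin P x‖ ^ 2 ≤ Lam * ‖x‖ ^ 2 := by
      have h2 : ⟪Matrix.toEuclideanLin (A x₀) x, x⟫ ≤ Lam * ‖x‖ ^ 2 := (hAell x₀ x).2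
      rw [← hPP, tE_mul', hPsymm] at h2
      rwa [← real_inner_self_eq_norm_sq]
    have := Real.sqrt_le_sqrt h1
    rwa [Real.sqrt_sq (norm_nonneg _), Real.sqrt_mul hLam.le, Real.sqrt_sq (norm_nonneg _)]
      at this
  have hzx : ‖z - x₀‖ ≤ r * (Real.sqrt Lam * ρ) := by
    rw [hzdef, add_sub_cancel_left, norm_smul, Real.norm_eq_abs, abs_of_pos hr]
    have : ‖Matrix.toEuclideanLin P x‖ ≤ Real.sqrt Lam * ρ :=
      hPx.trans (by nlinarith [Real.sqrt_nonneg Lam, hx.le])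
    nlinarith
  have hdiff : |t - 1| ≤ Lam ^ (μ / 2) / lam * (M * (r * ρ) ^ μ) := by
    have hts : t - 1 = ⟪Matrix.toEuclideanLin (A z - A x₀) w, w⟫ := by
      rw [map_sub, LinearMap.sub_apply, inner_sub_left, ← ht, hSww]
    have h1 : |t - 1| ≤ ‖A z - A x₀‖ * ‖w‖ ^ 2 := by
      rw [hts]
      calc |⟪Matrix.toEuclideanLin (A z - A x₀) w, w⟫|
          ≤ ‖Matrix.toEuclideanLin (A z - A x₀) w‖ * ‖w‖ := abs_real_inner_le_norm _ _
        _ ≤ ‖A z - A x₀‖ * ‖w‖ * ‖w‖ :=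
            mul_le_mul_of_nonneg_right (tE_norm_le' _ _) (norm_nonneg _)
        _ = ‖A z - A x₀‖ * ‖w‖ ^ 2 := by ring
    have h2 : ‖A z - A x₀‖ ≤ M * (r * (Real.sqrt Lam * ρ)) ^ μ := by
      refine (hAholder z x₀).trans ?_
      exact mul_le_mul_of_nonneg_left
        (Real.rpow_le_rpow (norm_nonneg _) hzx hμ0.le) hM
    have h3 : (r * (Real.sqrt Lam * ρ)) ^ μ = Lam ^ (μ / 2) * (r * ρ) ^ μ := by
      rw [show r * (Real.sqrt Lam * ρ) = Real.sqrt Lam * (r * ρ) by ring]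
      rw [Real.mul_rpow (Real.sqrt_nonneg _) (by positivity)]
      congr 1
      rw [Real.sqrt_eq_rpow, ← Real.rpow_mul hLam.le]
      congr 1; ring
    have hw2' : ‖w‖ ^ 2 ≤ 1 / lam := by rw [le_div_iff₀ hlam]; linarith
    calc |t - 1| ≤ ‖A z - A x₀‖ * ‖w‖ ^ 2 := h1
      _ ≤ (M * (r * (Real.sqrt Lam * ρ)) ^ μ) * (1 / lam) := by
          refine mul_le_mul h2 hw2' (sq_nonneg _) (by positivity)
      _ = Lam ^ (μ / 2) / lam * (M * (r * ρ) ^ μ) := by rw [h3]; ring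
  -- from |t-1| to |√t - 1|
  have hql : 0 < Real.sqrt (lam / Lam) := Real.sqrt_pos.mpr (div_pos hlam hLam)
  have hs1 : 0 < Real.sqrt t + 1 := by positivity
  have habs : |Real.sqrt t - 1| * (Real.sqrt t + 1) = |t - 1| := by
    rw [← abs_of_pos hs1, ← abs_mul]
    congr 1
    have h := Real.sq_sqrt htpos.le
    linear_combination h
  have hsum : 2 * Real.sqrt (lam / Lam) ≤ Real.sqrt t + 1 := by
    have h4 : Real.sqrt (lam / Lam) ≤ 1 := by
      rw [show (1:ℝ) = Real.sqrt 1 by simp]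
      exact Real.sqrt_le_sqrt (by rw [div_le_one hLam]; exact hlamLam)
    have h5 : Real.sqrt (lam / Lam) ≤ Real.sqrt t := Real.sqrt_le_sqrt htlow
    linarith
  have hA2 : |Real.sqrt t - 1| ≤ |t - 1| / (2 * Real.sqrt (lam / Lam)) := by
    rw [le_div_iff₀ (by positivity)]
    calc |Real.sqrt t - 1| * (2 * Real.sqrt (lam / Lam))
        ≤ |Real.sqrt t - 1| * (Real.sqrt t + 1) :=
          mul_le_mul_of_nonneg_left hsum (abs_nonneg _)
      _ = |t - 1| := habs
  have hsl : (0:ℝ) < lam ^ ((1:ℝ)/2) := Real.rpow_pos_of_pos hlam _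
  have hsL : (0:ℝ) < Lam ^ ((1:ℝ)/2) := Real.rpow_pos_of_pos hLam _
  calc |Real.sqrt t - 1| ≤ |t - 1| / (2 * Real.sqrt (lam / Lam)) := hA2
    _ ≤ (Lam ^ (μ / 2) / lam * (M * (r * ρ) ^ μ)) / (2 * Real.sqrt (lam / Lam)) := by
        gcongr
    _ = Lam ^ ((μ + 1) / 2) / (2 * lam ^ ((3 : ℝ) / 2)) * M * (r * ρ) ^ μ := by
        rw [show Real.sqrt (lam / Lam) = lam ^ ((1:ℝ)/2) / Lam ^ ((1:ℝ)/2) by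
          rw [Real.sqrt_eq_rpow, Real.div_rpow hlam.le hLam.le]]
        rw [show Lam ^ ((μ + 1) / 2) = Lam ^ (μ / 2) * Lam ^ ((1:ℝ)/2) by
          rw [← Real.rpow_add hLam]; congr 1; ring]
        rw [show lam ^ ((3:ℝ) / 2) = lam * lam ^ ((1:ℝ)/2) by
          rw [show (3:ℝ)/2 = 1 + 1/2 by norm_num, Real.rpow_add hlam, Real.rpow_one]]
        field_simp
end

section
/- Let n ≥ 1 and let X : ℝⁿ → ℝⁿ be a continuously differentiable vector field with compact support, and set L := sup_{x∈ℝⁿ} ‖DX(x)‖ (operator norm). Define Φ_t(x) := x + tX(x). Then for every t ∈ ℝ with |t| < 1/(2(1+L)): (i) Φ_t is a bijection of ℝⁿ onto itself which coincides with the identity outside the support of X, and its inverse Φ_t^{−1} is continuously differentiable; (ii) for every x ∈ ℝⁿ, ‖DΦ_t^{−1}(Φ_t(x)) − I + t·DX(x)‖ ≤ 2t²L². -/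
open Function Set

/-- Ring estimate: if `u` is a unit with `↑u = 1 + a` and `‖a‖ ≤ 1/2`, then
`‖↑u⁻¹ - (1 - a)‖ ≤ 2 ‖a‖²`. -/
lemma aux_unit_inv_estimate {R : Type*} [NormedRing R] [NormOneClass R]
    (u : Rˣ) (a : R) (hu : (u : R) = 1 + a) (ha : ‖a‖ ≤ 1 / 2) :
    ‖(↑u⁻¹ : R) - (1 - a)‖ ≤ 2 * ‖a‖ ^ 2 := by
  have hmul : (u : R) * (↑u⁻¹ : R) = 1 := u.mul_inv
  have hmul' : (↑u⁻¹ : R) * (u : R) = 1 := u.inv_mul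
  -- bound on ‖u⁻¹‖
  have h1 : (↑u⁻¹ : R) = 1 - a * ↑u⁻¹ := by
    have h0 : (1 + a) * (↑u⁻¹ : R) = 1 := by rw [← hu]; exact hmul
    rw [add_mul, one_mul] at h0
    exact eq_sub_of_add_eq h0
  have hnorm : ‖(↑u⁻¹ : R)‖ ≤ 2 := by
    have h2 : ‖(↑u⁻¹ : R)‖ ≤ 1 + ‖a‖ * ‖(↑u⁻¹ : R)‖ := by
      calc ‖(↑u⁻¹ : R)‖ = ‖(1 : R) - a * ↑u⁻¹‖ := by rw [← h1]
        _ ≤ ‖(1 : R)‖ + ‖a * (↑u⁻¹ : R)‖ := norm_sub_le _ _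
        _ ≤ 1 + ‖a‖ * ‖(↑u⁻¹ : R)‖ := by
            rw [norm_one]; exact add_le_add le_rfl (norm_mul_le _ _)
    nlinarith [norm_nonneg (↑u⁻¹ : R), norm_nonneg a]
  have hkey : (↑u⁻¹ : R) - (1 - a) = (↑u⁻¹ : R) * (a * a) := by
    have h3 : (↑u⁻¹ : R) * ((1 + a) * (1 - a)) = (1 - a) := by
      rw [← mul_assoc, ← hu, hmul', one_mul]
    have h4 : (1 + a) * (1 - a) = 1 - a * a := by noncomm_ring
    rw [h4, mul_sub, mul_one] at h3
    rw [sub_eq_iff_eq_add']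
    rw [sub_eq_iff_eq_add] at h3
    conv_lhs => rw [h3]
  rw [hkey]
  calc ‖(↑u⁻¹ : R) * (a * a)‖ ≤ ‖(↑u⁻¹ : R)‖ * ‖a * a‖ := norm_mul_le _ _
    _ ≤ 2 * (‖a‖ * ‖a‖) :=
        mul_le_mul hnorm (norm_mul_le _ _) (norm_nonneg _) (by norm_num)
    _ = 2 * ‖a‖ ^ 2 := by ring

/-- General version of the main theorem over an abstract complete normed space. -/
lemma aux_flow_main {E : Type*} [NormedAddCommGroup E] [NormedSpace ℝ E]
    [CompleteSpace E] [Nontrivial E]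
    (X : E → E) (hX : ContDiff ℝ 1 X) (hXsupp : HasCompactSupport X)
    (L : ℝ) (hL : L = ⨆ x, ‖fderiv ℝ X x‖)
    (t : ℝ) (ht : |t| < 1 / (2 * (1 + L))) :
    Function.Bijective (fun x => x + t • X x) ∧
    (∀ x ∉ tsupport X, x + t • X x = x) ∧
    ContDiff ℝ 1 (Function.invFun (fun x : E => x + t • X x)) ∧
    ∀ x : E,
      ‖fderiv ℝ (Function.invFun (fun x : E => x + t • X x)) (x + t • X x) -
        (ContinuousLinearMap.id ℝ E - t • fderiv ℝ X x)‖ ≤ 2 * t ^ 2 * L ^ 2 := by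
  classical
  set f : E → E := fun x => x + t • X x with hf
  have hXdiff : Differentiable ℝ X := hX.differentiable one_ne_zero
  have hcont : Continuous (fderiv ℝ X) := hX.continuous_fderiv one_ne_zero
  obtain ⟨C, hC⟩ := (hXsupp.fderiv (𝕜 := ℝ)).exists_bound_of_continuous hcont
  have hbdd : BddAbove (Set.range fun x => ‖fderiv ℝ X x‖) := by
    refine ⟨C, ?_⟩
    rintro - ⟨x, rfl⟩
    exact hC x
  have hLb : ∀ x, ‖fderiv ℝ X x‖ ≤ L := fun x => hL ▸ le_ciSup hbdd x
  have hL0 : 0 ≤ L := le_trans (norm_nonneg _) (hLb (Classical.arbitrary E))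
  have h1L : (0 : ℝ) < 2 * (1 + L) := by linarith
  have ht2 : |t| * (2 * (1 + L)) < 1 := (lt_div_iff₀ h1L).1 ht
  have htL : |t| * L < 1 / 2 := by nlinarith [abs_nonneg t]
  have ha : ∀ x, ‖t • fderiv ℝ X x‖ ≤ |t| * L := by
    intro x
    rw [norm_smul, Real.norm_eq_abs]
    exact mul_le_mul_of_nonneg_left (hLb x) (abs_nonneg t)
  have hfc : ContDiff ℝ 1 f := contDiff_id.add (hX.const_smul t)
  have hA : ∀ x, HasFDerivAt f
      (ContinuousLinearMap.id ℝ E + t • fderiv ℝ X x) x := by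
    intro x
    exact (hasFDerivAt_id x).add (((hXdiff x).hasFDerivAt).const_smul t)
  set c : NNReal := ⟨|t| * L, by positivity⟩ with hc
  let f' : E ≃L[ℝ] E := ContinuousLinearEquiv.refl ℝ E
  have happrox : ApproximatesLinearOn f (f' : E →L[ℝ] E) Set.univ c := by
    intro x _ y _
    have hxy : f x - f y - (f' : E →L[ℝ] E) (x - y)
        = t • (X x - X y) := by
      simp only [f, f', ContinuousLinearEquiv.coe_refl, ContinuousLinearMap.coe_id', id_eq,
        smul_sub]
      abel
    rw [hxy, norm_smul, Real.norm_eq_abs]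
    have hmv : ‖X x - X y‖ ≤ L * ‖x - y‖ :=
      Convex.norm_image_sub_le_of_norm_fderiv_le
        (fun z _ => hXdiff z) (fun z _ => hLb z) convex_univ (Set.mem_univ y)
        (Set.mem_univ x)
    calc |t| * ‖X x - X y‖ ≤ |t| * (L * ‖x - y‖) :=
          mul_le_mul_of_nonneg_left hmv (abs_nonneg t)
      _ = (c : ℝ) * ‖x - y‖ := by rw [hc]; show _ = |t| * L * ‖x - y‖; ring
  have hcN : c < ‖(f'.symm : E →L[ℝ] E)‖₊⁻¹ := by
    have h1 : ‖(f'.symm : E →L[ℝ] E)‖₊ = 1 := by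
      show ‖((ContinuousLinearEquiv.refl ℝ E).symm : E →L[ℝ] E)‖₊ = 1
      rw [ContinuousLinearEquiv.refl_symm]
      simp
    rw [h1, inv_one, ← NNReal.coe_lt_coe]
    show |t| * L < (1 : ℝ)
    linarith
  have hinj : Function.Injective f :=
    Set.injOn_univ.1 (happrox.injOn (Or.inr hcN))
  have hsurj : Function.Surjective f := happrox.surjective (Or.inr hcN)
  have hnorm_lt : ∀ x, ‖-(t • fderiv ℝ X x)‖ < 1 := by
    intro x
    rw [norm_neg]
    calc ‖t • fderiv ℝ X x‖ ≤ |t| * L := ha x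
      _ < 1 := by linarith
  set u : E → (E →L[ℝ] E)ˣ := fun x => Units.oneSub (-(t • fderiv ℝ X x)) (hnorm_lt x)
    with hu
  have huval : ∀ x, ((u x : E →L[ℝ] E)) = (1 : E →L[ℝ] E) + t • fderiv ℝ X x := by
    intro x
    show (1 : E →L[ℝ] E) - (-(t • fderiv ℝ X x)) = _
    rw [sub_neg_eq_add]
  set e : E → (E ≃L[ℝ] E) := fun x => ContinuousLinearEquiv.ofUnit (u x) with he
  have hesymm : ∀ x, (((e x).symm : E ≃L[ℝ] E) : E →L[ℝ] E)
      = ((u x)⁻¹ : (E →L[ℝ] E)ˣ) := fun x => rfl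
  have hA' : ∀ x, HasFDerivAt f (((e x : E ≃L[ℝ] E)) : E →L[ℝ] E) x := by
    intro x
    have : ((e x : E ≃L[ℝ] E) : E →L[ℝ] E) = (u x : E →L[ℝ] E) := rfl
    rw [this, huval, ContinuousLinearMap.one_def]
    exact hA x
  have hstrict : ∀ x, HasStrictFDerivAt f (((e x : E ≃L[ℝ] E)) : E →L[ℝ] E) x :=
    fun x => (hfc.contDiffAt).hasStrictFDerivAt' (hA' x) one_ne_zero
  have hev : ∀ x, Function.invFun f =ᶠ[nhds (f x)]
      (hstrict x).localInverse f _ x := by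
    intro x
    filter_upwards [(hstrict x).eventually_right_inverse] with y hy
    conv_lhs => rw [← hy]
    rw [Function.leftInverse_invFun hinj]
  have hcdInv : ∀ x, ContDiffAt ℝ 1 (Function.invFun f) (f x) := by
    intro x
    have h1 : ContDiffAt ℝ 1 ((hfc.contDiffAt).localInverse (hA' x) one_ne_zero) (f x) :=
      ContDiffAt.to_localInverse (hfc.contDiffAt) (hA' x) one_ne_zero
    exact h1.congr_of_eventuallyEq (hev x)
  refine ⟨⟨hinj, hsurj⟩, ?_, ?_, ?_⟩
  · intro x hx
    rw [image_eq_zero_of_notMem_tsupport hx, smul_zero, add_zero]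
  · rw [contDiff_iff_contDiffAt]
    intro y
    obtain ⟨x, rfl⟩ := hsurj y
    exact hcdInv x
  · intro x
    have hfd : fderiv ℝ (Function.invFun f) (f x)
        = ((u x)⁻¹ : (E →L[ℝ] E)ˣ) := by
      rw [(hev x).fderiv_eq, (hstrict x).to_localInverse.hasFDerivAt.fderiv]
      exact hesymm x
    show ‖fderiv ℝ (Function.invFun f) (f x) -
        (ContinuousLinearMap.id ℝ E - t • fderiv ℝ X x)‖ ≤ 2 * t ^ 2 * L ^ 2
    rw [hfd]
    have hid : ContinuousLinearMap.id ℝ E - t • fderiv ℝ X x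
        = (1 : E →L[ℝ] E) - t • fderiv ℝ X x := by rw [ContinuousLinearMap.one_def]
    rw [hid]
    have hest := aux_unit_inv_estimate (u x) (t • fderiv ℝ X x) (huval x)
      (le_trans (ha x) (le_of_lt htL))
    refine le_trans hest ?_
    have h1 : ‖t • fderiv ℝ X x‖ ^ 2 ≤ (|t| * L) ^ 2 :=
      pow_le_pow_left₀ (norm_nonneg _) (ha x) 2
    calc 2 * ‖t • fderiv ℝ X x‖ ^ 2 ≤ 2 * (|t| * L) ^ 2 := by linarith
      _ = 2 * t ^ 2 * L ^ 2 := by rw [mul_pow, sq_abs]; ring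

/-- For a `C¹` compactly supported vector field `X` with
`L = sup ‖DX‖`, and `|t| < 1/(2(1+L))`, the flow map `Φ_t(x) = x + tX(x)` is a bijection
of `ℝⁿ` equal to the identity outside the support of `X`, its inverse is `C¹`, and
`‖DΦ_t⁻¹(Φ_t x) − I + t·DX(x)‖ ≤ 2t²L²` for every `x`. -/
theorem flow_map_inverse_derivative_expansion
    (n : ℕ) (hn : 1 ≤ n)
    (X : EuclideanSpace ℝ (Fin n) → EuclideanSpace ℝ (Fin n))
    (hX : ContDiff ℝ 1 X) (hXsupp : HasCompactSupport X)
    (L : ℝ) (hL : L = ⨆ x, ‖fderiv ℝ X x‖)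
    (t : ℝ) (ht : |t| < 1 / (2 * (1 + L))) :
    Function.Bijective (fun x => x + t • X x) ∧
    (∀ x ∉ tsupport X, x + t • X x = x) ∧
    ContDiff ℝ 1 (Function.invFun (fun x : EuclideanSpace ℝ (Fin n) => x + t • X x)) ∧
    ∀ x : EuclideanSpace ℝ (Fin n),
      ‖fderiv ℝ (Function.invFun (fun x : EuclideanSpace ℝ (Fin n) => x + t • X x))
          (x + t • X x) -
        (ContinuousLinearMap.id ℝ (EuclideanSpace ℝ (Fin n)) - t • fderiv ℝ X x)‖ ≤
      2 * t ^ 2 * L ^ 2 := by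
  haveI : Nonempty (Fin n) := ⟨⟨0, hn⟩⟩
  haveI : Nontrivial (EuclideanSpace ℝ (Fin n)) :=
    inferInstanceAs (Nontrivial (PiLp 2 fun _ : Fin n => ℝ))
  exact aux_flow_main X hX hXsupp L hL t ht
end

section
/- Let n ≥ 1, 0 < α < β, let M be an invertible n×n real matrix, let E ⊆ ℝⁿ be Lebesgue measurable, let u : ℝⁿ → ℝ be Lipschitz, and let X : ℝⁿ → ℝⁿ be a continuously differentiable vector field with compact support contained in the open unit ball B₁. Define Φ_t(x) := x + tX(x). Then there exist constants c > 0, depending only on β, the operator norm ‖M‖, and sup_x ‖DX(x)‖, and t₀ > 0 such that for every t ∈ (0, t₀): Φ_t is a bijection of ℝⁿ, and setting E_t := Φ_t(E) and u_t := u ∘ Φ_t^{−1}, one has ∫_{B₁} σ_{E_t}(y) |M ∇u_t(y)|² dy − ∫_{B₁} σ_E(x) |M ∇u(x)|² dx ≤ c·t·∫_{B₁} |∇u(x)|² dx, where ∇u and ∇u_t denote the almost-everywhere defined gradients of the Lipschitz functions u and u_t. -/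
open MeasureTheory

/-- `σ_E = α·1_E + β·1_{ℝⁿ∖E}`. -/
noncomputable def sigmaCoeff {n : ℕ} (α β : ℝ) (E : Set (EuclideanSpace ℝ (Fin n)))
    (x : EuclideanSpace ℝ (Fin n)) : ℝ :=
  Set.indicator E (fun _ => α) x + Set.indicator Eᶜ (fun _ => β) x

set_option maxHeartbeats 2000000

open Finset in
lemma matrix_det_one_add_smul_sub_one_abs_le {n : ℕ} (D : Matrix (Fin n) (Fin n) ℝ) {L s : ℝ}
    (hL : 1 ≤ L) (hD : ∀ i j, |D i j| ≤ L) (hs0 : 0 ≤ s) (hs1 : s ≤ 1) :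
    |(1 + s • D).det - 1| ≤ s * (2 ^ n * n.factorial * L ^ n) := by
  classical
  set f := (Matrix.detRowAlternating : (Fin n → ℝ) [⋀^Fin n]→ₗ[ℝ] ℝ) with hf
  have key : ∀ S : Finset (Fin n),
      f (S.piecewise (s • D) (1 : Matrix (Fin n) (Fin n) ℝ))
        = s ^ S.card * f (S.piecewise D (1 : Matrix (Fin n) (Fin n) ℝ)) := by
    intro S
    have h1 : S.piecewise ((s • D : Matrix (Fin n) (Fin n) ℝ) : Fin n → Fin n → ℝ)
        (1 : Matrix (Fin n) (Fin n) ℝ)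
        = S.piecewise (fun i => s • (S.piecewise D (1 : Matrix (Fin n) (Fin n) ℝ)) i)
          (S.piecewise D (1 : Matrix (Fin n) (Fin n) ℝ)) := by
      ext i j
      by_cases hi : i ∈ S <;> simp [Finset.piecewise, hi, Matrix.smul_apply]
    have h2 := f.toMultilinearMap.map_piecewise_smul (fun _ => s)
        (S.piecewise D (1 : Matrix (Fin n) (Fin n) ℝ)) S
    simp only [AlternatingMap.coe_multilinearMap] at h2
    rw [h1, h2]
    simp [smul_eq_mul]
  have expand : (1 + s • D).det = ∑ S : Finset (Fin n),
      s ^ S.card * f (S.piecewise D (1 : Matrix (Fin n) (Fin n) ℝ)) := by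
    have h3 := f.toMultilinearMap.map_add_univ
        ((s • D : Matrix (Fin n) (Fin n) ℝ) : Fin n → Fin n → ℝ)
        ((1 : Matrix (Fin n) (Fin n) ℝ) : Fin n → Fin n → ℝ)
    simp only [AlternatingMap.coe_multilinearMap] at h3
    have : (1 + s • D).det = f (((s • D : Matrix (Fin n) (Fin n) ℝ) : Fin n → Fin n → ℝ)
        + ((1 : Matrix (Fin n) (Fin n) ℝ) : Fin n → Fin n → ℝ)) := by
      congr 1
      ext i j
      simp [Matrix.add_apply]
      ring
    rw [this]; refine h3.trans ?_
    exact Finset.sum_congr rfl fun S _ => key S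
  have hbound : ∀ S : Finset (Fin n),
      |f (S.piecewise D (1 : Matrix (Fin n) (Fin n) ℝ))| ≤ n.factorial * L ^ n := by
    intro S
    have : ∀ i j, |(Matrix.of (S.piecewise D (1 : Matrix (Fin n) (Fin n) ℝ))) i j| ≤ L := by
      intro i j
      by_cases hi : i ∈ S
      · simpa [Finset.piecewise, hi] using hD i j
      · simp only [Matrix.of_apply, Finset.piecewise, hi, if_false]
        by_cases hij : i = j <;>
          simp [Matrix.one_apply, hij] <;> linarith
    have := Matrix.det_le (abv := (AbsoluteValue.abs : AbsoluteValue ℝ ℝ)) this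
    simp only [Fintype.card_fin, nsmul_eq_mul] at this
    exact this
  have hempty : f ((∅ : Finset (Fin n)).piecewise D (1 : Matrix (Fin n) (Fin n) ℝ)) = 1 := by
    rw [show (∅ : Finset (Fin n)).piecewise D (1 : Matrix (Fin n) (Fin n) ℝ) = (1 : Matrix (Fin n) (Fin n) ℝ) from (by ext i j; simp [Finset.piecewise])]
    show ((1 : Matrix (Fin n) (Fin n) ℝ)).det = 1
    exact Matrix.det_one
  rw [expand]
  rw [← Finset.sum_erase_add _ _ (Finset.mem_univ (∅ : Finset (Fin n)))]
  simp only [hempty, Finset.card_empty, pow_zero, one_mul, add_sub_cancel_right]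
  refine le_trans (Finset.abs_sum_le_sum_abs _ _) ?_
  have step : ∀ S ∈ Finset.univ.erase (∅ : Finset (Fin n)),
      |s ^ S.card * f (S.piecewise D (1 : Matrix (Fin n) (Fin n) ℝ))| ≤ s * (↑n.factorial * L ^ n) := by
    intro S hS
    have hScard : 1 ≤ S.card :=
      Finset.card_pos.2 (Finset.nonempty_iff_ne_empty.2 (Finset.ne_of_mem_erase hS))
    have hspow : s ^ S.card ≤ s := by
      calc s ^ S.card ≤ s ^ 1 := pow_le_pow_of_le_one hs0 hs1 hScard
        _ = s := pow_one s
    rw [abs_mul, abs_of_nonneg (pow_nonneg hs0 _)]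
    have h2 := hbound S
    have hLn : (0:ℝ) ≤ ↑n.factorial * L ^ n := by positivity
    calc s ^ S.card * |f (S.piecewise D (1 : Matrix (Fin n) (Fin n) ℝ))|
        ≤ s ^ S.card * (↑n.factorial * L ^ n) :=
          mul_le_mul_of_nonneg_left h2 (pow_nonneg hs0 _)
      _ ≤ s * (↑n.factorial * L ^ n) := mul_le_mul_of_nonneg_right hspow hLn
  refine le_trans (Finset.sum_le_sum step) ?_
  rw [Finset.sum_const, nsmul_eq_mul]
  have hcard : ((Finset.univ.erase (∅ : Finset (Fin n))).card : ℝ) ≤ 2 ^ n := by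
    have h1 := Finset.card_erase_le (a := (∅ : Finset (Fin n))) (s := Finset.univ)
    have h2 : (Finset.univ : Finset (Finset (Fin n))).card = 2 ^ n := by
      simp [Finset.card_univ]
    calc ((Finset.univ.erase (∅ : Finset (Fin n))).card : ℝ)
        ≤ ((Finset.univ : Finset (Finset (Fin n))).card : ℝ) := by exact_mod_cast h1
      _ = 2 ^ n := by exact_mod_cast h2
  have hpos : (0:ℝ) ≤ s * (↑n.factorial * L ^ n) := by positivity
  calc ((Finset.univ.erase (∅ : Finset (Fin n))).card : ℝ) * (s * (↑n.factorial * L ^ n))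
      ≤ 2 ^ n * (s * (↑n.factorial * L ^ n)) := mul_le_mul_of_nonneg_right hcard hpos
    _ = s * (2 ^ n * ↑n.factorial * L ^ n) := by ring

lemma euclidean_abs_coord_le_norm {n : ℕ} (x : EuclideanSpace ℝ (Fin n)) (i : Fin n) :
    |x i| ≤ ‖x‖ := by
  rw [EuclideanSpace.norm_eq]
  have h1 : |x i| = Real.sqrt (|x i| ^ 2) := by
    rw [Real.sqrt_sq_eq_abs, abs_abs]
  rw [h1]
  apply Real.sqrt_le_sqrt
  exact Finset.single_le_sum (f := fun j => ‖x j‖ ^ 2) (fun j _ => by positivity) (Finset.mem_univ i)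
    |>.trans_eq' (by rw [Real.norm_eq_abs])

lemma clm_det_one_add_smul_sub_one_abs_le {n : ℕ}
    (f : EuclideanSpace ℝ (Fin n) →L[ℝ] EuclideanSpace ℝ (Fin n)) {L s : ℝ}
    (hL : 1 ≤ L) (hf : ‖f‖ ≤ L) (hs0 : 0 ≤ s) (hs1 : s ≤ 1) :
    |((1 : EuclideanSpace ℝ (Fin n) →L[ℝ] EuclideanSpace ℝ (Fin n)) + s • f).det - 1|
      ≤ s * (2 ^ n * n.factorial * L ^ n) := by
  classical
  set b := (EuclideanSpace.basisFun (Fin n) ℝ).toBasis with hb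
  have hdet : ((1 : EuclideanSpace ℝ (Fin n) →L[ℝ] EuclideanSpace ℝ (Fin n)) + s • f).det
      = (1 + s • (LinearMap.toMatrix b b (f : EuclideanSpace ℝ (Fin n) →ₗ[ℝ] EuclideanSpace ℝ (Fin n)))).det := by
    rw [ContinuousLinearMap.det]
    rw [← LinearMap.det_toMatrix b]
    congr 1
    rw [ContinuousLinearMap.coe_add, ContinuousLinearMap.coe_smul, map_add, _root_.map_smul]
    congr 1
    rw [ContinuousLinearMap.one_def, ContinuousLinearMap.coe_id, LinearMap.toMatrix_id]
  rw [hdet]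
  apply matrix_det_one_add_smul_sub_one_abs_le _ hL _ hs0 hs1
  intro i j
  have hentry : LinearMap.toMatrix b b (f : EuclideanSpace ℝ (Fin n) →ₗ[ℝ] EuclideanSpace ℝ (Fin n)) i j
      = f (EuclideanSpace.single j 1) i := by
    rw [LinearMap.toMatrix_apply]
    simp [hb, EuclideanSpace.basisFun_apply]
  rw [hentry]
  calc |f (EuclideanSpace.single j 1) i| ≤ ‖f (EuclideanSpace.single j 1)‖ :=
        euclidean_abs_coord_le_norm _ i
    _ ≤ ‖f‖ * ‖EuclideanSpace.single j (1:ℝ)‖ := f.le_opNorm _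
    _ = ‖f‖ := by
        have : ‖EuclideanSpace.single j (1:ℝ)‖ = 1 := by
          rw [EuclideanSpace.norm_single]; norm_num
        rw [this, mul_one]
    _ ≤ L := hf

lemma toDual_symm_comp_eq_adjoint {n : ℕ}
    (A : EuclideanSpace ℝ (Fin n) →L[ℝ] EuclideanSpace ℝ (Fin n))
    (ℓ : EuclideanSpace ℝ (Fin n) →L[ℝ] ℝ) :
    (InnerProductSpace.toDual ℝ (EuclideanSpace ℝ (Fin n))).symm (ℓ.comp A)
      = ContinuousLinearMap.adjoint A ((InnerProductSpace.toDual ℝ (EuclideanSpace ℝ (Fin n))).symm ℓ) := by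
  apply ext_inner_right ℝ
  intro v
  rw [InnerProductSpace.toDual_symm_apply, ContinuousLinearMap.adjoint_inner_left,
    InnerProductSpace.toDual_symm_apply]
  rfl

lemma sigmaCoeff_nonneg {n : ℕ} {α β : ℝ} (hα : 0 < α) (hαβ : α < β)
    (E : Set (EuclideanSpace ℝ (Fin n))) (x : EuclideanSpace ℝ (Fin n)) :
    0 ≤ sigmaCoeff α β E x ∧ sigmaCoeff α β E x ≤ β := by
  unfold sigmaCoeff
  by_cases hx : x ∈ E
  · simp only [Set.indicator_of_mem hx, Set.indicator_of_notMem (by simpa using hx : x ∉ Eᶜ),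
      add_zero]
    constructor <;> linarith
  · simp only [Set.indicator_of_notMem hx, Set.indicator_of_mem (by simpa using hx : x ∈ Eᶜ),
      zero_add]
    constructor <;> linarith

lemma adjoint_sub_one_norm {n : ℕ}
    (A : EuclideanSpace ℝ (Fin n) →L[ℝ] EuclideanSpace ℝ (Fin n)) :
    ‖ContinuousLinearMap.adjoint A - 1‖ = ‖A - 1‖ := by
  have h : ContinuousLinearMap.adjoint A - 1 = ContinuousLinearMap.adjoint (A - 1) := by
    rw [map_sub]
    congr 1
    exact ContinuousLinearMap.adjoint_id.symm
  rw [h]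
  exact ContinuousLinearMap.adjoint.norm_map _

/-- First variation of the bulk term: for `σ_E = α·1_E + β·1_{Eᶜ}`,
`u` Lipschitz, `M` invertible and `X` a `C¹` vector field compactly supported in `B₁`,
there are `c > 0` and `t₀ > 0` such that for `0 < t < t₀`, with `Φ_t(x) = x + tX(x)`,
`E_t = Φ_t(E)`, `u_t = u ∘ Φ_t⁻¹`,
`∫_{B₁} σ_{E_t}|M∇u_t|² − ∫_{B₁} σ_E|M∇u|² ≤ c t ∫_{B₁} |∇u|²`. -/
theorem first_variation_bulk_term
    (n : ℕ) (hn : 1 ≤ n) (α β : ℝ) (hα : 0 < α) (hαβ : α < β)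
    (M : Matrix (Fin n) (Fin n) ℝ) (hM : IsUnit M.det)
    (E : Set (EuclideanSpace ℝ (Fin n))) (hE : MeasurableSet E)
    (u : EuclideanSpace ℝ (Fin n) → ℝ) (K : NNReal) (hu : LipschitzWith K u)
    (X : EuclideanSpace ℝ (Fin n) → EuclideanSpace ℝ (Fin n))
    (hX : ContDiff ℝ 1 X)
    (hXsupp : tsupport X ⊆ Metric.ball (0 : EuclideanSpace ℝ (Fin n)) 1) :
    ∃ c > (0 : ℝ), ∃ t₀ > (0 : ℝ), ∀ t ∈ Set.Ioo (0 : ℝ) t₀,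
      Function.Bijective (fun x => x + t • X x) ∧
      (∫ y in Metric.ball (0 : EuclideanSpace ℝ (Fin n)) 1,
          sigmaCoeff α β ((fun x => x + t • X x) '' E) y *
            ‖Matrix.toEuclideanLin M
              (gradient (u ∘ Function.invFun
                (fun x : EuclideanSpace ℝ (Fin n) => x + t • X x)) y)‖ ^ 2) -
        (∫ x in Metric.ball (0 : EuclideanSpace ℝ (Fin n)) 1,
          sigmaCoeff α β E x * ‖Matrix.toEuclideanLin M (gradient u x)‖ ^ 2) ≤
      c * t * ∫ x in Metric.ball (0 : EuclideanSpace ℝ (Fin n)) 1, ‖gradient u x‖ ^ 2 := by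
  classical
  have hβ : 0 < β := lt_trans hα hαβ
  have hnontriv : Nontrivial (EuclideanSpace ℝ (Fin n)) := by
    refine ⟨⟨EuclideanSpace.single (⟨0, hn⟩ : Fin n) (1:ℝ), 0, fun h => ?_⟩⟩
    have h1 : ‖EuclideanSpace.single (⟨0, hn⟩ : Fin n) (1:ℝ)‖ = 1 := by
      rw [EuclideanSpace.norm_single]; norm_num
    rw [h] at h1
    simp at h1
  -- Lipschitz constant of X
  have hXc : HasCompactSupport X := by
    apply HasCompactSupport.intro (isCompact_closedBall (0 : EuclideanSpace ℝ (Fin n)) 1)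
    intro x hx
    exact image_eq_zero_of_notMem_tsupport
      (fun hc => hx (Metric.ball_subset_closedBall (hXsupp hc)))
  obtain ⟨LX, hLX⟩ := hX.lipschitzWith_of_hasCompactSupport hXc one_ne_zero
  set L : ℝ := max (LX : ℝ) 1 with hLdef
  have hL1 : 1 ≤ L := le_max_right _ _
  have hL0 : 0 < L := lt_of_lt_of_le one_pos hL1
  have hXlip : ∀ a b : EuclideanSpace ℝ (Fin n), ‖X a - X b‖ ≤ L * ‖a - b‖ := by
    intro a b
    have h := hLX.dist_le_mul a b
    rw [dist_eq_norm, dist_eq_norm] at h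
    calc ‖X a - X b‖ ≤ (LX : ℝ) * ‖a - b‖ := h
      _ ≤ L * ‖a - b‖ := by
          apply mul_le_mul_of_nonneg_right (le_max_left _ _) (norm_nonneg _)
  have hDX : ∀ x, ‖fderiv ℝ X x‖ ≤ L :=
    fun x => le_trans (norm_fderiv_le_of_lipschitz ℝ hLX) (le_max_left _ _)
  -- the matrix as a continuous linear map
  set Mc : EuclideanSpace ℝ (Fin n) →L[ℝ] EuclideanSpace ℝ (Fin n) :=
    LinearMap.toContinuousLinearMap (Matrix.toEuclideanLin M) with hMc
  have hMceq : ∀ v, Matrix.toEuclideanLin M v = Mc v := fun v => rfl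
  set CM : ℝ := ‖Mc‖ with hCM
  have hCM0 : 0 ≤ CM := norm_nonneg _
  set c₁ : ℝ := 6 * L * CM ^ 2 with hc₁def
  set c₂ : ℝ := 2 ^ n * n.factorial * L ^ n with hc₂def
  have hc₁0 : 0 ≤ c₁ := by positivity
  have hc₂0 : 0 ≤ c₂ := by positivity
  set c : ℝ := β * (c₂ * CM ^ 2 + (1 + c₂) * c₁) + 1 with hcdef
  have hc0 : 0 < c := by
    have h1 : 0 ≤ β * (c₂ * CM ^ 2 + (1 + c₂) * c₁) := by positivity
    linarith
  refine ⟨c, hc0, min (1 / (2 * L)) 1, by positivity, ?_⟩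
  rintro t ⟨ht0, ht1⟩
  have ht1' : t ≤ 1 := le_of_lt (lt_of_lt_of_le ht1 (min_le_right _ _))
  have htL : t * L ≤ 1 / 2 := by
    have h := lt_of_lt_of_le ht1 (min_le_left _ _)
    rw [lt_div_iff₀ (by positivity)] at h
    linarith
  set Φ := fun x : EuclideanSpace ℝ (Fin n) => x + t • X x with hΦdef
  -- contraction estimates
  have hcontr : ∀ a b : EuclideanSpace ℝ (Fin n),
      ‖t • X a - t • X b‖ ≤ (1 / 2) * ‖a - b‖ := by
    intro a b
    rw [← smul_sub, norm_smul, Real.norm_eq_abs, abs_of_pos ht0]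
    calc t * ‖X a - X b‖ ≤ t * (L * ‖a - b‖) :=
          mul_le_mul_of_nonneg_left (hXlip a b) ht0.le
      _ = (t * L) * ‖a - b‖ := by ring
      _ ≤ (1 / 2) * ‖a - b‖ := mul_le_mul_of_nonneg_right htL (norm_nonneg _)
  have hanti : ∀ a b : EuclideanSpace ℝ (Fin n), (1 / 2) * ‖a - b‖ ≤ ‖Φ a - Φ b‖ := by
    intro a b
    have hsplit : Φ a - Φ b = (a - b) + (t • X a - t • X b) := by
      simp only [hΦdef]
      abel
    have h1 : ‖a - b‖ ≤ ‖Φ a - Φ b‖ + ‖t • X a - t • X b‖ := by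
      have : a - b = (Φ a - Φ b) - (t • X a - t • X b) := by rw [hsplit]; abel
      rw [this]
      exact norm_sub_le _ _
    have h2 := hcontr a b
    linarith
  have hinj : Function.Injective Φ := by
    intro a b hab
    have h := hanti a b
    rw [hab, sub_self, norm_zero] at h
    have : ‖a - b‖ = 0 := le_antisymm (by linarith) (norm_nonneg _)
    rwa [norm_sub_eq_zero_iff] at this
  have hsurj : Function.Surjective Φ := by
    intro z
    have hg : ContractingWith (1/2 : NNReal) (fun x => z - t • X x) := by
      constructor
      · rw [← NNReal.coe_lt_coe]; norm_num
      · apply LipschitzWith.of_dist_le_mul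
        intro a b
        rw [dist_eq_norm, dist_eq_norm]
        have : (z - t • X a) - (z - t • X b) = t • X b - t • X a := by abel
        rw [this]
        have h := hcontr b a
        calc ‖t • X b - t • X a‖ ≤ (1/2) * ‖b - a‖ := h
          _ = ((1/2 : NNReal) : ℝ) * ‖a - b‖ := by rw [norm_sub_rev]; norm_num
    set w := ContractingWith.fixedPoint _ hg with hwdef
    refine ⟨w, ?_⟩
    have hfix : z - t • X w = w := hg.fixedPoint_isFixedPt
    have h2 : z - t • X w + t • X w = w + t • X w := by rw [hfix]
    have h3 : z - t • X w + t • X w = z := by abel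
    show w + t • X w = z
    exact h2.symm.trans h3
  have hbij : Function.Bijective Φ := ⟨hinj, hsurj⟩
  set ψ := Function.invFun Φ with hψdef
  have hrinv : ∀ y, Φ (ψ y) = y := fun y => Function.invFun_eq (hsurj y)
  have hlinv : ∀ x, ψ (Φ x) = x := fun x => Function.leftInverse_invFun hinj x
  have hψlip : LipschitzWith 2 ψ := by
    apply LipschitzWith.of_dist_le_mul
    intro y y'
    have h := hanti (ψ y) (ψ y')
    rw [hrinv, hrinv] at h
    rw [dist_eq_norm, dist_eq_norm]
    push_cast
    linarith
  have hψcont : Continuous ψ := hψlip.continuous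
  have hΦcont : Continuous Φ := continuous_id.add (hX.continuous.const_smul t)
  let Φₕ : EuclideanSpace ℝ (Fin n) ≃ₜ EuclideanSpace ℝ (Fin n) :=
    { toFun := Φ, invFun := ψ, left_inv := hlinv, right_inv := hrinv,
      continuous_toFun := hΦcont, continuous_invFun := hψcont }
  have hEt : MeasurableSet (Φ '' E) := by
    have := (Φₕ.measurableEmbedding.measurableSet_image (s := E)).2 hE
    exact this
  -- derivative of Φ
  set B := fun x : EuclideanSpace ℝ (Fin n) =>
    (1 : EuclideanSpace ℝ (Fin n) →L[ℝ] EuclideanSpace ℝ (Fin n)) + t • fderiv ℝ X x with hBdef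
  have hBderiv : ∀ x, HasFDerivAt Φ (B x) x := by
    intro x
    have h1 : HasFDerivAt (fun x : EuclideanSpace ℝ (Fin n) => x)
        (ContinuousLinearMap.id ℝ (EuclideanSpace ℝ (Fin n))) x := hasFDerivAt_id x
    have h2 : HasFDerivAt (fun x => t • X x) (t • fderiv ℝ X x) x :=
      ((hX.differentiable one_ne_zero x).hasFDerivAt).const_smul t
    have := h1.add h2
    simp only [hBdef, ContinuousLinearMap.one_def]
    exact this
  have htXD : ∀ x, ‖t • fderiv ℝ X x‖ ≤ t * L := by
    intro x
    rw [norm_smul, Real.norm_eq_abs, abs_of_pos ht0]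
    exact mul_le_mul_of_nonneg_left (hDX x) ht0.le
  have htXDlt : ∀ x, ‖-(t • fderiv ℝ X x)‖ < 1 := by
    intro x
    rw [norm_neg]
    calc ‖t • fderiv ℝ X x‖ ≤ t * L := htXD x
      _ ≤ 1/2 := htL
      _ < 1 := by norm_num
  set uX := fun x : EuclideanSpace ℝ (Fin n) => Units.oneSub (-(t • fderiv ℝ X x)) (htXDlt x)
    with huXdef
  have huX_val : ∀ x, ((uX x : (EuclideanSpace ℝ (Fin n) →L[ℝ] EuclideanSpace ℝ (Fin n)))) = B x := by
    intro x
    show (1 : EuclideanSpace ℝ (Fin n) →L[ℝ] EuclideanSpace ℝ (Fin n)) - (-(t • fderiv ℝ X x)) = B x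
    rw [sub_neg_eq_add, hBdef]
  set A := fun x : EuclideanSpace ℝ (Fin n) =>
    (((uX x)⁻¹ : (EuclideanSpace ℝ (Fin n) →L[ℝ] EuclideanSpace ℝ (Fin n))ˣ) :
      EuclideanSpace ℝ (Fin n) →L[ℝ] EuclideanSpace ℝ (Fin n)) with hAdef
  have hAB : ∀ x, A x * B x = 1 := by
    intro x
    rw [hAdef, ← huX_val x]
    exact (uX x).inv_mul
  have hA1 : ∀ x, ‖A x - 1‖ ≤ ‖A x‖ * (t * L) := by
    intro x
    have hkey : A x - 1 = A x * ((1 : EuclideanSpace ℝ (Fin n) →L[ℝ] EuclideanSpace ℝ (Fin n)) - B x) := by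
      rw [mul_sub, mul_one, hAB x]
    have hone : (1 : EuclideanSpace ℝ (Fin n) →L[ℝ] EuclideanSpace ℝ (Fin n)) - B x
        = -(t • fderiv ℝ X x) := by
      rw [hBdef]
      simp only [sub_add_eq_sub_sub, sub_self, zero_sub]
    rw [hkey, hone]
    calc ‖A x * -(t • fderiv ℝ X x)‖ ≤ ‖A x‖ * ‖-(t • fderiv ℝ X x)‖ := norm_mul_le _ _
      _ = ‖A x‖ * ‖t • fderiv ℝ X x‖ := by rw [norm_neg]
      _ ≤ ‖A x‖ * (t * L) := mul_le_mul_of_nonneg_left (htXD x) (norm_nonneg _)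
  have hAnorm : ∀ x, ‖A x‖ ≤ 2 := by
    intro x
    have h1 : ‖A x‖ ≤ 1 + ‖A x - 1‖ := by
      calc ‖A x‖ = ‖1 + (A x - 1)‖ := by congr 1; abel
        _ ≤ ‖(1 : EuclideanSpace ℝ (Fin n) →L[ℝ] EuclideanSpace ℝ (Fin n))‖ + ‖A x - 1‖ :=
          norm_add_le _ _
        _ = 1 + ‖A x - 1‖ := by rw [norm_one]
    have h2 := hA1 x
    have h3 : ‖A x‖ * (t * L) ≤ ‖A x‖ * (1/2) :=
      mul_le_mul_of_nonneg_left htL (norm_nonneg _)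
    linarith
  have hA1' : ∀ x, ‖A x - 1‖ ≤ 2 * (t * L) := by
    intro x
    calc ‖A x - 1‖ ≤ ‖A x‖ * (t * L) := hA1 x
      _ ≤ 2 * (t * L) := mul_le_mul_of_nonneg_right (hAnorm x) (by positivity)
  -- derivative of ψ
  have hψderiv : ∀ x, HasFDerivAt ψ (A x) (Φ x) := by
    intro x
    set e : EuclideanSpace ℝ (Fin n) ≃L[ℝ] EuclideanSpace ℝ (Fin n) :=
      ContinuousLinearEquiv.ofUnit (uX x) with hedef
    have hecoe : (e : EuclideanSpace ℝ (Fin n) →L[ℝ] EuclideanSpace ℝ (Fin n)) = B x := by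
      rw [hedef]
      exact huX_val x
    have hesymm : (e.symm : EuclideanSpace ℝ (Fin n) →L[ℝ] EuclideanSpace ℝ (Fin n)) = A x := rfl
    have hf : HasFDerivAt Φ (e : EuclideanSpace ℝ (Fin n) →L[ℝ] EuclideanSpace ℝ (Fin n)) (ψ (Φ x)) := by
      rw [hlinv x, hecoe]
      exact hBderiv x
    have := HasFDerivAt.of_local_left_inverse (hψcont.continuousAt) hf
      (Filter.Eventually.of_forall hrinv)
    rwa [hesymm] at this
  -- almost everywhere differentiability
  have hae : ∀ᵐ x ∂(volume : Measure (EuclideanSpace ℝ (Fin n))), DifferentiableAt ℝ u x :=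
    hu.ae_differentiableAt
  -- gradient chain rule
  have hgrad : ∀ x, DifferentiableAt ℝ u x →
      gradient (u ∘ ψ) (Φ x) = ContinuousLinearMap.adjoint (A x) (gradient u x) := by
    intro x hux
    have h1 : HasFDerivAt u (fderiv ℝ u x) (ψ (Φ x)) := by
      rw [hlinv x]; exact hux.hasFDerivAt
    have hcomp : HasFDerivAt (u ∘ ψ) ((fderiv ℝ u x).comp (A x)) (Φ x) :=
      h1.comp (Φ x) (hψderiv x)
    show (InnerProductSpace.toDual ℝ (EuclideanSpace ℝ (Fin n))).symm (fderiv ℝ (u ∘ ψ) (Φ x)) = _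
    rw [hcomp.fderiv, toDual_symm_comp_eq_adjoint]
    rfl
  -- gradient norm bounds
  have hgradu_bound : ∀ x, ‖gradient u x‖ ≤ (K : ℝ) := by
    intro x
    have h1 : ‖gradient u x‖ = ‖fderiv ℝ u x‖ := LinearIsometryEquiv.norm_map _ _
    rw [h1]; exact norm_fderiv_le_of_lipschitz ℝ hu
  have hult : LipschitzWith (K * 2) (u ∘ ψ) := hu.comp hψlip
  have hgradut_bound : ∀ y, ‖gradient (u ∘ ψ) y‖ ≤ (K : ℝ) * 2 := by
    intro y
    have h1 : ‖gradient (u ∘ ψ) y‖ = ‖fderiv ℝ (u ∘ ψ) y‖ := LinearIsometryEquiv.norm_map _ _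
    rw [h1]
    have h2 := norm_fderiv_le_of_lipschitz ℝ hult (x₀ := y)
    calc ‖fderiv ℝ (u ∘ ψ) y‖ ≤ ((K * 2 : NNReal) : ℝ) := h2
      _ = (K : ℝ) * 2 := by push_cast; ring
  -- determinant bounds
  have hdet_bound : ∀ x, |(B x).det| ≤ 1 + t * c₂ := by
    intro x
    have h := clm_det_one_add_smul_sub_one_abs_le (fderiv ℝ X x) hL1 (hDX x) ht0.le ht1'
    have habs : |(B x).det - 1| ≤ t * c₂ := by rw [hBdef]; exact h
    have h2 := abs_sub_abs_le_abs_sub (B x).det 1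
    rw [abs_one] at h2
    linarith
  have htc₂ : t * c₂ ≤ c₂ := by nlinarith
  -- the pointwise inequality
  have hptwise : ∀ᵐ x ∂(volume : Measure (EuclideanSpace ℝ (Fin n))),
      |(B x).det| * (sigmaCoeff α β E x *
          ‖Matrix.toEuclideanLin M (gradient (u ∘ ψ) (Φ x))‖ ^ 2)
        - sigmaCoeff α β E x * ‖Matrix.toEuclideanLin M (gradient u x)‖ ^ 2
        ≤ c * t * ‖gradient u x‖ ^ 2 := by
    filter_upwards [hae] with x hux
    obtain ⟨hσ0, hσβ⟩ := sigmaCoeff_nonneg hα hαβ E x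
    rw [hgrad x hux]
    have hre : ∀ v, ‖Matrix.toEuclideanLin M v‖ = ‖Mc v‖ := fun v => rfl
    rw [hre, hre]
    set g := gradient u x with hgdef
    set σ := sigmaCoeff α β E x with hσdef
    set adj := ContinuousLinearMap.adjoint (A x) with hadjdef
    have hadjg : ‖adj g - g‖ ≤ 2 * (t * L) * ‖g‖ := by
      have h1 : adj g - g = (adj - 1) g := by
        simp [ContinuousLinearMap.sub_apply]
      rw [h1]
      calc ‖(adj - 1) g‖ ≤ ‖adj - 1‖ * ‖g‖ := (adj - 1).le_opNorm g
        _ ≤ 2 * (t * L) * ‖g‖ := by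
            apply mul_le_mul_of_nonneg_right _ (norm_nonneg g)
            rw [hadjdef, adjoint_sub_one_norm]
            exact hA1' x
    have hMg : ‖Mc g‖ ≤ CM * ‖g‖ := Mc.le_opNorm g
    have h2 : ‖Mc (adj g)‖ ≤ ‖Mc g‖ + CM * (2 * (t * L) * ‖g‖) := by
      calc ‖Mc (adj g)‖ = ‖Mc g + Mc (adj g - g)‖ := by
            rw [← map_add, add_sub_cancel]
        _ ≤ ‖Mc g‖ + ‖Mc (adj g - g)‖ := norm_add_le _ _
        _ ≤ ‖Mc g‖ + CM * ‖adj g - g‖ := by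
            have := Mc.le_opNorm (adj g - g); linarith
        _ ≤ ‖Mc g‖ + CM * (2 * (t * L) * ‖g‖) := by
            have := mul_le_mul_of_nonneg_left hadjg hCM0; linarith
    have hP : ‖Mc (adj g)‖ ^ 2 ≤ ‖Mc g‖ ^ 2 + t * c₁ * ‖g‖ ^ 2 := by
      have hsq : ‖Mc (adj g)‖ ^ 2 ≤ (‖Mc g‖ + CM * (2 * (t * L) * ‖g‖)) ^ 2 :=
        pow_le_pow_left₀ (norm_nonneg _) h2 2
      have hexp : (‖Mc g‖ + CM * (2 * (t * L) * ‖g‖)) ^ 2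
          ≤ ‖Mc g‖ ^ 2 + t * c₁ * ‖g‖ ^ 2 := by
        have hg0 : (0:ℝ) ≤ ‖g‖ := norm_nonneg g
        have hMcg0 : (0:ℝ) ≤ ‖Mc g‖ := norm_nonneg _
        have hmid : ‖Mc g‖ * (CM * (2 * (t * L) * ‖g‖)) ≤ CM * ‖g‖ * (CM * (2 * (t * L) * ‖g‖)) := by
          apply mul_le_mul_of_nonneg_right hMg
          positivity
        have hlast : (CM * (2 * (t * L) * ‖g‖)) ^ 2 ≤ CM ^ 2 * (2 * (t * L)) * ‖g‖ ^ 2 := by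
          have h4 : 2 * (t * L) ≤ 1 := by linarith
          have h5 : (0:ℝ) ≤ 2 * (t * L) := by positivity
          have h6 : (2 * (t * L)) ^ 2 ≤ 2 * (t * L) := by
            rw [pow_two]
            exact mul_le_of_le_one_right h5 h4
          calc (CM * (2 * (t * L) * ‖g‖)) ^ 2 = (2 * (t * L)) ^ 2 * (CM ^ 2 * ‖g‖ ^ 2) := by ring
            _ ≤ (2 * (t * L)) * (CM ^ 2 * ‖g‖ ^ 2) :=
                mul_le_mul_of_nonneg_right h6 (by positivity)
            _ = CM ^ 2 * (2 * (t * L)) * ‖g‖ ^ 2 := by ring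
        have hsq_expand : (‖Mc g‖ + CM * (2 * (t * L) * ‖g‖)) ^ 2
            = ‖Mc g‖ ^ 2 + 2 * (‖Mc g‖ * (CM * (2 * (t * L) * ‖g‖)))
              + (CM * (2 * (t * L) * ‖g‖)) ^ 2 := by ring
        have hfin : 2 * (CM * ‖g‖ * (CM * (2 * (t * L) * ‖g‖))) + CM ^ 2 * (2 * (t * L)) * ‖g‖ ^ 2
            = t * c₁ * ‖g‖ ^ 2 := by rw [hc₁def]; ring
        linarith
      linarith
    -- final assembly
    set P := ‖Mc (adj g)‖ ^ 2 with hPdef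
    set Q := ‖Mc g‖ ^ 2 with hQdef
    set R := ‖g‖ ^ 2 with hRdef
    have hP0 : 0 ≤ P := by positivity
    have hQ0 : 0 ≤ Q := by positivity
    have hR0 : 0 ≤ R := by positivity
    have hQle : Q ≤ CM ^ 2 * R := by
      have := pow_le_pow_left₀ (norm_nonneg (Mc g)) hMg 2
      calc Q ≤ (CM * ‖g‖) ^ 2 := this
        _ = CM ^ 2 * R := by rw [hRdef]; ring
    have e1 : σ * P ≤ σ * (Q + t * c₁ * R) := mul_le_mul_of_nonneg_left hP hσ0
    have e2 : |(B x).det| * (σ * P) ≤ (1 + t * c₂) * (σ * (Q + t * c₁ * R)) := by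
      apply mul_le_mul (hdet_bound x) e1 (mul_nonneg hσ0 hP0)
      positivity
    have e3 : σ * Q ≤ β * (CM ^ 2 * R) :=
      mul_le_mul hσβ hQle (by positivity) hβ.le
    have e4 : σ * R ≤ β * R := mul_le_mul_of_nonneg_right hσβ hR0
    have e5 : (1 + t * c₂) * (σ * (Q + t * c₁ * R)) - σ * Q
        = t * (c₂ * (σ * Q) + (1 + t * c₂) * c₁ * (σ * R)) := by ring
    have e6 : c₂ * (σ * Q) ≤ c₂ * (β * (CM ^ 2 * R)) := mul_le_mul_of_nonneg_left e3 hc₂0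
    have e7 : (1 + t * c₂) * c₁ * (σ * R) ≤ (1 + c₂) * c₁ * (β * R) := by
      apply mul_le_mul _ e4 (mul_nonneg hσ0 hR0) _
      · apply mul_le_mul_of_nonneg_right _ hc₁0
        linarith
      · positivity
    have e8 : t * (c₂ * (σ * Q) + (1 + t * c₂) * c₁ * (σ * R))
        ≤ t * ((c - 1) * R) := by
      apply mul_le_mul_of_nonneg_left _ ht0.le
      have : (c - 1) * R = c₂ * (β * (CM ^ 2 * R)) + (1 + c₂) * c₁ * (β * R) := by
        rw [hcdef]; ring
      rw [this]
      linarith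
    have e9 : t * ((c - 1) * R) ≤ c * t * R := by nlinarith [mul_nonneg ht0.le hR0]
    linarith
  -- split the goal
  refine ⟨hbij, ?_⟩
  -- image of the unit ball
  have himage : Φ '' (Metric.ball (0 : EuclideanSpace ℝ (Fin n)) 1)
      = Metric.ball (0 : EuclideanSpace ℝ (Fin n)) 1 := by
    apply Set.Subset.antisymm
    · rintro y ⟨x, hx, rfl⟩
      by_contra h
      have hXz : X (Φ x) = 0 :=
        image_eq_zero_of_notMem_tsupport (fun hc => h (hXsupp hc))
      have hfix : Φ (Φ x) = Φ x := by
        show Φ x + t • X (Φ x) = Φ x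
        rw [hXz, smul_zero, add_zero]
      have heq : Φ x = x := hinj hfix
      exact h (by rw [heq]; exact hx)
    · intro y hy
      refine ⟨ψ y, ?_, hrinv y⟩
      by_contra h
      have hXz : X (ψ y) = 0 :=
        image_eq_zero_of_notMem_tsupport (fun hc => h (hXsupp hc))
      have heq : Φ (ψ y) = ψ y := by
        show ψ y + t • X (ψ y) = ψ y
        rw [hXz, smul_zero, add_zero]
      rw [hrinv y] at heq
      exact h (heq ▸ hy)
  have hsigma_img : ∀ x, sigmaCoeff α β (Φ '' E) (Φ x) = sigmaCoeff α β E x := by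
    intro x
    have hmem : Φ x ∈ Φ '' E ↔ x ∈ E := hinj.mem_set_image
    unfold sigmaCoeff
    simp only [Set.indicator_apply, Set.mem_compl_iff, hmem]
  -- measurability
  have hmeas_gradu : Measurable (gradient u) := by
    show Measurable fun x =>
      (InnerProductSpace.toDual ℝ (EuclideanSpace ℝ (Fin n))).symm (fderiv ℝ u x)
    exact ((InnerProductSpace.toDual ℝ (EuclideanSpace ℝ (Fin n))).symm.continuous).measurable.comp
      (measurable_fderiv ℝ u)
  have hmeas_gradut : Measurable (gradient (u ∘ ψ)) := by
    show Measurable fun x =>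
      (InnerProductSpace.toDual ℝ (EuclideanSpace ℝ (Fin n))).symm (fderiv ℝ (u ∘ ψ) x)
    exact ((InnerProductSpace.toDual ℝ (EuclideanSpace ℝ (Fin n))).symm.continuous).measurable.comp
      (measurable_fderiv ℝ (u ∘ ψ))
  have hcont2 : Continuous fun v : EuclideanSpace ℝ (Fin n) => ‖Mc v‖ ^ 2 :=
    (Mc.continuous.norm).pow 2
  have hmeas_sigma : Measurable (sigmaCoeff α β E) := by
    show Measurable fun x => Set.indicator E (fun _ => α) x + Set.indicator Eᶜ (fun _ => β) x
    exact (measurable_const.indicator hE).add (measurable_const.indicator hE.compl)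
  have hBcont : Continuous B :=
    continuous_const.add ((hX.continuous_fderiv one_ne_zero).const_smul t)
  have hdetcont : Continuous fun x => |(B x).det| :=
    (ContinuousLinearMap.continuous_det.comp hBcont).abs
  have hfinite : volume (Metric.ball (0 : EuclideanSpace ℝ (Fin n)) 1) < ⊤ :=
    measure_ball_lt_top
  have hball : MeasurableSet (Metric.ball (0 : EuclideanSpace ℝ (Fin n)) 1) :=
    measurableSet_ball
  have hIntOn : ∀ (f : EuclideanSpace ℝ (Fin n) → ℝ) (Cb : ℝ), Measurable f →
      (∀ x, |f x| ≤ Cb) →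
      IntegrableOn f (Metric.ball (0 : EuclideanSpace ℝ (Fin n)) 1) volume := by
    intro f Cb hm hb
    apply Integrable.mono' (g := fun _ => Cb) (integrableOn_const hfinite.ne)
      hm.aestronglyMeasurable
    exact Filter.Eventually.of_forall (fun x => by rw [Real.norm_eq_abs]; exact hb x)
  -- integrability of the three integrands
  have hintG : IntegrableOn
      (fun x => sigmaCoeff α β E x * ‖Matrix.toEuclideanLin M (gradient u x)‖ ^ 2)
      (Metric.ball (0 : EuclideanSpace ℝ (Fin n)) 1) volume := by
    apply hIntOn _ (β * (CM * K) ^ 2)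
    · exact hmeas_sigma.mul (hcont2.measurable.comp hmeas_gradu)
    · intro x
      obtain ⟨hσ0, hσβ⟩ := sigmaCoeff_nonneg hα hαβ E x
      have hQb : ‖Mc (gradient u x)‖ ^ 2 ≤ (CM * K) ^ 2 := by
        apply pow_le_pow_left₀ (norm_nonneg _)
        calc ‖Mc (gradient u x)‖ ≤ CM * ‖gradient u x‖ := Mc.le_opNorm _
          _ ≤ CM * K := mul_le_mul_of_nonneg_left (hgradu_bound x) hCM0
      rw [abs_of_nonneg (mul_nonneg hσ0 (by positivity))]
      exact mul_le_mul hσβ hQb (by positivity) hβ.le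
  have hintFV : IntegrableOn
      (fun x => |(B x).det| * (sigmaCoeff α β E x *
        ‖Matrix.toEuclideanLin M (gradient (u ∘ ψ) (Φ x))‖ ^ 2))
      (Metric.ball (0 : EuclideanSpace ℝ (Fin n)) 1) volume := by
    apply hIntOn _ ((1 + c₂) * (β * (CM * ((K : ℝ) * 2)) ^ 2))
    · exact hdetcont.measurable.mul (hmeas_sigma.mul
        ((hcont2.measurable.comp hmeas_gradut).comp hΦcont.measurable))
    · intro x
      obtain ⟨hσ0, hσβ⟩ := sigmaCoeff_nonneg hα hαβ E x
      have hQb : ‖Mc (gradient (u ∘ ψ) (Φ x))‖ ^ 2 ≤ (CM * ((K : ℝ) * 2)) ^ 2 := by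
        apply pow_le_pow_left₀ (norm_nonneg _)
        calc ‖Mc (gradient (u ∘ ψ) (Φ x))‖ ≤ CM * ‖gradient (u ∘ ψ) (Φ x)‖ := Mc.le_opNorm _
          _ ≤ CM * ((K : ℝ) * 2) := mul_le_mul_of_nonneg_left (hgradut_bound (Φ x)) hCM0
      have hin : sigmaCoeff α β E x * ‖Mc (gradient (u ∘ ψ) (Φ x))‖ ^ 2
          ≤ β * (CM * ((K : ℝ) * 2)) ^ 2 :=
        mul_le_mul hσβ hQb (by positivity) hβ.le
      have hd : |(B x).det| ≤ 1 + c₂ := by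
        have := hdet_bound x; linarith
      rw [abs_of_nonneg (mul_nonneg (abs_nonneg _) (mul_nonneg hσ0 (by positivity)))]
      exact mul_le_mul hd hin (mul_nonneg hσ0 (by positivity)) (by positivity)
  have hintH : IntegrableOn (fun x => ‖gradient u x‖ ^ 2)
      (Metric.ball (0 : EuclideanSpace ℝ (Fin n)) 1) volume := by
    apply hIntOn _ ((K : ℝ) ^ 2)
    · exact ((continuous_norm.pow 2).measurable).comp hmeas_gradu
    · intro x
      rw [abs_of_nonneg (by positivity)]
      exact pow_le_pow_left₀ (norm_nonneg _) (hgradu_bound x) 2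
  -- change of variables
  have hcov := integral_image_eq_integral_abs_det_fderiv_smul volume hball
      (fun x _ => (hBderiv x).hasFDerivWithinAt) (hinj.injOn)
      (fun y => sigmaCoeff α β (Φ '' E) y *
        ‖Matrix.toEuclideanLin M (gradient (u ∘ ψ) y)‖ ^ 2)
  rw [himage] at hcov
  rw [hcov]
  simp only [smul_eq_mul, hsigma_img]
  rw [← integral_sub hintFV hintG]
  have hmono := integral_mono_ae (hintFV.sub hintG)
    (hintH.const_mul (c * t)) (ae_restrict_of_ae hptwise)
  refine le_trans (le_of_eq ?_) (le_trans hmono (le_of_eq ?_))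
  · rfl
  · rw [MeasureTheory.integral_const_mul]
end

section
/- Let n ≥ 1, r > 0 and σ ∈ (0, 2^{−n}), and let f be the map defined by f(x) = (1 − σ(2ⁿ − 1))x if |x| < r/2; f(x) = x + σ(1 − rⁿ/|x|ⁿ)x if r/2 ≤ |x| < r; f(x) = x if |x| ≥ r. Then f is a bijection of ℝⁿ onto itself, f(B_r) = B_r where B_r is the open ball of radius r centered at the origin, f(x) = x for all |x| ≥ r, and both f and f^{−1} are Lipschitz continuous. -/
/-- The volume-adjusting bi-Lipschitz map of the penalization argument:
`f(x) = (1 − σ(2ⁿ − 1))x` if `|x| < r/2`; `f(x) = x + σ(1 − rⁿ/|x|ⁿ)x` if `r/2 ≤ |x| < r`;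
`f(x) = x` if `|x| ≥ r`. -/
noncomputable def volMap (n : ℕ) (r σ : ℝ) (x : EuclideanSpace ℝ (Fin n)) :
    EuclideanSpace ℝ (Fin n) :=
  if ‖x‖ < r / 2 then (1 - σ * (2 ^ n - 1)) • x
  else if ‖x‖ < r then x + (σ * (1 - r ^ n / ‖x‖ ^ n)) • x
  else x

namespace VolMapAux

/-- The scalar multiplier profile of `volMap`. -/
noncomputable def g (n : ℕ) (r σ t : ℝ) : ℝ :=
  if t < r / 2 then 1 - σ * (2 ^ n - 1) else if t < r then 1 + σ * (1 - r ^ n / t ^ n) else 1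

/-- An auxiliary globally defined function. -/
noncomputable def phi (n : ℕ) (r t : ℝ) : ℝ := t / max (t ^ n) ((r / 2) ^ n)

noncomputable def m (n : ℕ) (r σ t : ℝ) : ℝ := (1 + σ) * t - σ * r ^ n * phi n r t

lemma volMap_eq (n : ℕ) (r σ : ℝ) (x : EuclideanSpace ℝ (Fin n)) :
    volMap n r σ x = g n r σ ‖x‖ • x := by
  unfold volMap g
  split_ifs with h1 h2
  · rfl
  · rw [add_smul, one_smul]
  · rw [one_smul]

variable {n : ℕ} {r σ : ℝ}

lemma two_pow_ge_one : (1:ℝ) ≤ 2 ^ n := by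
  simpa using pow_le_pow_left₀ (by norm_num : (0:ℝ) ≤ 1) (by norm_num : (1:ℝ) ≤ 2) n

lemma A_pos (hσ0 : 0 < σ) (hσ1 : σ * 2 ^ n < 1) : 0 < 1 - σ * (2 ^ n - 1) := by
  nlinarith

lemma A_le_one (hσ0 : 0 < σ) : 1 - σ * (2 ^ n - 1) ≤ 1 := by
  nlinarith [two_pow_ge_one (n := n)]

lemma g_le_one (hr : 0 < r) (hσ0 : 0 < σ) {t : ℝ} (ht : 0 ≤ t) : g n r σ t ≤ 1 := by
  unfold g
  split_ifs with h1 h2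
  · exact A_le_one hσ0
  · have htpos : 0 < t := lt_of_lt_of_le (by linarith) (not_lt.1 h1)
    have htn : (0:ℝ) < t ^ n := by positivity
    have h1le : 1 ≤ r ^ n / t ^ n := (one_le_div htn).2 (pow_le_pow_left₀ htpos.le h2.le n)
    nlinarith
  · exact le_refl 1

lemma A_le_g (hr : 0 < r) (hσ0 : 0 < σ) (hσ1 : σ * 2 ^ n < 1) {t : ℝ} (ht : 0 ≤ t) :
    1 - σ * (2 ^ n - 1) ≤ g n r σ t := by
  unfold g
  split_ifs with h1 h2
  · exact le_refl _
  · have h2' : r / 2 ≤ t := not_lt.1 h1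
    have htpos : 0 < t := lt_of_lt_of_le (by linarith) h2'
    have htn : (0:ℝ) < t ^ n := by positivity
    have hc : (r/2:ℝ) ^ n ≤ t ^ n := pow_le_pow_left₀ (by positivity) h2' n
    have hrn : r ^ n = 2 ^ n * (r/2) ^ n := by
      rw [← mul_pow]
      congr 1
      ring
    have hdiv : r ^ n / t ^ n ≤ 2 ^ n := by
      rw [div_le_iff₀ htn, hrn]
      have : (0:ℝ) ≤ (2:ℝ)^n := by positivity
      nlinarith
    nlinarith
  · exact A_le_one hσ0

lemma g_eq_one (hr : 0 < r) {t : ℝ} (h : r ≤ t) : g n r σ t = 1 := by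
  unfold g
  rw [if_neg (by push_neg; linarith), if_neg (by push_neg; linarith)]

lemma h_eq_min (hn : 1 ≤ n) (hr : 0 < r) (hσ0 : 0 < σ) (hσ1 : σ * 2 ^ n < 1)
    {t : ℝ} (ht : 0 ≤ t) : t * g n r σ t = min (m n r σ t) t := by
  have h2 : (0:ℝ) < r / 2 := by linarith
  have h2n : (0:ℝ) < (2:ℝ) ^ n := by positivity
  have hrn : (0:ℝ) < r ^ n := by positivity
  unfold g m phi
  split_ifs with hA hB
  · have hmax : max (t ^ n) ((r/2) ^ n) = (r/2) ^ n :=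
      max_eq_right (pow_le_pow_left₀ ht hA.le n)
    rw [hmax]
    have hc : ((r:ℝ)/2) ^ n = r ^ n / 2 ^ n := div_pow r 2 n
    have he : (1+σ)*t - σ*r^n*(t/((r/2))^n) = (1 - σ*(2^n-1))*t := by
      rw [hc]; field_simp; ring
    have hnn : (0:ℝ) ≤ σ * (2 ^ n - 1) * t :=
      mul_nonneg (mul_nonneg hσ0.le (by linarith [two_pow_ge_one (n := n)])) ht
    rw [he, min_eq_left (by nlinarith [hnn])]
    ring
  · have h2' : r / 2 ≤ t := not_lt.1 hA
    have htpos : 0 < t := lt_of_lt_of_le h2 h2'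
    have htn : (0:ℝ) < t ^ n := by positivity
    have hmax : max (t ^ n) ((r/2) ^ n) = t ^ n :=
      max_eq_left (pow_le_pow_left₀ h2.le h2' n)
    rw [hmax]
    have he : (1+σ)*t - σ*r^n*(t/t^n) = t * (1 + σ*(1 - r^n/t^n)) := by
      field_simp; ring
    have h1le : 1 ≤ r ^ n / t ^ n := (one_le_div htn).2 (pow_le_pow_left₀ htpos.le hB.le n)
    have hnn : (0:ℝ) ≤ σ * (r ^ n / t ^ n - 1) * t :=
      mul_nonneg (mul_nonneg hσ0.le (by linarith)) ht
    rw [he, min_eq_left (by nlinarith [hnn])]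
  · have hrt : r ≤ t := not_lt.1 hB
    have htpos : 0 < t := lt_of_lt_of_le hr hrt
    have htn : (0:ℝ) < t ^ n := by positivity
    have hmax : max (t ^ n) ((r/2) ^ n) = t ^ n :=
      max_eq_left (pow_le_pow_left₀ h2.le (by linarith) n)
    rw [hmax, min_eq_right ?_]
    · ring
    · have hdle : r ^ n / t ^ n ≤ 1 := (div_le_one htn).2 (pow_le_pow_left₀ hr.le hrt n)
      have e : σ*r^n*(t/t^n) = σ*t*(r^n/t^n) := by ring
      nlinarith [mul_le_mul_of_nonneg_left hdle (by positivity : (0:ℝ) ≤ σ*t)]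

lemma pow_sub_pow_le' (k : ℕ) {s t : ℝ} (hs : 0 ≤ s) (hst : s ≤ t) :
    t ^ (k+1) - s ^ (k+1) ≤ (k+1) * t ^ k * (t - s) := by
  induction k with
  | zero => push_cast; exact le_of_eq (by ring)
  | succ j ih =>
    have ht : 0 ≤ t := hs.trans hst
    have hsk : s ^ (j+1) ≤ t ^ (j+1) := pow_le_pow_left₀ hs hst _
    have h1 : t * (t ^ (j+1) - s ^ (j+1)) ≤ t * (((j:ℝ)+1) * t ^ j * (t - s)) :=
      mul_le_mul_of_nonneg_left (by push_cast at ih ⊢; exact ih) ht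
    have h2 : s ^ (j+1) * (t - s) ≤ t ^ (j+1) * (t - s) :=
      mul_le_mul_of_nonneg_right hsk (by linarith)
    push_cast
    calc t ^ (j+1+1) - s ^ (j+1+1)
        = t * (t ^ (j+1) - s ^ (j+1)) + s ^ (j+1) * (t - s) := by ring
      _ ≤ t * (((j:ℝ)+1) * t ^ j * (t - s)) + t ^ (j+1) * (t - s) := add_le_add h1 h2
      _ = ((j:ℝ)+1+1) * t ^ (j+1) * (t - s) := by ring

lemma poly1 (k : ℕ) {s t : ℝ} (hs : 0 ≤ s) (hst : s ≤ t) :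
    s * t ^ (k+1) - t * s ^ (k+1) ≤ k * (s * t ^ k) * (t - s) := by
  cases k with
  | zero => push_cast; exact le_of_eq (by ring)
  | succ j =>
    have ht : 0 ≤ t := hs.trans hst
    have H := pow_sub_pow_le' j hs hst
    have H2 : s * t * (t ^ (j+1) - s ^ (j+1)) ≤ s * t * (((j:ℝ)+1) * t ^ j * (t - s)) :=
      mul_le_mul_of_nonneg_left (by push_cast at H ⊢; exact H) (mul_nonneg hs ht)
    push_cast
    calc s * t ^ (j+1+1) - t * s ^ (j+1+1)
        = s * t * (t ^ (j+1) - s ^ (j+1)) := by ring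
      _ ≤ s * t * (((j:ℝ)+1) * t ^ j * (t - s)) := H2
      _ = ((j:ℝ)+1) * (s * t ^ (j+1)) * (t - s) := by ring

lemma core (hn : 1 ≤ n) (hr : 0 < r) {s t : ℝ} (h2s : r/2 ≤ s) (hst : s ≤ t) :
    s / s ^ n - t / t ^ n ≤ (t - s) * (n * (2/r) ^ n) := by
  obtain ⟨k, rfl⟩ : ∃ k, n = k + 1 := ⟨n - 1, (Nat.succ_pred_eq_of_pos hn).symm⟩
  have h2 : (0:ℝ) < r / 2 := by linarith
  have hs : 0 < s := lt_of_lt_of_le h2 h2s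
  have ht : 0 < t := hs.trans_le hst
  have hsn : (0:ℝ) < s ^ (k+1) := by positivity
  have htn : (0:ℝ) < t ^ (k+1) := by positivity
  rw [div_sub_div _ _ hsn.ne' htn.ne', div_le_iff₀ (mul_pos hsn htn)]
  have P := poly1 k hs.le hst
  have key : (k:ℝ) * (s * t ^ k) ≤ ((k+1) * (2/r) ^ (k+1)) * (s ^ (k+1) * t ^ (k+1)) := by
    have hinv : ((2:ℝ)/r) ^ (k+1) * ((r/2) ^ (k+1)) = 1 := by
      rw [← mul_pow]
      have : (2/r) * (r/2) = 1 := by field_simp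
      rw [this, one_pow]
    have hbig : ((r:ℝ)/2) ^ (k+1) ≤ s ^ k * t := by
      calc ((r:ℝ)/2) ^ (k+1) = (r/2) ^ k * (r/2) := pow_succ _ _
        _ ≤ s ^ k * t :=
          mul_le_mul (pow_le_pow_left₀ h2.le h2s k) (le_trans h2s hst) h2.le
            (pow_nonneg hs.le k)
    have h1 : (1:ℝ) ≤ (2/r) ^ (k+1) * (s ^ k * t) := by
      calc (1:ℝ) = (2/r) ^ (k+1) * (r/2) ^ (k+1) := hinv.symm
        _ ≤ (2/r) ^ (k+1) * (s ^ k * t) :=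
          mul_le_mul_of_nonneg_left hbig (by positivity)
    have hrw : (((k:ℝ)+1) * (2/r) ^ (k+1)) * (s ^ (k+1) * t ^ (k+1))
        = (((k:ℝ)+1) * ((2/r) ^ (k+1) * (s ^ k * t))) * (s * t ^ k) := by
      ring
    rw [hrw]
    have hk1 : (k:ℝ) ≤ ((k:ℝ)+1) * ((2/r) ^ (k+1) * (s ^ k * t)) := by
      calc (k:ℝ) ≤ (k:ℝ) + 1 := by linarith
        _ = ((k:ℝ)+1) * 1 := (mul_one _).symm
        _ ≤ _ := mul_le_mul_of_nonneg_left h1 (by positivity)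
    exact mul_le_mul_of_nonneg_right hk1 (by positivity)
  have hfin : (k:ℝ) * (s * t ^ k) * (t - s)
      ≤ ((k+1) * (2/r) ^ (k+1)) * (s ^ (k+1) * t ^ (k+1)) * (t - s) :=
    mul_le_mul_of_nonneg_right key (by linarith)
  push_cast at hfin P ⊢
  nlinarith [P, hfin]

lemma phi_le (hn : 1 ≤ n) (hr : 0 < r) {s t : ℝ} (hs : 0 ≤ s) (hst : s ≤ t) :
    phi n r t - phi n r s ≤ (t - s) * (2 ^ n / r ^ n) := by
  have hn0 : n ≠ 0 := by omega
  have h2 : (0:ℝ) < r / 2 := by linarith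
  have hc : (0:ℝ) < (r/2) ^ n := by positivity
  have ht : 0 ≤ t := hs.trans hst
  have hcc : ((r:ℝ)/2) ^ n = r ^ n / 2 ^ n := div_pow r 2 n
  have hRHS : (t - s) / ((r/2) ^ n) = (t - s) * (2 ^ n / r ^ n) := by
    rw [hcc]; field_simp
  unfold phi
  by_cases hT : t ^ n ≤ (r/2) ^ n
  · have hS : s ^ n ≤ (r/2) ^ n := le_trans (pow_le_pow_left₀ hs hst n) hT
    rw [max_eq_right hT, max_eq_right hS, div_sub_div_same, hRHS]
  · push_neg at hT
    have htgt : r/2 < t := by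
      by_contra hle
      push_neg at hle
      exact absurd (pow_le_pow_left₀ ht hle n) (not_le.2 hT)
    rw [max_eq_left hT.le]
    have htpos : 0 < t := lt_trans h2 htgt
    have htn : (0:ℝ) < t ^ n := by positivity
    obtain ⟨k, hk⟩ : ∃ k, n = k + 1 := ⟨n - 1, (Nat.succ_pred_eq_of_pos hn).symm⟩
    have hkey : t / t ^ n ≤ (r/2) / ((r/2) ^ n) := by
      rw [div_le_div_iff₀ htn hc, hk]
      have : ((r:ℝ)/2) ^ k ≤ t ^ k := pow_le_pow_left₀ h2.le htgt.le k
      calc t * (r/2) ^ (k+1) = (r/2) * (t * (r/2) ^ k) := by ring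
        _ ≤ (r/2) * (t * t ^ k) :=
          mul_le_mul_of_nonneg_left (mul_le_mul_of_nonneg_left this htpos.le) h2.le
        _ = (r/2) * t ^ (k+1) := by ring
    by_cases hS : s ^ n ≤ (r/2) ^ n
    · rw [max_eq_right hS]
      have hs2 : s ≤ r/2 := (pow_le_pow_iff_left₀ hs h2.le hn0).1 hS
      have c1 : t / t ^ n - s / ((r/2) ^ n) ≤ (r/2)/((r/2) ^ n) - s/((r/2)^n) := by linarith
      have c2 : (r/2)/((r/2) ^ n) - s/((r/2)^n) = (r/2 - s)/((r/2)^n) := (sub_div _ _ _).symm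
      have c3 : (r/2 - s)/((r/2)^n) ≤ (t - s)/((r/2)^n) :=
        (div_le_div_iff_of_pos_right hc).2 (by linarith)
      linarith [hRHS]
    · push_neg at hS
      have hs2 : r/2 < s := by
        by_contra hle
        push_neg at hle
        exact absurd (pow_le_pow_left₀ hs hle n) (not_le.2 hS)
      rw [max_eq_left hS.le]
      have hspos : 0 < s := lt_trans h2 hs2
      have hsn : (0:ℝ) < s ^ n := by positivity
      have hdec : t / t ^ n ≤ s / s ^ n := by
        rw [div_le_div_iff₀ htn hsn, hk]
        have : s ^ k ≤ t ^ k := pow_le_pow_left₀ hspos.le hst k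
        calc t * s ^ (k+1) = (s*t) * s ^ k := by ring
          _ ≤ (s*t) * t ^ k :=
          mul_le_mul_of_nonneg_left this (by positivity)
          _ = s * t ^ (k+1) := by ring
      have : (0:ℝ) ≤ (t - s) * (2 ^ n / r ^ n) :=
        mul_nonneg (by linarith) (by positivity)
      linarith

lemma phi_ge (hn : 1 ≤ n) (hr : 0 < r) {s t : ℝ} (hs : 0 ≤ s) (hst : s ≤ t) :
    phi n r s - phi n r t ≤ (t - s) * (n * (2/r) ^ n) := by
  have h2 : (0:ℝ) < r / 2 := by linarith
  have hc : (0:ℝ) < (r/2) ^ n := by positivity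
  have ht : 0 ≤ t := hs.trans hst
  have hL : (0:ℝ) ≤ (n:ℝ) * (2/r) ^ n := by positivity
  have hRHSnn : (0:ℝ) ≤ (t - s) * ((n:ℝ) * (2/r) ^ n) :=
    mul_nonneg (by linarith) hL
  unfold phi
  by_cases hT : t ^ n ≤ (r/2) ^ n
  · have hS : s ^ n ≤ (r/2) ^ n := le_trans (pow_le_pow_left₀ hs hst n) hT
    rw [max_eq_right hT, max_eq_right hS]
    have : s / ((r/2)^n) - t / ((r/2)^n) ≤ 0 := by
      rw [div_sub_div_same]
      exact div_nonpos_of_nonpos_of_nonneg (by linarith) hc.le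
    linarith
  · push_neg at hT
    have htgt : r/2 < t := by
      by_contra hle
      push_neg at hle
      exact absurd (pow_le_pow_left₀ ht hle n) (not_le.2 hT)
    rw [max_eq_left hT.le]
    by_cases hS : s ^ n ≤ (r/2) ^ n
    · rw [max_eq_right hS]
      have hn0 : n ≠ 0 := by omega
      have hs2 : s ≤ r/2 := (pow_le_pow_iff_left₀ hs h2.le hn0).1 hS
      have c1 : s / ((r/2)^n) ≤ (r/2) / ((r/2)^n) := (div_le_div_iff_of_pos_right hc).2 hs2
      have c2 := core hn hr (le_refl (r/2)) htgt.le
      have c3 : (t - r/2) * ((n:ℝ) * (2/r)^n) ≤ (t - s) * ((n:ℝ) * (2/r)^n) :=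
        mul_le_mul_of_nonneg_right (by linarith) hL
      linarith
    · push_neg at hS
      have hs2 : r/2 < s := by
        by_contra hle
        push_neg at hle
        exact absurd (pow_le_pow_left₀ hs hle n) (not_le.2 hS)
      rw [max_eq_left hS.le]
      exact core hn hr hs2.le hst

lemma m_sub_ge (hn : 1 ≤ n) (hr : 0 < r) (hσ0 : 0 < σ) {s t : ℝ} (hs : 0 ≤ s) (hst : s ≤ t) :
    (1 - σ * (2 ^ n - 1)) * (t - s) ≤ m n r σ t - m n r σ s := by
  have hrn : (0:ℝ) < r ^ n := by positivity
  have h1 := mul_le_mul_of_nonneg_left (phi_le hn hr hs hst)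
    (by positivity : (0:ℝ) ≤ σ * r ^ n)
  have h2 : σ * r ^ n * ((t - s) * (2 ^ n / r ^ n)) = σ * 2 ^ n * (t - s) := by
    field_simp
  rw [h2] at h1
  unfold m
  nlinarith [h1]

lemma m_sub_le (hn : 1 ≤ n) (hr : 0 < r) (hσ0 : 0 < σ) {s t : ℝ} (hs : 0 ≤ s) (hst : s ≤ t) :
    m n r σ t - m n r σ s ≤ (1 + σ + σ * r ^ n * ((n:ℝ) * (2/r) ^ n)) * (t - s) := by
  have h1 := mul_le_mul_of_nonneg_left (phi_ge hn hr hs hst)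
    (by positivity : (0:ℝ) ≤ σ * r ^ n)
  unfold m
  nlinarith [h1]

lemma H_sub_ge (hn : 1 ≤ n) (hr : 0 < r) (hσ0 : 0 < σ) (hσ1 : σ * 2 ^ n < 1)
    {s t : ℝ} (hs : 0 ≤ s) (hst : s ≤ t) :
    (1 - σ * (2 ^ n - 1)) * (t - s) ≤ t * g n r σ t - s * g n r σ s := by
  have hA1 := A_le_one (n := n) hσ0
  rw [h_eq_min hn hr hσ0 hσ1 (hs.trans hst), h_eq_min hn hr hσ0 hσ1 hs]
  rcases min_cases (m n r σ t) t with ⟨h1, _⟩ | ⟨h1, _⟩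
  · rw [h1]
    have h3 := m_sub_ge hn hr hσ0 hs hst
    have h4 := min_le_left (m n r σ s) s
    linarith
  · rw [h1]
    have h4 := min_le_right (m n r σ s) s
    have h5 : (0:ℝ) ≤ (1 - (1 - σ * (2 ^ n - 1))) * (t - s) :=
      mul_nonneg (by linarith) (by linarith)
    nlinarith [h4, h5]

lemma H_sub_le (hn : 1 ≤ n) (hr : 0 < r) (hσ0 : 0 < σ) (hσ1 : σ * 2 ^ n < 1)
    {s t : ℝ} (hs : 0 ≤ s) (hst : s ≤ t) :
    t * g n r σ t - s * g n r σ s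
      ≤ (max (1 + σ + σ * r ^ n * ((n:ℝ) * (2/r) ^ n)) 1) * (t - s) := by
  rw [h_eq_min hn hr hσ0 hσ1 (hs.trans hst), h_eq_min hn hr hσ0 hσ1 hs]
  rcases min_cases (m n r σ s) s with ⟨h1, _⟩ | ⟨h1, _⟩
  · rw [h1]
    have h3 := m_sub_le hn hr hσ0 hs hst
    have h4 := min_le_left (m n r σ t) t
    have h5 : (1 + σ + σ * r ^ n * ((n:ℝ) * (2/r) ^ n)) * (t - s)
        ≤ (max (1 + σ + σ * r ^ n * ((n:ℝ) * (2/r) ^ n)) 1) * (t - s) :=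
      mul_le_mul_of_nonneg_right (le_max_left _ _) (by linarith)
    linarith
  · rw [h1]
    have h4 := min_le_right (m n r σ t) t
    have h5 : (1:ℝ) * (t - s) ≤ (max (1 + σ + σ * r ^ n * ((n:ℝ) * (2/r) ^ n)) 1) * (t - s) :=
      mul_le_mul_of_nonneg_right (le_max_right _ _) (by linarith)
    linarith

lemma H_sq (hn : 1 ≤ n) (hr : 0 < r) (hσ0 : 0 < σ) (hσ1 : σ * 2 ^ n < 1)
    {s t : ℝ} (hs : 0 ≤ s) (ht : 0 ≤ t) :
    ((1 - σ * (2 ^ n - 1)) * (t - s))^2 ≤ (t * g n r σ t - s * g n r σ s)^2 ∧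
    (t * g n r σ t - s * g n r σ s)^2
      ≤ ((max (1 + σ + σ * r ^ n * ((n:ℝ) * (2/r) ^ n)) 1) * (t - s))^2 := by
  have hA0 := A_pos hσ0 hσ1
  rcases le_total s t with h | h
  · have g1 := H_sub_ge hn hr hσ0 hσ1 hs h
    have g2 := H_sub_le hn hr hσ0 hσ1 hs h
    have ha : (0:ℝ) ≤ (1 - σ * (2 ^ n - 1)) * (t - s) :=
      mul_nonneg hA0.le (by linarith)
    constructor
    · nlinarith [g1, ha]
    · nlinarith [g1, g2, ha]
  · have g1 := H_sub_ge hn hr hσ0 hσ1 ht h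
    have g2 := H_sub_le hn hr hσ0 hσ1 ht h
    have ha : (0:ℝ) ≤ (1 - σ * (2 ^ n - 1)) * (s - t) :=
      mul_nonneg hA0.le (by linarith)
    constructor
    · nlinarith [g1, ha]
    · nlinarith [g1, g2, ha]

lemma smul_norm_bounds {a K gx gy : ℝ} (x y : EuclideanSpace ℝ (Fin n))
    (ha : 0 < a) (hgxA : a ≤ gx) (hgx1 : gx ≤ 1) (hgyA : a ≤ gy) (hgy1 : gy ≤ 1)
    (hK : 1 ≤ K)
    (q1 : (a * (‖x‖ - ‖y‖))^2 ≤ (‖x‖ * gx - ‖y‖ * gy)^2)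
    (q2 : (‖x‖ * gx - ‖y‖ * gy)^2 ≤ (K * (‖x‖ - ‖y‖))^2) :
    a * ‖x - y‖ ≤ ‖gx • x - gy • y‖ ∧ ‖gx • x - gy • y‖ ≤ K * ‖x - y‖ := by
  have ht : (0:ℝ) ≤ ‖x‖ := norm_nonneg x
  have hs : (0:ℝ) ≤ ‖y‖ := norm_nonneg y
  have hgx0 : 0 < gx := lt_of_lt_of_le ha hgxA
  have hgy0 : 0 < gy := lt_of_lt_of_le ha hgyA
  have e1 : ‖gx • x - gy • y‖^2
      = gx^2 * ‖x‖^2 - 2 * (gx * gy) * (inner ℝ x y : ℝ) + gy^2 * ‖y‖^2 := by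
    rw [norm_sub_sq_real, real_inner_smul_left, real_inner_smul_right, norm_smul, norm_smul,
      Real.norm_eq_abs, Real.norm_eq_abs, abs_of_pos hgx0, abs_of_pos hgy0]
    ring
  have e2 : ‖x - y‖^2 = ‖x‖^2 - 2 * (inner ℝ x y : ℝ) + ‖y‖^2 := norm_sub_sq_real x y
  obtain ⟨hp1, hp2⟩ := abs_le.1 (abs_real_inner_le_norm x y)
  constructor
  · have h2 : (0:ℝ) ≤ gx * gy - a^2 := by nlinarith
    have hprod : (0:ℝ) ≤ (‖x‖ * ‖y‖ - (inner ℝ x y : ℝ)) * (gx * gy - a^2) :=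
      mul_nonneg (by linarith) h2
    have hsq : (a * ‖x - y‖)^2 ≤ ‖gx • x - gy • y‖^2 := by
      rw [e1, mul_pow, e2]
      nlinarith [q1, hprod]
    exact (pow_le_pow_iff_left₀ (mul_nonneg ha.le (norm_nonneg _)) (norm_nonneg _)
      two_ne_zero).1 hsq
  · have h2 : (0:ℝ) ≤ K^2 - gx * gy := by nlinarith
    have hprod : (0:ℝ) ≤ (‖x‖ * ‖y‖ - (inner ℝ x y : ℝ)) * (K^2 - gx * gy) :=
      mul_nonneg (by linarith) h2
    have hsq : ‖gx • x - gy • y‖^2 ≤ (K * ‖x - y‖)^2 := by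
      rw [e1, mul_pow, e2]
      nlinarith [q2, hprod]
    exact (pow_le_pow_iff_left₀ (norm_nonneg _)
      (mul_nonneg (by linarith) (norm_nonneg _)) two_ne_zero).1 hsq

lemma norm_bounds (hn : 1 ≤ n) (hr : 0 < r) (hσ0 : 0 < σ) (hσ1 : σ * 2 ^ n < 1)
    (x y : EuclideanSpace ℝ (Fin n)) :
    (1 - σ * (2 ^ n - 1)) * ‖x - y‖ ≤ ‖volMap n r σ x - volMap n r σ y‖ ∧
    ‖volMap n r σ x - volMap n r σ y‖
      ≤ (max (1 + σ + σ * r ^ n * ((n:ℝ) * (2/r) ^ n)) 1) * ‖x - y‖ := by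
  have hA0 := A_pos hσ0 hσ1
  have ht : (0:ℝ) ≤ ‖x‖ := norm_nonneg x
  have hs : (0:ℝ) ≤ ‖y‖ := norm_nonneg y
  obtain ⟨q1, q2⟩ := H_sq hn hr hσ0 hσ1 hs ht
  rw [volMap_eq, volMap_eq]
  refine smul_norm_bounds x y hA0 (A_le_g hr hσ0 hσ1 ht) (g_le_one hr hσ0 ht)
    (A_le_g hr hσ0 hσ1 hs) (g_le_one hr hσ0 hs) (le_max_right _ _) ?_ ?_
  · exact q1
  · exact q2

end VolMapAux

/-- The volume-adjusting map `f` is a bijection of `ℝⁿ` onto itself,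
maps `B_r` onto `B_r`, equals the identity for `|x| ≥ r`, and `f` and `f⁻¹` are both
Lipschitz continuous. -/
theorem volMap_biLipschitz_bijection
    (n : ℕ) (hn : 1 ≤ n) (r σ : ℝ) (hr : 0 < r) (hσ : σ ∈ Set.Ioo (0 : ℝ) (2 ^ n)⁻¹) :
    Function.Bijective (volMap n r σ) ∧
    volMap n r σ '' Metric.ball (0 : EuclideanSpace ℝ (Fin n)) r =
      Metric.ball (0 : EuclideanSpace ℝ (Fin n)) r ∧
    (∀ x : EuclideanSpace ℝ (Fin n), r ≤ ‖x‖ → volMap n r σ x = x) ∧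
    (∃ K : NNReal, LipschitzWith K (volMap n r σ)) ∧
    (∃ K' : NNReal, LipschitzWith K' (Function.invFun (volMap n r σ))) := by
  obtain ⟨hσ0, hσ2⟩ := hσ
  have h2n : (0:ℝ) < 2 ^ n := by positivity
  have hσ1 : σ * 2 ^ n < 1 := by
    have := mul_lt_mul_of_pos_right hσ2 h2n
    rwa [inv_mul_cancel₀ h2n.ne'] at this
  have hA0 : 0 < 1 - σ * (2 ^ n - 1) := VolMapAux.A_pos hσ0 hσ1
  have hK1 : (1:ℝ) ≤ max (1 + σ + σ * r ^ n * ((n:ℝ) * (2/r) ^ n)) 1 := le_max_right _ _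
  have hbounds := fun x y => VolMapAux.norm_bounds hn hr hσ0 hσ1 x y
  -- identity outside the ball
  have hid : ∀ x : EuclideanSpace ℝ (Fin n), r ≤ ‖x‖ → volMap n r σ x = x := by
    intro x hx
    rw [VolMapAux.volMap_eq, VolMapAux.g_eq_one hr hx, one_smul]
  -- injectivity
  have hinj : Function.Injective (volMap n r σ) := by
    intro x y hxy
    have h1 := (hbounds x y).1
    rw [hxy, sub_self, norm_zero] at h1
    have h2 : ‖x - y‖ ≤ 0 := by nlinarith [norm_nonneg (x - y)]
    have h3 := le_antisymm h2 (norm_nonneg _)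
    rwa [norm_sub_eq_zero_iff] at h3
  -- the scalar profile is Lipschitz on [0, ∞)
  have hHlip : LipschitzOnWith
      (Real.toNNReal (max (1 + σ + σ * r ^ n * ((n:ℝ) * (2/r) ^ n)) 1))
      (fun t => t * VolMapAux.g n r σ t) (Set.Ici 0) := by
    apply LipschitzOnWith.of_dist_le_mul
    intro u hu v hv
    rw [Real.coe_toNNReal _ (by linarith), Real.dist_eq, Real.dist_eq]
    rcases le_total v u with h | h
    · have g1 := VolMapAux.H_sub_ge hn hr hσ0 hσ1 hv h
      have g2 := VolMapAux.H_sub_le hn hr hσ0 hσ1 hv h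
      have ha : (0:ℝ) ≤ (1 - σ * (2 ^ n - 1)) * (u - v) := mul_nonneg hA0.le (by linarith)
      rw [abs_of_nonneg (by linarith), abs_of_nonneg (by linarith)]
      linarith
    · have g1 := VolMapAux.H_sub_ge hn hr hσ0 hσ1 hu h
      have g2 := VolMapAux.H_sub_le hn hr hσ0 hσ1 hu h
      have ha : (0:ℝ) ≤ (1 - σ * (2 ^ n - 1)) * (v - u) := mul_nonneg hA0.le (by linarith)
      rw [abs_of_nonpos (by linarith), abs_of_nonpos (by linarith)]
      linarith
  -- surjectivity
  have hsurj : Function.Surjective (volMap n r σ) := by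
    intro y
    by_cases hy : y = 0
    · refine ⟨0, ?_⟩
      rw [VolMapAux.volMap_eq, smul_zero, hy]
    · have hs : 0 < ‖y‖ := norm_pos_iff.2 hy
      set M := ‖y‖ / (1 - σ * (2 ^ n - 1)) with hM
      have hM0 : (0:ℝ) ≤ M := by positivity
      have hcont := (hHlip.mono (Set.Icc_subset_Ici_self (b := (0:ℝ)) (a := M))).continuousOn
      have hHM : ‖y‖ ≤ M * VolMapAux.g n r σ M := by
        have h1 := VolMapAux.H_sub_ge hn hr hσ0 hσ1 (le_refl (0:ℝ)) hM0
        have h2 : (1 - σ * (2 ^ n - 1)) * (M - 0) = ‖y‖ := by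
          rw [hM]
          field_simp
          ring
        rw [h2, zero_mul, sub_zero] at h1
        exact h1
      have hmem : ‖y‖ ∈ Set.Icc ((fun t => t * VolMapAux.g n r σ t) 0)
          ((fun t => t * VolMapAux.g n r σ t) M) := by
        constructor
        · simp [hs.le]
        · exact hHM
      obtain ⟨t, htmem, htval⟩ := intermediate_value_Icc hM0 hcont hmem
      have ht0 : 0 ≤ t := htmem.1
      refine ⟨(t / ‖y‖) • y, ?_⟩
      have hnx : ‖(t / ‖y‖) • y‖ = t := by
        rw [norm_smul, Real.norm_eq_abs, abs_of_nonneg (by positivity),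
          div_mul_cancel₀ _ hs.ne']
      rw [VolMapAux.volMap_eq, hnx, smul_smul]
      have hone : VolMapAux.g n r σ t * (t / ‖y‖) = 1 := by
        have : t * VolMapAux.g n r σ t = ‖y‖ := htval
        field_simp
        linarith [this]
      rw [hone, one_smul]
  -- the image of the ball
  have himg : volMap n r σ '' Metric.ball (0 : EuclideanSpace ℝ (Fin n)) r =
      Metric.ball (0 : EuclideanSpace ℝ (Fin n)) r := by
    apply Set.Subset.antisymm
    · rintro _ ⟨x, hx, rfl⟩
      rw [Metric.mem_ball, dist_zero_right] at hx ⊢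
      have hg0 : 0 < VolMapAux.g n r σ ‖x‖ :=
        lt_of_lt_of_le hA0 (VolMapAux.A_le_g hr hσ0 hσ1 (norm_nonneg x))
      rw [VolMapAux.volMap_eq, norm_smul, Real.norm_eq_abs, abs_of_pos hg0]
      calc VolMapAux.g n r σ ‖x‖ * ‖x‖ ≤ 1 * ‖x‖ :=
            mul_le_mul_of_nonneg_right (VolMapAux.g_le_one hr hσ0 (norm_nonneg x))
              (norm_nonneg x)
        _ = ‖x‖ := one_mul _
        _ < r := hx
    · intro y hy
      obtain ⟨x, hxy⟩ := hsurj y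
      refine ⟨x, ?_, hxy⟩
      rw [Metric.mem_ball, dist_zero_right] at hy ⊢
      by_contra hge
      push_neg at hge
      have hxeqy : x = y := by rw [← hid x hge, hxy]
      rw [hxeqy] at hge
      linarith
  refine ⟨⟨hinj, hsurj⟩, himg, hid, ?_, ?_⟩
  · refine ⟨Real.toNNReal (max (1 + σ + σ * r ^ n * ((n:ℝ) * (2/r) ^ n)) 1), ?_⟩
    apply LipschitzWith.of_dist_le_mul
    intro x y
    rw [Real.coe_toNNReal _ (by linarith), dist_eq_norm, dist_eq_norm]
    exact (hbounds x y).2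
  · refine ⟨Real.toNNReal (1 - σ * (2 ^ n - 1))⁻¹, ?_⟩
    apply LipschitzWith.of_dist_le_mul
    intro u v
    rw [Real.coe_toNNReal _ (by positivity), dist_eq_norm, dist_eq_norm]
    have hxu : volMap n r σ (Function.invFun (volMap n r σ) u) = u :=
      Function.rightInverse_invFun hsurj u
    have hyv : volMap n r σ (Function.invFun (volMap n r σ) v) = v :=
      Function.rightInverse_invFun hsurj v
    have h1 := (hbounds (Function.invFun (volMap n r σ) u)
      (Function.invFun (volMap n r σ) v)).1
    rw [hxu, hyv] at h1
    rw [inv_mul_eq_div, le_div_iff₀ hA0]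
    linarith [h1]
end

section
/- Let n ≥ 1. There exist constants ε̄ > 0, σ₀ ∈ (0, 2^{−n}) and c > 0, depending only on n, with the following property. Let r > 0, σ ∈ (0, σ₀), ε ∈ (0, ε̄), and let E ⊆ ℝⁿ be Lebesgue measurable with finite measure such that |E ∩ B_{r/2}| < ε rⁿ and |E ∩ B_r| > ω_n rⁿ / 2^{n+2}. Let f be the map defined by f(x) = (1 − σ(2ⁿ − 1))x if |x| < r/2; f(x) = x + σ(1 − rⁿ/|x|ⁿ)x if r/2 ≤ |x| < r; f(x) = x if |x| ≥ r. Then |f(E)| − |E| ≥ c·σ·rⁿ. -/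
open MeasureTheory Matrix Pointwise

noncomputable abbrev Eu (n : ℕ) := EuclideanSpace ℝ (Fin n)

lemma rpow_aux (n : ℕ) (x : ℝ) (hx : 0 < x) :
    (x ^ 2 : ℝ) ^ (-(n:ℝ)/2 - 1) = (x ^ (n + 2))⁻¹ := by
  rw [← Real.rpow_natCast x 2, ← Real.rpow_mul hx.le, ← Real.rpow_natCast x (n+2),
    ← Real.rpow_neg hx.le]
  norm_num
  ring_nf

-- derivative lemma
lemma gderiv (n : ℕ) (hn : 1 ≤ n) (r σ : ℝ) (x : Eu n) (hx : x ≠ 0) :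
    HasFDerivAt (fun y : Eu n => (1 + σ * (1 - r ^ n / ‖y‖ ^ n)) • y)
      ((1 + σ * (1 - r ^ n / ‖x‖ ^ n)) • ContinuousLinearMap.id ℝ (Eu n)
        + ((σ * n * r ^ n / ‖x‖ ^ (n + 2)) • (innerSL ℝ x)).smulRight x) x := by
  have hxn : (0:ℝ) < ‖x‖ := norm_pos_iff.2 hx
  have h2 : HasFDerivAt (fun y : Eu n => ‖y‖ ^ 2) (2 • innerSL ℝ x) x :=
    (hasStrictFDerivAt_norm_sq x).hasFDerivAt
  have hne : (‖x‖:ℝ) ^ 2 ≠ 0 := by positivity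
  have hp := h2.rpow_const (p := -(n:ℝ)/2) (Or.inl hne)
  have hfun : (fun y : Eu n => (‖y‖ ^ 2 : ℝ) ^ (-(n:ℝ)/2)) = fun y => (‖y‖ ^ n)⁻¹ := by
    funext y
    rcases eq_or_ne y 0 with h | h
    · have hn0 : (-(n:ℝ)/2) ≠ 0 := by
        simp only [ne_eq, div_eq_zero_iff, neg_eq_zero, Nat.cast_eq_zero]
        push_neg; exact ⟨by omega, by norm_num⟩
      simp [h, Real.zero_rpow hn0, zero_pow (by omega : n ≠ 0)]
    · have hy : (0:ℝ) < ‖y‖ := norm_pos_iff.2 h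
      rw [← Real.rpow_natCast ‖y‖ 2, ← Real.rpow_natCast ‖y‖ n, ← Real.rpow_mul hy.le,
        ← Real.rpow_neg hy.le]
      ring_nf
  rw [hfun] at hp
  have hφ := ((((hp.const_mul (r ^ n)).const_sub 1).const_mul σ).const_add 1).smul
    (hasFDerivAt_id x)
  have hfun2 : (fun y : Eu n => (1 + σ * (1 - r ^ n * (‖y‖ ^ n)⁻¹)) • y)
      = (fun y : Eu n => (1 + σ * (1 - r ^ n / ‖y‖ ^ n)) • y) := by
    funext y; rw [div_eq_mul_inv]
  simp only [id_eq] at hφ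
  change HasFDerivAt (fun y : Eu n => (1 + σ * (1 - r ^ n * (‖y‖ ^ n)⁻¹)) • y) _ x at hφ
  rw [hfun2] at hφ
  rw [rpow_aux n ‖x‖ hxn] at hφ
  have e1 : (σ • -(r ^ n • (-(n:ℝ) / 2 * (‖x‖ ^ (n + 2))⁻¹) • 2 • (innerSL ℝ) x))
      = (σ * n * r ^ n / ‖x‖ ^ (n + 2)) • innerSL ℝ x := by
    ext y
    simp only [ContinuousLinearMap.smul_apply, ContinuousLinearMap.neg_apply, smul_eq_mul]
    ring
  rw [e1, ← div_eq_mul_inv] at hφ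
  exact hφ

lemma det_aux (n : ℕ) (hn : 1 ≤ n) (a b : ℝ) (ha : a ≠ 0) (x : Eu n) :
    ContinuousLinearMap.det
      (a • ContinuousLinearMap.id ℝ (Eu n) + (b • innerSL ℝ x).smulRight x)
      = a ^ (n - 1) * (a + b * ‖x‖ ^ 2) := by
  rw [ContinuousLinearMap.det]
  rw [← LinearMap.det_toMatrix (EuclideanSpace.basisFun (Fin n) ℝ).toBasis]
  have hM : LinearMap.toMatrix (EuclideanSpace.basisFun (Fin n) ℝ).toBasis
      (EuclideanSpace.basisFun (Fin n) ℝ).toBasis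
      ((a • ContinuousLinearMap.id ℝ (Eu n) + (b • innerSL ℝ x).smulRight x
        : Eu n →L[ℝ] Eu n) : Eu n →ₗ[ℝ] Eu n)
      = a • (1 + Matrix.vecMulVec (fun i => (b / a) * x i) x) := by
    ext i j
    rw [LinearMap.toMatrix_apply]
    simp [Matrix.vecMulVec_apply, Matrix.one_apply, PiLp.inner_apply,
      EuclideanSpace.basisFun_apply, EuclideanSpace.single_apply, mul_ite,
      Finset.sum_ite_eq, RCLike.inner_apply, starRingEnd_apply, Finsupp.single_apply,
      OrthonormalBasis.coe_toBasis, OrthonormalBasis.coe_toBasis_repr_apply,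
      EuclideanSpace.basisFun_repr, mul_zero, mul_one, Finset.sum_ite_eq',
      EuclideanSpace.basisFun_toBasis, PiLp.basisFun_apply, PiLp.basisFun_repr,
      Pi.single_apply]
    split_ifs with h
    · subst h; field_simp
    · field_simp; ring
  rw [hM, Matrix.det_smul, Matrix.vecMulVec_eq Unit, Matrix.det_one_add_replicateCol_mul_replicateRow]
  have : x ⬝ᵥ (fun i => (b / a) * x i) = (b / a) * ‖x‖ ^ 2 := by
    rw [← real_inner_self_eq_norm_sq]
    simp only [dotProduct, PiLp.inner_apply, RCLike.inner_apply, starRingEnd_apply,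
      star_trivial, Finset.mul_sum]
    exact Finset.sum_congr rfl fun i _ => by ring
  rw [this]
  simp only [Fintype.card_fin]
  field_simp
  rw [mul_right_comm, ← pow_succ', Nat.sub_add_cancel hn]

lemma det_lower (n : ℕ) (hn : 1 ≤ n) (σ t : ℝ) (hσ : 0 < σ)
    (hσ' : σ * ((n:ℝ) * 4 ^ n + 2 ^ n) ≤ 1) (ht1 : 1 < t) (ht2 : t ≤ 2 ^ n) :
    1 + σ ≤ (1 - σ * (t - 1)) ^ (n - 1) * ((1 - σ * (t - 1)) + σ * n * t) := by
  set m : ℝ := (n : ℝ) with hm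
  have hm1 : 1 ≤ m := by rw [hm]; exact_mod_cast hn
  set T : ℝ := (2:ℝ) ^ n with hT
  have hT1 : 2 ≤ T := by
    calc (2:ℝ) = 2 ^ 1 := (pow_one 2).symm
    _ ≤ 2 ^ n := pow_le_pow_right₀ (by norm_num) hn
  have h4 : (4:ℝ) ^ n = T ^ 2 := by
    rw [hT, ← pow_mul, mul_comm n 2, pow_mul]; norm_num
  have hσ'' : σ * (m * T ^ 2 + T) ≤ 1 := by rw [← h4]; exact hσ'
  have h0 : (0:ℝ) ≤ σ * (m * T ^ 2) := by positivity
  have hσT : σ * T ≤ 1 := by nlinarith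
  have hσt : σ * (t - 1) ≤ 1 := by
    have : σ * (t - 1) ≤ σ * T := by
      apply mul_le_mul_of_nonneg_left (by linarith) hσ.le
    linarith
  -- Bernoulli
  have hber : 1 - (m - 1) * (σ * (t - 1)) ≤ (1 - σ * (t - 1)) ^ (n - 1) := by
    have h2 : -2 ≤ -(σ * (t - 1)) := by linarith
    have := one_add_mul_le_pow h2 (n - 1)
    have hcast : ((n - 1 : ℕ) : ℝ) = m - 1 := by
      rw [hm]; push_cast [Nat.cast_sub hn]; ring
    calc 1 - (m - 1) * (σ * (t - 1)) = 1 + ((n-1:ℕ):ℝ) * (-(σ * (t - 1))) := by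
          rw [hcast]; ring
    _ ≤ (1 + -(σ * (t - 1))) ^ (n - 1) := this
    _ = (1 - σ * (t - 1)) ^ (n - 1) := by ring_nf
  have hσmt : 0 < σ * m * t := by positivity
  have hBpos : 0 < (1 - σ * (t - 1)) + σ * m * t := by linarith
  have key : 1 + σ ≤ (1 - (m - 1) * (σ * (t - 1))) * ((1 - σ * (t - 1)) + σ * m * t) := by
    have e1 : (0:ℝ) ≤ t - 1 := by linarith
    have e3 : 1 + (m - 1) * t ≤ m * T := by
      have : (m - 1) * t ≤ (m - 1) * T := by
        apply mul_le_mul_of_nonneg_left ht2 (by linarith)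
      nlinarith
    have h1 : (t - 1) * (1 + (m - 1) * t) ≤ T * (m * T) := by
      apply mul_le_mul (by linarith) e3 (by nlinarith) (by nlinarith [mul_pos (lt_of_lt_of_le zero_lt_one hm1) (by linarith : (0:ℝ) < T)])
    have h2 : σ * ((t - 1) * (1 + (m - 1) * t)) ≤ 1 := by nlinarith
    nlinarith [mul_le_mul_of_nonneg_left h2 (mul_nonneg hσ.le (by linarith : (0:ℝ) ≤ m - 1))]
  calc 1 + σ ≤ (1 - (m - 1) * (σ * (t - 1))) * ((1 - σ * (t - 1)) + σ * m * t) := key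
  _ ≤ (1 - σ * (t - 1)) ^ (n - 1) * ((1 - σ * (t - 1)) + σ * n * t) :=
      mul_le_mul_of_nonneg_right hber hBpos.le

lemma final_arith (σ m1 m2 m3 I kn W Ep A B : ℝ)
    (hIlb : (1 + σ) * m2 ≤ I)
    (p2 : (1 - A) * m1 ≤ kn * m1)
    (q : A * m1 ≤ B)
    (p1 : σ * (2 * W) ≤ σ * (m1 + m2))
    (p3 : σ * m1 ≤ σ * Ep)
    (p5 : σ * Ep + B ≤ σ * W) :
    σ * W ≤ I + (kn * m1 + m3) - (m1 + m2 + m3) := by linarith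

set_option maxHeartbeats 1000000 in
/-- Quantitative volume increase under the volume-adjusting map:
there are dimensional constants `ε̄ > 0`, `σ₀ ∈ (0, 2^{−n})`, `c > 0` such that if
`|E ∩ B_{r/2}| < ε rⁿ` and `|E ∩ B_r| > ω_n rⁿ/2^{n+2}`, with `σ ∈ (0,σ₀)` and
`ε ∈ (0,ε̄)`, then `|f(E)| − |E| ≥ c σ rⁿ`. -/
theorem volMap_volume_increase
    (n : ℕ) (hn : 1 ≤ n) :
    ∃ εbar > (0 : ℝ), ∃ σ₀ ∈ Set.Ioo (0 : ℝ) (2 ^ n)⁻¹, ∃ c > (0 : ℝ),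
      ∀ (r : ℝ), 0 < r → ∀ σ ∈ Set.Ioo (0 : ℝ) σ₀, ∀ ε ∈ Set.Ioo (0 : ℝ) εbar,
        ∀ E : Set (EuclideanSpace ℝ (Fin n)), MeasurableSet E → volume E < ⊤ →
          (volume (E ∩ Metric.ball (0 : EuclideanSpace ℝ (Fin n)) (r / 2))).toReal <
            ε * r ^ n →
          (volume (E ∩ Metric.ball (0 : EuclideanSpace ℝ (Fin n)) r)).toReal >
            (volume (Metric.ball (0 : EuclideanSpace ℝ (Fin n)) 1)).toReal * r ^ n /
              2 ^ (n + 2) →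
          c * σ * r ^ n ≤
            (volume (volMap n r σ '' E)).toReal - (volume E).toReal := by
  have hnR : (0:ℝ) < (n:ℝ) := by exact_mod_cast hn
  set ω : ℝ := (volume (Metric.ball (0 : Eu n) 1)).toReal with hω
  have hωpos : 0 < ω := by
    rw [hω]
    exact ENNReal.toReal_pos (Metric.measure_ball_pos _ _ one_pos).ne'
      measure_ball_lt_top.ne
  have hXpos : (0:ℝ) < (n:ℝ) * 4 ^ n + 2 ^ n := by positivity
  refine ⟨ω / (2 ^ (n + 3) * (1 + n * 2 ^ n)), by positivity,
    ((n:ℝ) * 4 ^ n + 2 ^ n)⁻¹, ⟨by positivity, ?_⟩, ω / 2 ^ (n + 3), by positivity, ?_⟩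
  · apply inv_strictAnti₀ (by positivity)
    have : (0:ℝ) < (n:ℝ) * 4 ^ n := by positivity
    linarith
  rintro r hr σ ⟨hσ0, hσ1⟩ ε ⟨hε0, hε1⟩ E hE hEfin hsmall hbig
  have h2n1 : (1:ℝ) ≤ 2 ^ n := one_le_pow₀ (by norm_num)
  have hσX : σ * ((n:ℝ) * 4 ^ n + 2 ^ n) ≤ 1 := by
    rw [inv_eq_one_div] at hσ1
    exact ((lt_div_iff₀ hXpos).mp hσ1).le
  have hσ2n : σ * 2 ^ n ≤ 1 := by
    have h0 : (0:ℝ) ≤ σ * ((n:ℝ) * 4 ^ n) := by positivity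
    nlinarith
  set k : ℝ := 1 - σ * (2 ^ n - 1) with hk
  have hkpos : 0 < k := by rw [hk]; nlinarith
  have hk1 : k ≤ 1 := by rw [hk]; nlinarith
  set Bh : Set (Eu n) := Metric.ball (0 : Eu n) (r/2) with hBhd
  set Br : Set (Eu n) := Metric.ball (0 : Eu n) r with hBr
  set E1 : Set (Eu n) := E ∩ Bh with hE1d
  set E2 : Set (Eu n) := E ∩ (Br \ Bh) with hE2d
  set E3 : Set (Eu n) := E \ Br with hE3d
  set g : Eu n → Eu n := fun y => (1 + σ * (1 - r ^ n / ‖y‖ ^ n)) • y with hg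
  have hsub : Bh ⊆ Br := Metric.ball_subset_ball (by linarith)
  have hE1m : MeasurableSet E1 := hE.inter measurableSet_ball
  have hE2m : MeasurableSet E2 := hE.inter (measurableSet_ball.diff measurableSet_ball)
  have hE3m : MeasurableSet E3 := hE.diff measurableSet_ball
  -- annulus facts
  have hannulus : ∀ x : Eu n, x ∈ Br \ Bh → r/2 ≤ ‖x‖ ∧ ‖x‖ < r := by
    rintro x ⟨hx1, hx2⟩
    exact ⟨not_lt.1 fun h => hx2 (mem_ball_zero_iff.2 h), mem_ball_zero_iff.1 hx1⟩
  have hφfacts : ∀ x : Eu n, r/2 ≤ ‖x‖ → ‖x‖ < r →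
      k ≤ 1 + σ * (1 - r ^ n / ‖x‖ ^ n) ∧ 1 + σ * (1 - r ^ n / ‖x‖ ^ n) < 1 ∧
        1 < r ^ n / ‖x‖ ^ n ∧ r ^ n / ‖x‖ ^ n ≤ 2 ^ n := by
    intro x h1 h2
    have hxpos : 0 < ‖x‖ := by linarith
    have ht1 : 1 < r ^ n / ‖x‖ ^ n := by
      rw [lt_div_iff₀ (by positivity)]
      simpa using pow_lt_pow_left₀ h2 (norm_nonneg x) (by omega)
    have ht2 : r ^ n / ‖x‖ ^ n ≤ 2 ^ n := by
      rw [div_le_iff₀ (by positivity)]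
      calc r ^ n ≤ (2 * ‖x‖) ^ n := pow_le_pow_left₀ hr.le (by linarith) n
      _ = 2 ^ n * ‖x‖ ^ n := mul_pow 2 ‖x‖ n
    refine ⟨?_, ?_, ht1, ht2⟩
    · rw [hk]; nlinarith
    · nlinarith
  -- decomposition of E
  have h12 : E1 ∪ E2 = E ∩ Br := by
    rw [hE1d, hE2d, ← Set.inter_union_distrib_left, Set.union_diff_cancel hsub]
  have hEdecomp : E = E1 ∪ E2 ∪ E3 := by
    rw [h12, hE3d, Set.inter_union_diff]
  -- image decomposition
  have himg1 : volMap n r σ '' E1 = k • E1 := by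
    rw [Set.image_congr (g := fun x => k • x) (fun x hx => ?_)]
    · exact Set.image_smul
    · have : ‖x‖ < r / 2 := mem_ball_zero_iff.1 hx.2
      rw [volMap, if_pos this, hk]
  have himg2 : volMap n r σ '' E2 = g '' E2 := by
    apply Set.image_congr
    intro x hx
    obtain ⟨ha, hb⟩ := hannulus x hx.2
    rw [volMap, if_neg (not_lt.2 (by linarith)), if_pos hb, hg]
    simp only []
    rw [add_smul, one_smul]
  have himg3 : volMap n r σ '' E3 = E3 := by
    rw [Set.image_congr (g := id) (fun x hx => ?_), Set.image_id]
    have : r ≤ ‖x‖ := not_lt.1 fun h => hx.2 (mem_ball_zero_iff.2 h)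
    rw [volMap, if_neg (not_lt.2 (by linarith)), if_neg (not_lt.2 this), id]
  have himg : volMap n r σ '' E = g '' E2 ∪ (k • E1 ∪ E3) := by
    conv_lhs => rw [hEdecomp]
    rw [Set.image_union, Set.image_union, himg1, himg2, himg3]
    ext y; simp only [Set.mem_union]; tauto
  -- norm ranges
  have hnormg : ∀ x : Eu n, x ∈ E2 → ‖g x‖ = (1 + σ * (1 - r ^ n / ‖x‖ ^ n)) * ‖x‖ := by
    intro x hx
    obtain ⟨ha, hb⟩ := hannulus x hx.2
    obtain ⟨hφ1, hφ2, _, _⟩ := hφfacts x ha hb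
    rw [hg]
    simp only [norm_smul, Real.norm_eq_abs, abs_of_pos (lt_of_lt_of_le hkpos hφ1)]
  have hgE2 : ∀ y ∈ g '' E2, k * (r/2) ≤ ‖y‖ ∧ ‖y‖ < r := by
    rintro y ⟨x, hx, rfl⟩
    obtain ⟨ha, hb⟩ := hannulus x hx.2
    obtain ⟨hφ1, hφ2, _, _⟩ := hφfacts x ha hb
    rw [hnormg x hx]
    constructor
    · have h0 : 0 < ‖x‖ := by linarith
      calc k * (r/2) ≤ (1 + σ * (1 - r ^ n / ‖x‖ ^ n)) * (r/2) :=
            mul_le_mul_of_nonneg_right hφ1 (by linarith)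
      _ ≤ (1 + σ * (1 - r ^ n / ‖x‖ ^ n)) * ‖x‖ :=
            mul_le_mul_of_nonneg_left ha (by linarith [lt_of_lt_of_le hkpos hφ1])
    · calc (1 + σ * (1 - r ^ n / ‖x‖ ^ n)) * ‖x‖ ≤ 1 * ‖x‖ :=
            mul_le_mul_of_nonneg_right hφ2.le (norm_nonneg x)
      _ < r := by rw [one_mul]; exact hb
  have hkE1 : ∀ y ∈ k • E1, ‖y‖ < k * (r/2) := by
    rintro y ⟨x, hx, rfl⟩
    have : ‖x‖ < r/2 := mem_ball_zero_iff.1 hx.2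
    rw [norm_smul, Real.norm_eq_abs, abs_of_pos hkpos]
    exact mul_lt_mul_of_pos_left this hkpos
  have hE3n : ∀ y ∈ E3, r ≤ ‖y‖ := fun y hy =>
    not_lt.1 fun h => hy.2 (mem_ball_zero_iff.2 h)
  -- disjointness
  have hd1 : Disjoint (g '' E2) (k • E1 ∪ E3) := by
    rw [Set.disjoint_left]
    rintro y hy (h | h)
    · exact absurd (hkE1 y h) (not_lt.2 (hgE2 y hy).1)
    · exact absurd (hE3n y h) (not_le.2 (hgE2 y hy).2)
  have hd2 : Disjoint (k • E1) E3 := by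
    rw [Set.disjoint_left]
    intro y hy hy3
    have h1 := hkE1 y hy
    have h2 := hE3n y hy3
    nlinarith
  have hmkE1 : MeasurableSet (k • E1) := hE1m.const_smul₀ k
  -- measure of image
  have hμimg : volume (volMap n r σ '' E) =
      volume (g '' E2) + (volume (k • E1) + volume E3) := by
    rw [himg, measure_union hd1 (hmkE1.union hE3m), measure_union hd2 hE3m]
  -- injectivity of g on E2
  have hnormg' : ∀ x : Eu n, r/2 ≤ ‖x‖ → ‖x‖ < r →
      ‖g x‖ = (1 + σ) * ‖x‖ - σ * r ^ n / ‖x‖ ^ (n - 1) := by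
    intro z h1 h2
    have hzpos : 0 < ‖z‖ := by linarith
    obtain ⟨hφ1, _, _, _⟩ := hφfacts z h1 h2
    have hφpos : 0 < 1 + σ * (1 - r ^ n / ‖z‖ ^ n) := lt_of_lt_of_le hkpos hφ1
    have hsplit : ‖z‖ ^ n = ‖z‖ ^ (n - 1) * ‖z‖ := by
      rw [← pow_succ, Nat.sub_add_cancel hn]
    rw [hg]
    simp only [norm_smul, Real.norm_eq_abs, abs_of_pos hφpos]
    rw [hsplit]
    field_simp
    ring
  have hinj : Set.InjOn g E2 := by
    intro x hx y hy hxy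
    obtain ⟨hax, hbx⟩ := hannulus x hx.2
    obtain ⟨hay, hby⟩ := hannulus y hy.2
    have hxpos : 0 < ‖x‖ := by linarith
    have hypos : 0 < ‖y‖ := by linarith
    have heq : (1 + σ) * ‖x‖ - σ * r ^ n / ‖x‖ ^ (n - 1)
        = (1 + σ) * ‖y‖ - σ * r ^ n / ‖y‖ ^ (n - 1) := by
      rw [← hnormg' x hax hbx, ← hnormg' y hay hby, hxy]
    have hmono : ∀ a b : ℝ, 0 < a → a < b →
        (1 + σ) * a - σ * r ^ n / a ^ (n - 1) < (1 + σ) * b - σ * r ^ n / b ^ (n - 1) := by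
      intro a b h0 hab
      have hpow : a ^ (n - 1) ≤ b ^ (n - 1) := pow_le_pow_left₀ h0.le hab.le _
      have h1 : σ * r ^ n / b ^ (n - 1) ≤ σ * r ^ n / a ^ (n - 1) :=
        div_le_div_of_nonneg_left (by positivity) (by positivity) hpow
      nlinarith
    have hnormeq : ‖x‖ = ‖y‖ := by
      rcases lt_trichotomy ‖x‖ ‖y‖ with h | h | h
      · exact absurd heq (ne_of_lt (hmono _ _ hxpos h))
      · exact h
      · exact absurd heq.symm (ne_of_lt (hmono _ _ hypos h))
    have hφpos : 0 < 1 + σ * (1 - r ^ n / ‖x‖ ^ n) :=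
      lt_of_lt_of_le hkpos (hφfacts x hax hbx).1
    simp only [hg] at hxy
    rw [← hnormeq] at hxy
    exact smul_right_injective _ hφpos.ne' hxy
  -- derivative and determinant lower bound
  set f' : Eu n → (Eu n →L[ℝ] Eu n) := fun x =>
    (1 + σ * (1 - r ^ n / ‖x‖ ^ n)) • ContinuousLinearMap.id ℝ (Eu n)
      + ((σ * n * r ^ n / ‖x‖ ^ (n + 2)) • (innerSL ℝ x)).smulRight x with hf'
  have hder : ∀ x ∈ E2, HasFDerivWithinAt g (f' x) E2 x := by
    intro x hx
    obtain ⟨hax, _⟩ := hannulus x hx.2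
    have hx0 : x ≠ 0 := by
      intro h; rw [h, norm_zero] at hax; linarith
    exact (gderiv n hn r σ x hx0).hasFDerivWithinAt
  have hdetlb : ∀ x ∈ E2, 1 + σ ≤ (f' x).det := by
    intro x hx
    obtain ⟨hax, hbx⟩ := hannulus x hx.2
    obtain ⟨hφ1, hφ2, ht1, ht2⟩ := hφfacts x hax hbx
    have hxpos : 0 < ‖x‖ := by linarith
    have hφpos : 0 < 1 + σ * (1 - r ^ n / ‖x‖ ^ n) := lt_of_lt_of_le hkpos hφ1
    rw [hf']
    simp only []
    rw [det_aux n hn _ _ hφpos.ne' x]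
    have hb2 : σ * n * r ^ n / ‖x‖ ^ (n + 2) * ‖x‖ ^ 2 = σ * n * (r ^ n / ‖x‖ ^ n) := by
      rw [pow_add]; field_simp
    rw [hb2]
    have hdl := det_lower n hn σ (r ^ n / ‖x‖ ^ n) hσ0 hσX ht1 ht2
    calc 1 + σ ≤ (1 - σ * (r ^ n / ‖x‖ ^ n - 1)) ^ (n - 1)
          * ((1 - σ * (r ^ n / ‖x‖ ^ n - 1)) + σ * n * (r ^ n / ‖x‖ ^ n)) := hdl
    _ = (1 + σ * (1 - r ^ n / ‖x‖ ^ n)) ^ (n - 1)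
          * (1 + σ * (1 - r ^ n / ‖x‖ ^ n) + σ * ↑n * (r ^ n / ‖x‖ ^ n)) := by ring_nf
  have hcov := lintegral_abs_det_fderiv_eq_addHaar_image volume hE2m hder hinj
  have hge : ENNReal.ofReal (1 + σ) * volume E2 ≤ volume (g '' E2) := by
    rw [← hcov]
    calc ENNReal.ofReal (1 + σ) * volume E2
        = ∫⁻ _ in E2, ENNReal.ofReal (1 + σ) ∂volume := (setLIntegral_const _ _).symm
    _ ≤ ∫⁻ x in E2, ENNReal.ofReal |(f' x).det| ∂volume := by
        apply setLIntegral_mono' hE2m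
        intro x hx
        exact ENNReal.ofReal_le_ofReal (le_trans (hdetlb x hx) (le_abs_self _))
  -- finiteness
  have hμE1 : volume E1 ≠ ⊤ := (lt_of_le_of_lt (measure_mono Set.inter_subset_left) hEfin).ne
  have hμE2 : volume E2 ≠ ⊤ := (lt_of_le_of_lt (measure_mono Set.inter_subset_left) hEfin).ne
  have hμE3 : volume E3 ≠ ⊤ := (lt_of_le_of_lt (measure_mono Set.diff_subset) hEfin).ne
  have hμg : volume (g '' E2) ≠ ⊤ := by
    refine (lt_of_le_of_lt (measure_mono fun y hy => ?_)
      (measure_ball_lt_top (x := (0 : Eu n)) (r := r))).ne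
    exact mem_ball_zero_iff.2 (hgE2 y hy).2
  have hμk : volume (k • E1) = ENNReal.ofReal (k ^ n) * volume E1 := by
    rw [Measure.addHaar_smul_of_nonneg volume hkpos.le E1, finrank_euclideanSpace_fin]
  have hμkfin : volume (k • E1) ≠ ⊤ := by
    rw [hμk]; exact ENNReal.mul_ne_top ENNReal.ofReal_ne_top hμE1
  -- disjointness of E pieces
  have dE12 : Disjoint E1 E2 := by
    rw [Set.disjoint_left]
    intro x hx1 hx2
    exact hx2.2.2 hx1.2
  have d123 : Disjoint (E1 ∪ E2) E3 := by
    rw [h12, Set.disjoint_left]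
    intro x hx1 hx2
    exact hx2.2 hx1.2
  -- real number versions
  set m1 : ℝ := (volume E1).toReal with hm1
  set m2 : ℝ := (volume E2).toReal with hm2
  set m3 : ℝ := (volume E3).toReal with hm3
  set I : ℝ := (volume (g '' E2)).toReal with hI
  have hm1nn : 0 ≤ m1 := ENNReal.toReal_nonneg
  have hm2nn : 0 ≤ m2 := ENNReal.toReal_nonneg
  have him : (volume (volMap n r σ '' E)).toReal = I + (k ^ n * m1 + m3) := by
    rw [hμimg, ENNReal.toReal_add hμg (ENNReal.add_ne_top.2 ⟨hμkfin, hμE3⟩),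
      ENNReal.toReal_add hμkfin hμE3, hμk, ENNReal.toReal_mul,
      ENNReal.toReal_ofReal (by positivity)]
  have hEtot : (volume E).toReal = m1 + m2 + m3 := by
    rw [hEdecomp, measure_union d123 hE3m, measure_union dE12 hE2m,
      ENNReal.toReal_add (ENNReal.add_ne_top.2 ⟨hμE1, hμE2⟩) hμE3,
      ENNReal.toReal_add hμE1 hμE2]
  have hbig' : ω * r ^ n / 2 ^ (n + 2) < m1 + m2 := by
    rw [← h12, measure_union dE12 hE2m, ENNReal.toReal_add hμE1 hμE2] at hbig
    exact hbig
  have hIlb : (1 + σ) * m2 ≤ I := by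
    have h := (ENNReal.toReal_le_toReal
      (ENNReal.mul_ne_top ENNReal.ofReal_ne_top hμE2) hμg).2 hge
    rwa [ENNReal.toReal_mul, ENNReal.toReal_ofReal (by linarith)] at h
  -- Bernoulli for k ^ n
  have hσ2n1 : σ * (2 ^ n - 1) ≤ 1 := by nlinarith
  have hkn : 1 - (n : ℝ) * (σ * (2 ^ n - 1)) ≤ k ^ n := by
    have h2 : (-2 : ℝ) ≤ -(σ * (2 ^ n - 1)) := by linarith
    have := one_add_mul_le_pow h2 n
    calc 1 - (n : ℝ) * (σ * (2 ^ n - 1)) = 1 + (n : ℝ) * (-(σ * (2 ^ n - 1))) := by ring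
    _ ≤ (1 + -(σ * (2 ^ n - 1))) ^ n := this
    _ = k ^ n := by rw [hk]; ring_nf
  -- final arithmetic
  rw [him, hEtot]
  have p2 : (1 - (n : ℝ) * (σ * (2 ^ n - 1))) * m1 ≤ k ^ n * m1 :=
    mul_le_mul_of_nonneg_right hkn hm1nn
  have q : (n : ℝ) * (σ * (2 ^ n - 1)) * m1 ≤ (n : ℝ) * σ * 2 ^ n * (ε * r ^ n) := by
    have h1 : (n : ℝ) * (σ * (2 ^ n - 1)) ≤ (n : ℝ) * σ * 2 ^ n := by nlinarith
    calc (n : ℝ) * (σ * (2 ^ n - 1)) * m1 ≤ (n : ℝ) * σ * 2 ^ n * m1 :=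
          mul_le_mul_of_nonneg_right h1 hm1nn
    _ ≤ (n : ℝ) * σ * 2 ^ n * (ε * r ^ n) :=
          mul_le_mul_of_nonneg_left hsmall.le (by positivity)
  have e23 : ω * r ^ n / 2 ^ (n + 2) = 2 * (ω * r ^ n / 2 ^ (n + 3)) := by
    rw [pow_succ]; ring
  rw [e23] at hbig'
  have p1 : σ * (2 * (ω * r ^ n / 2 ^ (n + 3))) ≤ σ * (m1 + m2) :=
    mul_le_mul_of_nonneg_left hbig'.le hσ0.le
  have p3 : σ * m1 ≤ σ * (ε * r ^ n) := mul_le_mul_of_nonneg_left hsmall.le hσ0.le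
  have hden : (0 : ℝ) < 1 + (n : ℝ) * 2 ^ n := by positivity
  have p5 : ε * (1 + (n : ℝ) * 2 ^ n) ≤ ω / 2 ^ (n + 3) := by
    calc ε * (1 + (n : ℝ) * 2 ^ n)
        ≤ (ω / (2 ^ (n + 3) * (1 + (n : ℝ) * 2 ^ n))) * (1 + (n : ℝ) * 2 ^ n) :=
          mul_le_mul_of_nonneg_right hε1.le hden.le
    _ = ω / 2 ^ (n + 3) := by field_simp
  have p5' : σ * (ε * r ^ n) + (n : ℝ) * σ * 2 ^ n * (ε * r ^ n)
      ≤ σ * (ω * r ^ n / 2 ^ (n + 3)) := by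
    have h := mul_le_mul_of_nonneg_left p5 (show (0:ℝ) ≤ σ * r ^ n by positivity)
    calc σ * (ε * r ^ n) + (n : ℝ) * σ * 2 ^ n * (ε * r ^ n)
        = σ * r ^ n * (ε * (1 + (n : ℝ) * 2 ^ n)) := by ring
    _ ≤ σ * r ^ n * (ω / 2 ^ (n + 3)) := h
    _ = σ * (ω * r ^ n / 2 ^ (n + 3)) := by ring
  have hgoal : ω / 2 ^ (n + 3) * σ * r ^ n = σ * (ω * r ^ n / 2 ^ (n + 3)) := by ring
  rw [hgoal]
  exact final_arith σ m1 m2 m3 I (k ^ n) (ω * r ^ n / 2 ^ (n + 3)) (ε * r ^ n)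
    ((n : ℝ) * (σ * (2 ^ n - 1))) ((n : ℝ) * σ * 2 ^ n * (ε * r ^ n))
    hIlb p2 q p1 p3 p5'
end

section
/- Let n ≥ 1, r > 0 and σ ∈ (0, 2^{−n}), and let f be the map defined by f(x) = (1 − σ(2ⁿ − 1))x if |x| < r/2; f(x) = x + σ(1 − rⁿ/|x|ⁿ)x if r/2 ≤ |x| < r; f(x) = x if |x| ≥ r. Then for every Lebesgue-measurable set E ⊆ ℝⁿ of finite measure, |f(E)| − |E| ≤ 2ⁿ n ω_n σ rⁿ. -/
open MeasureTheory
open Pointwise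

namespace VolMapAux

open ContinuousLinearMap

/-- The derivative of the annulus part of `volMap`. -/
noncomputable def volL (n : ℕ) (r σ : ℝ) (x : EuclideanSpace ℝ (Fin n)) :
    EuclideanSpace ℝ (Fin n) →L[ℝ] EuclideanSpace ℝ (Fin n) :=
  (1 + σ * (1 - r ^ n / ‖x‖ ^ n)) • ContinuousLinearMap.id ℝ _
    + (σ * r ^ n * n / (‖x‖ ^ n * ‖x‖ ^ 2)) • ((innerSL ℝ x).smulRight x)

theorem hasFDerivAt_volG {n : ℕ} (hn : 1 ≤ n) (r σ : ℝ) (x : EuclideanSpace ℝ (Fin n))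
    (hx : x ≠ 0) :
    HasFDerivAt (fun y : EuclideanSpace ℝ (Fin n) => y + (σ * (1 - r ^ n / ‖y‖ ^ n)) • y)
      (volL n r σ x) x := by
  have hnx : (0:ℝ) < ‖x‖ := norm_pos_iff.mpr hx
  have hsq : Real.sqrt ((‖x‖ ^ 2) ^ n) = ‖x‖ ^ n := by
    rw [← pow_mul, mul_comm, pow_mul]; exact Real.sqrt_sq (by positivity)
  have h1 : HasFDerivAt (fun y : EuclideanSpace ℝ (Fin n) => (‖y‖ ^ 2) ^ n)
      (((n : ℝ) * (‖x‖ ^ 2) ^ (n - 1)) • (2 • (innerSL ℝ x))) x :=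
    (hasDerivAt_pow n (‖x‖ ^ 2)).comp_hasFDerivAt x (hasStrictFDerivAt_norm_sq x).hasFDerivAt
  have h2 : HasFDerivAt (fun y : EuclideanSpace ℝ (Fin n) => ‖y‖ ^ n)
      ((1 / (2 * Real.sqrt ((‖x‖ ^ 2) ^ n))) •
        (((n : ℝ) * (‖x‖ ^ 2) ^ (n - 1)) • (2 • (innerSL ℝ x)))) x := by
    have h := (Real.hasDerivAt_sqrt (x := (‖x‖ ^ 2) ^ n) (by positivity)).comp_hasFDerivAt x h1
    refine h.congr_of_eventuallyEq ?_
    filter_upwards with y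
    show ‖y‖ ^ n = Real.sqrt ((‖y‖ ^ 2) ^ n)
    rw [← pow_mul, mul_comm, pow_mul, Real.sqrt_sq (by positivity)]
  have hinv := (hasDerivAt_inv (x := ‖x‖ ^ n) (by positivity)).comp_hasFDerivAt x h2
  have h3 := ((hinv.const_mul (r ^ n)).const_sub 1).const_mul σ
  have h4 := (hasFDerivAt_id x).add (h3.smul (hasFDerivAt_id x))
  refine HasFDerivAt.congr_fderiv (h4.congr_of_eventuallyEq ?_) ?_
  · filter_upwards with y
    simp [div_eq_mul_inv, Function.comp]
  · unfold volL
    refine ContinuousLinearMap.ext fun v => ?_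
    have hxn : (‖x‖ : ℝ) ≠ 0 := hnx.ne'
    have hin : inner ℝ x v = ∑ i, x i * v i := by
      simp [PiLp.inner_apply, mul_comm]
    simp only [hin, ContinuousLinearMap.add_apply, ContinuousLinearMap.smul_apply,
      ContinuousLinearMap.coe_id', id_eq, ContinuousLinearMap.smulRight_apply, innerSL_apply_apply,
      ContinuousLinearMap.coe_smul', Pi.smul_apply, smul_eq_mul, hsq, Function.comp,
      ContinuousLinearMap.neg_apply]
    match_scalars
    · field_simp
    · field_simp
      ring_nf
      have hxp : (‖x‖:ℝ) ^ 2 * ‖x‖ ^ n * ‖x‖ ^ ((n - 1) * 2) = ‖x‖ ^ (n * 3) := by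
        rw [← pow_add, ← pow_add]; congr 1; omega
      have hxq : (‖x‖:ℝ) ^ 2 * ‖x‖ ^ ((n - 1) * 2) = ‖x‖ ^ (n * 2) := by
        rw [← pow_add]; congr 1; omega
      linear_combination 2 * σ * r ^ n * (∑ i, x i * v i) * hxq

theorem det_aux {n : ℕ} (a b : ℝ) (x : EuclideanSpace ℝ (Fin n)) (ha : a ≠ 0) :
    ((a • ContinuousLinearMap.id ℝ (EuclideanSpace ℝ (Fin n))
      + b • ((innerSL ℝ x).smulRight x)) : EuclideanSpace ℝ (Fin n) →L[ℝ] _).det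
      = a ^ n * (1 + a⁻¹ * b * ‖x‖ ^ 2) := by
  classical
  set B := (EuclideanSpace.basisFun (Fin n) ℝ).toBasis with hB
  set L := (a • ContinuousLinearMap.id ℝ (EuclideanSpace ℝ (Fin n))
      + b • ((innerSL ℝ x).smulRight x)) with hL
  have hcoe : (L : EuclideanSpace ℝ (Fin n) →L[ℝ] _).det
      = LinearMap.det (L : EuclideanSpace ℝ (Fin n) →ₗ[ℝ] _) := rfl
  rw [hcoe, ← LinearMap.det_toMatrix B]
  have hM : LinearMap.toMatrix B B (L : EuclideanSpace ℝ (Fin n) →ₗ[ℝ] _)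
      = a • (1 + Matrix.replicateCol Unit (fun i => a⁻¹ * b * x i) * Matrix.replicateRow Unit (fun j => x j)) := by
    ext i j
    simp only [LinearMap.toMatrix_apply, hB, hL, OrthonormalBasis.coe_toBasis_repr_apply,
      OrthonormalBasis.coe_toBasis, EuclideanSpace.basisFun_apply, EuclideanSpace.basisFun_repr,
      ContinuousLinearMap.coe_coe, ContinuousLinearMap.add_apply, ContinuousLinearMap.smul_apply,
      ContinuousLinearMap.coe_id', id_eq, ContinuousLinearMap.smulRight_apply, innerSL_apply_apply,
      PiLp.add_apply, PiLp.smul_apply, smul_eq_mul, Matrix.smul_apply, Matrix.add_apply,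
      Matrix.one_apply, Matrix.mul_apply, Matrix.replicateCol_apply, Matrix.replicateRow_apply,
      EuclideanSpace.inner_single_right, EuclideanSpace.single_apply, Finset.univ_unique,
      Finset.sum_singleton, conj_trivial]
    by_cases hij : i = j <;> simp [hij] <;> field_simp <;> ring
  rw [hM, Matrix.det_smul, Matrix.det_one_add_replicateCol_mul_replicateRow]
  have hxx : ∑ i, x i * x i = ‖x‖ ^ 2 := by
    rw [EuclideanSpace.norm_eq, Real.sq_sqrt (by positivity)]
    simp [Real.norm_eq_abs, sq]
  simp only [dotProduct, Fintype.card_fin]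
  rw [Finset.sum_congr rfl
    (fun i _ => by ring : ∀ i ∈ Finset.univ, x i * (a⁻¹ * b * x i) = a⁻¹ * b * (x i * x i)),
    ← Finset.mul_sum, hxx]

end VolMapAux

/-- Upper volume increase bound for the volume-adjusting map:
for every measurable set `E` of finite measure, `|f(E)| − |E| ≤ 2ⁿ n ω_n σ rⁿ`. -/
theorem volMap_volume_increase_upper_bound
    (n : ℕ) (hn : 1 ≤ n) (r σ : ℝ) (hr : 0 < r) (hσ : σ ∈ Set.Ioo (0 : ℝ) (2 ^ n)⁻¹)
    (E : Set (EuclideanSpace ℝ (Fin n))) (hE : MeasurableSet E) (hEfin : volume E < ⊤) :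
    (volume (volMap n r σ '' E)).toReal - (volume E).toReal ≤
      2 ^ n * n * (volume (Metric.ball (0 : EuclideanSpace ℝ (Fin n)) 1)).toReal *
        σ * r ^ n := by
  classical
  obtain ⟨hσ0, hσ1⟩ := hσ
  haveI : NeZero n := ⟨by omega⟩
  have h2n : (0:ℝ) < 2 ^ n := by positivity
  have h1le : (1:ℝ) ≤ 2 ^ n := one_le_pow₀ (by norm_num)
  have hσ2n : σ * 2 ^ n < 1 := by
    have := mul_lt_mul_of_pos_right hσ1 h2n
    rwa [inv_mul_cancel₀ h2n.ne'] at this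
  have hσ2 : σ * (2 ^ n - 1) < 1 := by nlinarith
  set c : ℝ := 1 - σ * (2 ^ n - 1) with hc
  have hc0 : 0 < c := by simp only [hc]; linarith
  have hc1 : c ≤ 1 := by
    have : 0 ≤ σ * (2 ^ n - 1) := mul_nonneg hσ0.le (by linarith)
    simp only [hc]; linarith
  set U1 : Set (EuclideanSpace ℝ (Fin n)) := Metric.ball 0 (r / 2) with hU1
  set S : Set (EuclideanSpace ℝ (Fin n)) := Metric.sphere 0 (r / 2) with hS
  set U2 : Set (EuclideanSpace ℝ (Fin n)) := Metric.ball 0 r \ Metric.closedBall 0 (r / 2) with hU2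
  set B : Set (EuclideanSpace ℝ (Fin n)) := Metric.ball 0 r with hB
  -- the map on each piece
  have hf1 : ∀ x ∈ U1, volMap n r σ x = c • x := by
    intro x hx
    rw [hU1, mem_ball_zero_iff] at hx
    simp only [volMap, if_pos hx, hc]
  have hfS : ∀ x ∈ S, volMap n r σ x = c • x := by
    intro x hx
    rw [hS, mem_sphere_zero_iff_norm] at hx
    have h1 : ¬ ‖x‖ < r / 2 := by rw [hx]; exact lt_irrefl _
    have h2 : ‖x‖ < r := by rw [hx]; linarith
    have hrn0 : (r:ℝ) ^ n ≠ 0 := by positivity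
    have hqu : r ^ n / (r / 2) ^ n = 2 ^ n := by
      rw [div_pow, div_div_eq_mul_div, mul_comm, mul_div_assoc, div_self hrn0, mul_one]
    unfold volMap
    rw [if_neg h1, if_pos h2, hx, hqu,
      show σ * (1 - 2 ^ n) = c - 1 by rw [hc]; ring, sub_smul, one_smul]
    abel
  have hf2 : ∀ x ∈ U2, volMap n r σ x = x + (σ * (1 - r ^ n / ‖x‖ ^ n)) • x := by
    intro x hx
    obtain ⟨hx1, hx2⟩ := hx
    rw [mem_ball_zero_iff] at hx1
    rw [Metric.mem_closedBall, not_le, dist_zero_right] at hx2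
    have h1 : ¬ ‖x‖ < r / 2 := by linarith
    simp only [volMap, if_neg h1, if_pos hx1]
  have hf3 : ∀ x ∈ E \ B, volMap n r σ x = x := by
    intro x hx
    rw [hB, Set.mem_diff, mem_ball_zero_iff, not_lt] at hx
    have h1 : ¬ ‖x‖ < r / 2 := by push_neg; linarith [hx.2]
    have h2 : ¬ ‖x‖ < r := not_lt.mpr hx.2
    simp only [volMap, if_neg h1, if_neg h2]
  -- nontriviality
  haveI : Nontrivial (EuclideanSpace ℝ (Fin n)) := by
    refine nontrivial_of_ne (EuclideanSpace.single ⟨0, by omega⟩ (1:ℝ)) 0 fun h => ?_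
    have := congrArg (fun v : EuclideanSpace ℝ (Fin n) => v ⟨0, by omega⟩) h
    simpa using this
  -- covering of the image
  have hcover : volMap n r σ '' E ⊆
      volMap n r σ '' (E ∩ U1) ∪ volMap n r σ '' (E ∩ S) ∪ volMap n r σ '' (E ∩ U2)
        ∪ volMap n r σ '' (E \ B) := by
    rintro y ⟨x, hxE, rfl⟩
    by_cases ha : ‖x‖ < r / 2
    · exact Or.inl (Or.inl (Or.inl ⟨x, ⟨hxE, mem_ball_zero_iff.mpr ha⟩, rfl⟩))
    by_cases hb : ‖x‖ = r / 2
    · exact Or.inl (Or.inl (Or.inr ⟨x, ⟨hxE, mem_sphere_zero_iff_norm.mpr hb⟩, rfl⟩))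
    by_cases hcc : ‖x‖ < r
    · refine Or.inl (Or.inr ⟨x, ⟨hxE, ⟨mem_ball_zero_iff.mpr hcc, fun hmem => ?_⟩⟩, rfl⟩)
      rw [Metric.mem_closedBall, dist_zero_right] at hmem
      rcases lt_or_eq_of_le hmem with h | h
      · exact ha h
      · exact hb h
    · exact Or.inr ⟨x, ⟨hxE, fun hmem => hcc (mem_ball_zero_iff.mp hmem)⟩, rfl⟩
  -- the inner ball piece
  have hU1m : volume (volMap n r σ '' (E ∩ U1)) ≤ volume (E ∩ U1) := by
    have himg : volMap n r σ '' (E ∩ U1) = c • (E ∩ U1) := by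
      rw [← Set.image_smul]
      exact Set.image_congr fun x hx => hf1 x hx.2
    rw [himg, Measure.addHaar_smul]
    have habs : |c ^ Module.finrank ℝ (EuclideanSpace ℝ (Fin n))| ≤ 1 := by
      rw [abs_of_nonneg (pow_nonneg hc0.le _)]
      exact pow_le_one₀ hc0.le hc1
    calc ENNReal.ofReal |c ^ Module.finrank ℝ (EuclideanSpace ℝ (Fin n))| * volume (E ∩ U1)
        ≤ 1 * volume (E ∩ U1) := by
          gcongr
          exact ENNReal.ofReal_le_one.mpr habs
      _ = volume (E ∩ U1) := one_mul _
  -- the sphere piece is null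
  have hSm : volume (volMap n r σ '' (E ∩ S)) = 0 := by
    refine measure_mono_null ?_
      (Measure.addHaar_sphere volume (0 : EuclideanSpace ℝ (Fin n)) (c * (r / 2)))
    rintro y ⟨x, hx, rfl⟩
    rw [hfS x hx.2, mem_sphere_zero_iff_norm, norm_smul, Real.norm_eq_abs, abs_of_pos hc0,
      mem_sphere_zero_iff_norm.mp hx.2]
  -- the annulus piece via the Jacobian
  have hU2meas : MeasurableSet (E ∩ U2) :=
    hE.inter (measurableSet_ball.diff measurableSet_closedBall)
  have hU2norm : ∀ x ∈ U2, r / 2 < ‖x‖ ∧ ‖x‖ < r := by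
    intro x hx
    obtain ⟨hx1, hx2⟩ := hx
    rw [mem_ball_zero_iff] at hx1
    rw [Metric.mem_closedBall, dist_zero_right, not_le] at hx2
    exact ⟨hx2, hx1⟩
  have hderiv : ∀ x ∈ E ∩ U2,
      HasFDerivWithinAt (volMap n r σ) (VolMapAux.volL n r σ x) (E ∩ U2) x := by
    intro x hx
    obtain ⟨hgt, hlt⟩ := hU2norm x hx.2
    have hx0 : x ≠ 0 := by
      intro h
      rw [h, norm_zero] at hgt; linarith
    have hopen : IsOpen U2 := Metric.isOpen_ball.sdiff Metric.isClosed_closedBall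
    have h := (VolMapAux.hasFDerivAt_volG hn r σ x hx0).congr_of_eventuallyEq
      (Filter.eventuallyEq_of_mem (hopen.mem_nhds hx.2) hf2)
    exact h.hasFDerivWithinAt
  set K : ℝ := σ * n * 2 ^ n with hK
  have hK0 : 0 ≤ K := by
    rw [hK]
    positivity
  have hdet : ∀ x ∈ E ∩ U2,
      ENNReal.ofReal |(VolMapAux.volL n r σ x).det| ≤ ENNReal.ofReal (1 + K) := by
    intro x hx
    obtain ⟨hgt, hlt⟩ := hU2norm x hx.2
    have hx0 : (0:ℝ) < ‖x‖ := lt_trans (by positivity) hgt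
    have hxn : (0:ℝ) < ‖x‖ ^ n := by positivity
    set a : ℝ := 1 + σ * (1 - r ^ n / ‖x‖ ^ n) with hadef
    set b : ℝ := σ * r ^ n * n / (‖x‖ ^ n * ‖x‖ ^ 2) with hbdef
    have hrpow : r ^ n < 2 ^ n * ‖x‖ ^ n := by
      have : r < 2 * ‖x‖ := by linarith
      calc r ^ n < (2 * ‖x‖) ^ n := pow_lt_pow_left₀ this hr.le (by omega)
        _ = 2 ^ n * ‖x‖ ^ n := mul_pow 2 ‖x‖ n
    have hxr : ‖x‖ ^ n ≤ r ^ n := pow_le_pow_left₀ hx0.le hlt.le n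
    have hratio_ge : (1:ℝ) ≤ r ^ n / ‖x‖ ^ n := (one_le_div hxn).mpr hxr
    have hratio_lt : r ^ n / ‖x‖ ^ n < 2 ^ n := (div_lt_iff₀ hxn).mpr hrpow
    have ha1 : a ≤ 1 := by
      have : σ * (1 - r ^ n / ‖x‖ ^ n) ≤ 0 :=
        mul_nonpos_of_nonneg_of_nonpos hσ0.le (by linarith)
      rw [hadef]; linarith
    have ha0 : 0 < a := by
      have h1 : σ * (r ^ n / ‖x‖ ^ n - 1) ≤ σ * (2 ^ n - 1) :=
        mul_le_mul_of_nonneg_left (by linarith) hσ0.le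
      have : σ * (1 - r ^ n / ‖x‖ ^ n) = -(σ * (r ^ n / ‖x‖ ^ n - 1)) := by ring
      rw [hadef, this]; linarith
    have hb0 : 0 ≤ b := by
      rw [hbdef]
      apply div_nonneg _ (by positivity)
      exact mul_nonneg (mul_nonneg hσ0.le (by positivity)) (Nat.cast_nonneg n)
    have hdeteq : (VolMapAux.volL n r σ x).det = a ^ n * (1 + a⁻¹ * b * ‖x‖ ^ 2) :=
      VolMapAux.det_aux a b x ha0.ne'
    have hbx : b * ‖x‖ ^ 2 = σ * r ^ n * n / ‖x‖ ^ n := by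
      rw [hbdef]
      field_simp
    have hbx_le : b * ‖x‖ ^ 2 ≤ K := by
      rw [hbx, hK, div_le_iff₀ hxn]
      have h0 : (0:ℝ) ≤ σ * n := mul_nonneg hσ0.le (Nat.cast_nonneg n)
      calc σ * r ^ n * n ≤ σ * (2 ^ n * ‖x‖ ^ n) * n :=
            mul_le_mul_of_nonneg_right
              (mul_le_mul_of_nonneg_left hrpow.le hσ0.le) (Nat.cast_nonneg n)
        _ = σ * n * 2 ^ n * ‖x‖ ^ n := by ring
    have han : a ^ n ≤ 1 := pow_le_one₀ ha0.le ha1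
    have hana : a ^ n * a⁻¹ ≤ 1 := by
      have h1 : a ^ n ≤ a := by
        calc a ^ n ≤ a ^ 1 := pow_le_pow_of_le_one ha0.le ha1 hn
          _ = a := pow_one a
      calc a ^ n * a⁻¹ ≤ a * a⁻¹ :=
            mul_le_mul_of_nonneg_right h1 (inv_nonneg.mpr ha0.le)
        _ = 1 := mul_inv_cancel₀ ha0.ne'
    have hana0 : 0 ≤ a ^ n * a⁻¹ := mul_nonneg (pow_nonneg ha0.le n) (inv_nonneg.mpr ha0.le)
    have hbx0 : 0 ≤ b * ‖x‖ ^ 2 := mul_nonneg hb0 (by positivity)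
    have hdet_nonneg : 0 ≤ (VolMapAux.volL n r σ x).det := by
      rw [hdeteq]
      apply mul_nonneg (pow_nonneg ha0.le n)
      have : 0 ≤ a⁻¹ * b * ‖x‖ ^ 2 :=
        mul_nonneg (mul_nonneg (inv_nonneg.mpr ha0.le) hb0) (by positivity)
      linarith
    apply ENNReal.ofReal_le_ofReal
    rw [abs_of_nonneg hdet_nonneg, hdeteq]
    have hexp : a ^ n * (1 + a⁻¹ * b * ‖x‖ ^ 2) = a ^ n + (a ^ n * a⁻¹) * (b * ‖x‖ ^ 2) := by
      ring
    rw [hexp]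
    have : (a ^ n * a⁻¹) * (b * ‖x‖ ^ 2) ≤ 1 * K :=
      mul_le_mul hana hbx_le hbx0 zero_le_one
    linarith
  have hU2m : volume (volMap n r σ '' (E ∩ U2)) ≤ ENNReal.ofReal (1 + K) * volume (E ∩ U2) := by
    calc volume (volMap n r σ '' (E ∩ U2))
        ≤ ∫⁻ x in E ∩ U2, ENNReal.ofReal |(VolMapAux.volL n r σ x).det| :=
          addHaar_image_le_lintegral_abs_det_fderiv volume hU2meas hderiv
      _ ≤ ∫⁻ _ in E ∩ U2, ENNReal.ofReal (1 + K) := setLIntegral_mono measurable_const hdet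
      _ = ENNReal.ofReal (1 + K) * volume (E ∩ U2) := setLIntegral_const _ _
  -- the outside piece
  have hf3img : volMap n r σ '' (E \ B) = E \ B := by
    rw [Set.image_congr hf3]
    exact Set.image_id' _
  -- disjointness and sum bound
  have hsum : volume (E ∩ U1) + volume (E ∩ U2) + volume (E \ B) ≤ volume E := by
    have d12 : Disjoint (E ∩ U1) (E ∩ U2) := by
      refine Set.disjoint_left.mpr fun x hx1 hx2 => ?_
      have h1 := mem_ball_zero_iff.mp hx1.2
      have h2 := (hU2norm x hx2.2).1
      linarith
    have d3 : Disjoint ((E ∩ U1) ∪ (E ∩ U2)) (E \ B) := by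
      refine Set.disjoint_left.mpr fun x hx1 hx2 => ?_
      have hxB : x ∈ B := by
        rcases hx1 with h | h
        · exact mem_ball_zero_iff.mpr (lt_trans (mem_ball_zero_iff.mp h.2) (by linarith))
        · exact h.2.1
      exact hx2.2 hxB
    have hmeas3 : MeasurableSet (E \ B) := hE.diff measurableSet_ball
    calc volume (E ∩ U1) + volume (E ∩ U2) + volume (E \ B)
        = volume ((E ∩ U1) ∪ (E ∩ U2)) + volume (E \ B) := by rw [measure_union d12 hU2meas]
      _ = volume (((E ∩ U1) ∪ (E ∩ U2)) ∪ (E \ B)) := (measure_union d3 hmeas3).symm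
      _ ≤ volume E := by
          apply measure_mono
          rintro x (h | h)
          · rcases h with h | h
            · exact h.1
            · exact h.1
          · exact h.1
  -- ball volume
  have hωfin : volume (Metric.ball (0 : EuclideanSpace ℝ (Fin n)) 1) ≠ ⊤ :=
    measure_ball_lt_top.ne
  have hBvol : volume B = ENNReal.ofReal (r ^ n) *
      volume (Metric.ball (0 : EuclideanSpace ℝ (Fin n)) 1) := by
    rw [hB, Measure.addHaar_ball volume 0 hr.le, finrank_euclideanSpace_fin]
  -- main ENNReal estimate
  have hmain : volume (volMap n r σ '' E) ≤ volume E +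
      ENNReal.ofReal (K * r ^ n) *
        volume (Metric.ball (0 : EuclideanSpace ℝ (Fin n)) 1) := by
    calc volume (volMap n r σ '' E)
        ≤ volume (volMap n r σ '' (E ∩ U1) ∪ volMap n r σ '' (E ∩ S)
            ∪ volMap n r σ '' (E ∩ U2) ∪ volMap n r σ '' (E \ B)) := measure_mono hcover
      _ ≤ volume (volMap n r σ '' (E ∩ U1)) + volume (volMap n r σ '' (E ∩ S))
          + volume (volMap n r σ '' (E ∩ U2)) + volume (volMap n r σ '' (E \ B)) := by
          refine (measure_union_le _ _).trans ?_
          gcongr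
          refine (measure_union_le _ _).trans ?_
          gcongr
          exact measure_union_le _ _
      _ ≤ volume (E ∩ U1) + 0 + ENNReal.ofReal (1 + K) * volume (E ∩ U2)
          + volume (E \ B) :=
          add_le_add (add_le_add (add_le_add hU1m hSm.le) hU2m)
            (le_of_eq (by rw [hf3img]))
      _ = volume (E ∩ U1) + (volume (E ∩ U2) + ENNReal.ofReal K * volume (E ∩ U2))
          + volume (E \ B) := by
          rw [ENNReal.ofReal_add zero_le_one hK0, ENNReal.ofReal_one, add_mul, one_mul, add_zero]
      _ ≤ (volume (E ∩ U1) + volume (E ∩ U2) + volume (E \ B))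
          + ENNReal.ofReal K * volume B := by
          have hle : volume (E ∩ U2) ≤ volume B :=
            measure_mono fun x hx => hx.2.1
          calc volume (E ∩ U1) + (volume (E ∩ U2) + ENNReal.ofReal K * volume (E ∩ U2))
              + volume (E \ B)
              ≤ volume (E ∩ U1) + (volume (E ∩ U2) + ENNReal.ofReal K * volume B)
                + volume (E \ B) := by gcongr
            _ = (volume (E ∩ U1) + volume (E ∩ U2) + volume (E \ B))
                + ENNReal.ofReal K * volume B := by ring
      _ ≤ volume E + ENNReal.ofReal (K * r ^ n) *
            volume (Metric.ball (0 : EuclideanSpace ℝ (Fin n)) 1) :=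
          add_le_add hsum
            (le_of_eq (by rw [hBvol, ← mul_assoc, ← ENNReal.ofReal_mul hK0]))
  -- pass to toReal
  have hfin2 : ENNReal.ofReal (K * r ^ n) *
      volume (Metric.ball (0 : EuclideanSpace ℝ (Fin n)) 1) ≠ ⊤ :=
    ENNReal.mul_ne_top ENNReal.ofReal_ne_top hωfin
  have htop : volume E + ENNReal.ofReal (K * r ^ n) *
      volume (Metric.ball (0 : EuclideanSpace ℝ (Fin n)) 1) ≠ ⊤ :=
    ENNReal.add_ne_top.mpr ⟨hEfin.ne, hfin2⟩
  have hto := ENNReal.toReal_mono htop hmain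
  rw [ENNReal.toReal_add hEfin.ne hfin2, ENNReal.toReal_mul,
    ENNReal.toReal_ofReal (by positivity)] at hto
  have hring : K * r ^ n *
      (volume (Metric.ball (0 : EuclideanSpace ℝ (Fin n)) 1)).toReal
      = 2 ^ n * n * (volume (Metric.ball (0 : EuclideanSpace ℝ (Fin n)) 1)).toReal
        * σ * r ^ n := by
    rw [hK]; ring
  linarith
end

section
/- Let n ≥ 1. There exists a constant C > 0, depending only on n, such that for every r > 0 and every σ ∈ (0, 2^{−n}), letting f be the map defined by f(x) = (1 − σ(2ⁿ − 1))x if |x| < r/2; f(x) = x + σ(1 − rⁿ/|x|ⁿ)x if r/2 ≤ |x| < r; f(x) = x if |x| ≥ r, and letting g := f^{−1} be its inverse, one has ‖Dg(y) − I‖ ≤ C·σ for every y ∈ ℝⁿ at which g is differentiable. -/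
noncomputable def psiV (n : ℕ) (r t : ℝ) : ℝ := min 0 (1 - r ^ n / max t (r / 2) ^ n)

lemma psiV_nonpos (n : ℕ) (r t : ℝ) : psiV n r t ≤ 0 := min_le_left _ _

lemma one_le_two_pow_real (n : ℕ) : (1:ℝ) ≤ 2 ^ n := one_le_pow₀ (by norm_num)

lemma psiV_lb (n : ℕ) {r : ℝ} (hr : 0 < r) (t : ℝ) : -(2 ^ n - 1) ≤ psiV n r t := by
  have h2 : (0:ℝ) < r / 2 := by positivity
  have hm : r / 2 ≤ max t (r / 2) := le_max_right _ _
  have hmp : 0 < max t (r / 2) := lt_of_lt_of_le h2 hm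
  have hdiv : r ^ n / max t (r / 2) ^ n ≤ 2 ^ n := by
    rw [div_le_iff₀ (by positivity)]
    calc r ^ n = (2 * (r/2)) ^ n := by ring_nf
      _ ≤ (2 * max t (r/2)) ^ n := by gcongr
      _ = 2 ^ n * max t (r/2) ^ n := by rw [mul_pow]
  have h1 := one_le_two_pow_real n
  exact le_min (by linarith) (by linarith)

lemma psiV_mono (n : ℕ) {r : ℝ} (hr : 0 < r) : Monotone (psiV n r) := by
  intro s t hst
  have h2 : (0:ℝ) < r / 2 := by positivity
  have hu : (0:ℝ) < max s (r/2) := lt_of_lt_of_le h2 (le_max_right _ _)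
  refine min_le_min le_rfl (by gcongr)

lemma psiV_eq_zero (n : ℕ) {r t : ℝ} (hr : 0 < r) (ht : r ≤ t) : psiV n r t = 0 := by
  have hmax : max t (r/2) = t := max_eq_left (by linarith)
  have ht0 : 0 < t := lt_of_lt_of_le hr ht
  have : r ^ n / t ^ n ≤ 1 := by
    rw [div_le_one (by positivity)]; gcongr
  rw [psiV, hmax, min_eq_left (by linarith)]

lemma pow_div_lip (n : ℕ) (hn : 1 ≤ n) {r u v : ℝ} (hr : 0 < r) (hu : r/2 ≤ u)
    (huv : u ≤ v) :
    r ^ n / u ^ n - r ^ n / v ^ n ≤ (n * 2 ^ (n+1) / r) * (v - u) := by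
  have h2 : (0:ℝ) < r/2 := by positivity
  have hu0 : 0 < u := lt_of_lt_of_le h2 hu
  have hv0 : 0 < v := hu0.trans_le huv
  have hvu : (0:ℝ) ≤ v - u := sub_nonneg.2 huv
  have key : v ^ n - u ^ n ≤ (n : ℝ) * v ^ (n-1) * (v - u) := by
    rw [← geom_sum₂_mul v u n]
    have hsum : (∑ i ∈ Finset.range n, v ^ i * u ^ (n - 1 - i)) ≤ (n:ℝ) * v ^ (n-1) := by
      calc (∑ i ∈ Finset.range n, v ^ i * u ^ (n - 1 - i))
          ≤ ∑ i ∈ Finset.range n, v ^ (n-1) := by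
            refine Finset.sum_le_sum fun i hi => ?_
            have hin : i + (n - 1 - i) = n - 1 := by
              have := Finset.mem_range.1 hi; omega
            calc v ^ i * u ^ (n - 1 - i) ≤ v ^ i * v ^ (n - 1 - i) := by gcongr
              _ = v ^ (n-1) := by rw [← pow_add, hin]
        _ = (n:ℝ) * v ^ (n-1) := by
            rw [Finset.sum_const, Finset.card_range, nsmul_eq_mul]
    exact mul_le_mul_of_nonneg_right hsum hvu
  have hun : (0:ℝ) < u ^ n := by positivity
  have hvn : (0:ℝ) < v ^ n := by positivity
  rw [div_sub_div _ _ hun.ne' hvn.ne', div_le_iff₀ (by positivity)]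
  have hvpow : v ^ (n-1) * v = v ^ n := by
    rw [← pow_succ]; congr 1; omega
  have hfac : r ^ n * (n:ℝ) ≤ (n * 2 ^ (n+1) / r) * (u ^ n * v) := by
    calc r ^ n * (n:ℝ) = ((n:ℝ) * 2 ^ (n+1) / r) * ((r/2) ^ n * (r/2)) := by
          have h : ((1:ℝ)/2)^n * 2^n = 1 := by rw [← mul_pow]; norm_num
          field_simp; linear_combination (-(r^n*2)) * h
      _ ≤ _ := by gcongr <;> first | exact hu | exact hu.trans huv | positivity
  calc r ^ n * v ^ n - u ^ n * r ^ n = r ^ n * (v ^ n - u ^ n) := by ring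
    _ ≤ r ^ n * ((n:ℝ) * v ^ (n-1) * (v - u)) := by gcongr
    _ = (r ^ n * (n:ℝ)) * (v ^ (n-1) * (v - u)) := by ring
    _ ≤ ((n * 2 ^ (n+1) / r) * (u ^ n * v)) * (v ^ (n-1) * (v - u)) := by
        refine mul_le_mul_of_nonneg_right hfac (by positivity)
    _ = (n * 2 ^ (n+1) / r) * (v - u) * (u ^ n * (v ^ (n-1) * v)) := by ring
    _ = (n * 2 ^ (n+1) / r) * (v - u) * (u ^ n * v ^ n) := by rw [hvpow]

lemma psiV_lip_le (n : ℕ) (hn : 1 ≤ n) {r : ℝ} (hr : 0 < r) {s t : ℝ} (hst : s ≤ t) :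
    |psiV n r s - psiV n r t| ≤ (n * 2 ^ (n+1) / r) * |s - t| := by
  set u := max s (r/2) with hu
  set v := max t (r/2) with hv
  have h2 : (0:ℝ) < r/2 := by positivity
  have huv : u ≤ v := max_le_max hst le_rfl
  have hru : r/2 ≤ u := le_max_right _ _
  have hvu : v - u ≤ t - s := by
    rcases le_total t (r/2) with h | h
    · have : v = r/2 := max_eq_right h
      have : v - u ≤ 0 := by rw [this]; linarith [le_max_right s (r/2)]
      linarith
    · have hveq : v = t := max_eq_left h
      have : s ≤ u := le_max_left _ _
      rw [hveq]; linarith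
  have hd : |psiV n r s - psiV n r t|
      ≤ |(1 - r ^ n / u ^ n) - (1 - r ^ n / v ^ n)| := by
    have := abs_min_sub_min_le_max (0:ℝ) (1 - r ^ n / u ^ n) 0 (1 - r ^ n / v ^ n)
    simpa [psiV] using this
  have hmono : r ^ n / v ^ n ≤ r ^ n / u ^ n := by
    have hu0 : 0 < u := lt_of_lt_of_le h2 hru
    gcongr
  calc |psiV n r s - psiV n r t| ≤ |(1 - r ^ n / u ^ n) - (1 - r ^ n / v ^ n)| := hd
    _ = r ^ n / u ^ n - r ^ n / v ^ n := by
        rw [abs_of_nonpos (by linarith)]; ring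
    _ ≤ (n * 2 ^ (n+1) / r) * (v - u) := pow_div_lip n hn hr hru huv
    _ ≤ (n * 2 ^ (n+1) / r) * |s - t| := by
        have h1 : v - u ≤ |s - t| := le_trans hvu (by rw [abs_sub_comm]; exact le_abs_self _)
        gcongr

lemma psiV_lip (n : ℕ) (hn : 1 ≤ n) {r : ℝ} (hr : 0 < r) (s t : ℝ) :
    |psiV n r s - psiV n r t| ≤ (n * 2 ^ (n+1) / r) * |s - t| := by
  rcases le_total s t with h | h
  · exact psiV_lip_le n hn hr h
  · rw [abs_sub_comm, abs_sub_comm s t]; exact psiV_lip_le n hn hr h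

lemma psiV_of_lt_half (n : ℕ) {r t : ℝ} (hr : 0 < r) (ht : t < r/2) :
    psiV n r t = 1 - 2 ^ n := by
  have hmax : max t (r/2) = r/2 := max_eq_right ht.le
  have h1 := one_le_two_pow_real n
  have hd : r ^ n / (r/2) ^ n = 2 ^ n := by
    rw [div_pow]
    field_simp
  rw [psiV, hmax, hd, min_eq_right (by linarith)]

lemma psiV_of_mid (n : ℕ) {r t : ℝ} (hr : 0 < r) (h1 : r/2 ≤ t) (h2 : t < r) :
    psiV n r t = 1 - r ^ n / t ^ n := by
  have hmax : max t (r/2) = t := max_eq_left h1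
  have ht0 : 0 < t := lt_of_lt_of_le (by positivity) h1
  have : (1:ℝ) ≤ r ^ n / t ^ n := by
    rw [le_div_iff₀ (by positivity), one_mul]
    gcongr
  rw [psiV, hmax, min_eq_right (by linarith)]

lemma volMap_eq (n : ℕ) {r : ℝ} (hr : 0 < r) (σ : ℝ) (x : EuclideanSpace ℝ (Fin n)) :
    volMap n r σ x = (1 + σ * psiV n r ‖x‖) • x := by
  rw [volMap]
  split_ifs with h1 h2
  · rw [psiV_of_lt_half n hr h1, show (1:ℝ) + σ * (1 - 2 ^ n) = 1 - σ * (2 ^ n - 1) by ring]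
  · rw [psiV_of_mid n hr (not_lt.1 h1) h2, add_smul, one_smul]
  · rw [psiV_eq_zero n hr (not_lt.1 h2)]
    simp

lemma m_bound_le (n : ℕ) (hn : 1 ≤ n) {r : ℝ} (hr : 0 < r)
    {x x' : EuclideanSpace ℝ (Fin n)} (h : ‖x'‖ ≤ ‖x‖) :
    ‖psiV n r ‖x‖ • x - psiV n r ‖x'‖ • x'‖
      ≤ (2 ^ n + n * 2 ^ (n+1)) * ‖x - x'‖ := by
  set a := psiV n r ‖x‖ with ha
  set b := psiV n r ‖x'‖ with hb
  have hsplit : a • x - b • x' = a • (x - x') + (a - b) • x' := by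
    rw [smul_sub, sub_smul]; abel
  have h1 : ‖a • x - b • x'‖ ≤ |a| * ‖x - x'‖ + |a - b| * ‖x'‖ := by
    rw [hsplit]
    refine le_trans (norm_add_le _ _) ?_
    simp [norm_smul]
  have h2pow := one_le_two_pow_real n
  have haabs : |a| ≤ 2 ^ n := by
    rw [abs_le]
    constructor
    · linarith [psiV_lb n hr ‖x‖]
    · linarith [psiV_nonpos n r ‖x‖]
  have hsecond : |a - b| * ‖x'‖ ≤ (n * 2 ^ (n+1)) * ‖x - x'‖ := by
    by_cases hx' : r ≤ ‖x'‖
    · have hx : r ≤ ‖x‖ := le_trans hx' h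
      have : a = 0 := psiV_eq_zero n hr hx
      have hb0 : b = 0 := psiV_eq_zero n hr hx'
      simp [this, hb0]
      positivity
    · push_neg at hx'
      have hab : |a - b| ≤ (n * 2 ^ (n+1) / r) * ‖x - x'‖ := by
        refine le_trans (psiV_lip n hn hr ‖x‖ ‖x'‖) ?_
        gcongr
        exact abs_norm_sub_norm_le x x'
      calc |a - b| * ‖x'‖ ≤ ((n * 2 ^ (n+1) / r) * ‖x - x'‖) * r := by
            refine mul_le_mul hab hx'.le (norm_nonneg _) (by positivity)
        _ = (n * 2 ^ (n+1)) * ‖x - x'‖ := by field_simp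
  calc ‖a • x - b • x'‖ ≤ |a| * ‖x - x'‖ + |a - b| * ‖x'‖ := h1
    _ ≤ 2 ^ n * ‖x - x'‖ + (n * 2 ^ (n+1)) * ‖x - x'‖ := by
        gcongr
    _ = (2 ^ n + n * 2 ^ (n+1)) * ‖x - x'‖ := by ring

lemma m_bound (n : ℕ) (hn : 1 ≤ n) {r : ℝ} (hr : 0 < r)
    (x x' : EuclideanSpace ℝ (Fin n)) :
    ‖psiV n r ‖x‖ • x - psiV n r ‖x'‖ • x'‖
      ≤ (2 ^ n + n * 2 ^ (n+1)) * ‖x - x'‖ := by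
  rcases le_total ‖x'‖ ‖x‖ with h | h
  · exact m_bound_le n hn hr h
  · have := m_bound_le n hn hr h
    rw [norm_sub_rev x x', ← norm_neg, neg_sub]
    exact this

lemma diff_bound (n : ℕ) (hn : 1 ≤ n) {r σ : ℝ} (hr : 0 < r) (hσ : 0 ≤ σ)
    (x x' : EuclideanSpace ℝ (Fin n)) :
    ‖volMap n r σ x - volMap n r σ x' - (x - x')‖
      ≤ σ * (2 ^ n + n * 2 ^ (n+1)) * ‖x - x'‖ := by
  rw [volMap_eq n hr, volMap_eq n hr]
  have hveq : (1 + σ * psiV n r ‖x‖) • x - (1 + σ * psiV n r ‖x'‖) • x' - (x - x')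
      = σ • (psiV n r ‖x‖ • x - psiV n r ‖x'‖ • x') := by
    rw [add_smul, add_smul, one_smul, one_smul, smul_sub, mul_smul, mul_smul]
    abel
  rw [hveq, norm_smul, Real.norm_eq_abs, abs_of_nonneg hσ, mul_assoc]
  exact mul_le_mul_of_nonneg_left (m_bound n hn hr x x') hσ

open scoped RealInnerProductSpace in
lemma expansive_le (n : ℕ) (hn : 1 ≤ n) {r σ : ℝ} (hr : 0 < r) (hσ : 0 ≤ σ)
    (hσ1 : σ ≤ (2 ^ n : ℝ)⁻¹)
    {x x' : EuclideanSpace ℝ (Fin n)} (h : ‖x'‖ ≤ ‖x‖) :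
    (2 ^ n : ℝ)⁻¹ * ‖x - x'‖ ≤ ‖volMap n r σ x - volMap n r σ x'‖ := by
  rcases eq_or_ne x x' with rfl | hne
  · simp
  rw [volMap_eq n hr, volMap_eq n hr]
  set a := 1 + σ * psiV n r ‖x‖ with ha
  set b := 1 + σ * psiV n r ‖x'‖ with hb
  have h2pow : (0:ℝ) < 2 ^ n := by positivity
  have hab : b ≤ a := by
    have := psiV_mono n hr h
    nlinarith
  have hbound : (2 ^ n : ℝ)⁻¹ ≤ b := by
    have hlb := psiV_lb n hr ‖x'‖
    have hσp : σ * (2 ^ n - 1) ≤ (2 ^ n : ℝ)⁻¹ * (2 ^ n - 1) := by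
      have : (0:ℝ) ≤ 2 ^ n - 1 := by linarith [one_le_two_pow_real n]
      exact mul_le_mul_of_nonneg_right hσ1 this
    have hinv : (2 ^ n : ℝ)⁻¹ * (2 ^ n - 1) = 1 - (2 ^ n : ℝ)⁻¹ := by
      field_simp
    have : σ * psiV n r ‖x'‖ ≥ -(σ * (2 ^ n - 1)) := by nlinarith
    rw [hb]
    linarith [this, hσp, hinv.le]
  have hdecomp : a • x - b • x' = b • (x - x') + (a - b) • x := by
    rw [smul_sub, sub_smul]; abel
  have hinner : b * ‖x - x'‖ ^ 2 ≤ ⟪a • x - b • x', x - x'⟫ := by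
    rw [hdecomp, inner_add_left, real_inner_smul_left, real_inner_smul_left,
      real_inner_self_eq_norm_sq]
    have hxx : (0:ℝ) ≤ ⟪x, x - x'⟫ := by
      rw [inner_sub_right, real_inner_self_eq_norm_sq]
      have := real_inner_le_norm x x'
      nlinarith [norm_nonneg x]
    nlinarith [sub_nonneg.2 hab]
  have hcs := real_inner_le_norm (a • x - b • x' : EuclideanSpace ℝ (Fin n)) (x - x')
  have hnorm : 0 < ‖x - x'‖ := by
    rw [norm_pos_iff]; exact sub_ne_zero.2 hne
  have hchain : (2 ^ n : ℝ)⁻¹ * ‖x - x'‖ * ‖x - x'‖ ≤ ‖a • x - b • x'‖ * ‖x - x'‖ := by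
    nlinarith
  exact le_of_mul_le_mul_right hchain hnorm

lemma expansive (n : ℕ) (hn : 1 ≤ n) {r σ : ℝ} (hr : 0 < r) (hσ : 0 ≤ σ)
    (hσ1 : σ ≤ (2 ^ n : ℝ)⁻¹) (x x' : EuclideanSpace ℝ (Fin n)) :
    (2 ^ n : ℝ)⁻¹ * ‖x - x'‖ ≤ ‖volMap n r σ x - volMap n r σ x'‖ := by
  rcases le_total ‖x'‖ ‖x‖ with h | h
  · exact expansive_le n hn hr hσ hσ1 h
  · have := expansive_le n hn hr hσ hσ1 h
    rw [← norm_neg (x' - x), neg_sub, ← norm_neg (volMap n r σ x' - volMap n r σ x),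
      neg_sub] at this
    exact this

lemma psiV_continuous (n : ℕ) {r : ℝ} (hr : 0 < r) : Continuous (psiV n r) := by
  have hden : Continuous fun t : ℝ => (max t (r/2)) ^ n :=
    (continuous_id.max continuous_const).pow n
  have hdiv : Continuous fun t : ℝ => r ^ n / (max t (r/2)) ^ n := by
    refine continuous_const.div hden fun t => ?_
    have : (0:ℝ) < max t (r/2) := lt_of_lt_of_le (by positivity) (le_max_right _ _)
    positivity
  exact continuous_const.min (continuous_const.sub hdiv)

lemma volMap_surj (n : ℕ) (hn : 1 ≤ n) {r σ : ℝ} (hr : 0 < r) (hσ : 0 ≤ σ)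
    (hσ1 : σ ≤ (2 ^ n : ℝ)⁻¹) : Function.Surjective (volMap n r σ) := by
  intro y
  by_cases hy : r ≤ ‖y‖
  · exact ⟨y, by rw [volMap_eq n hr, psiV_eq_zero n hr hy]; simp⟩
  push_neg at hy
  rcases eq_or_ne y 0 with rfl | hy0
  · exact ⟨0, by rw [volMap_eq n hr]; simp⟩
  set ρ : ℝ → ℝ := fun t => (1 + σ * psiV n r t) * t with hρ
  have hρc : ContinuousOn ρ (Set.Icc 0 r) :=
    (((continuous_const.add (continuous_const.mul (psiV_continuous n hr))).mul
      continuous_id)).continuousOn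
  have hρ0 : ρ 0 = 0 := by simp [hρ]
  have hρr : ρ r = r := by
    rw [hρ]; simp only []
    rw [psiV_eq_zero n hr le_rfl]; ring
  have hmem : ‖y‖ ∈ Set.Icc (ρ 0) (ρ r) := by
    rw [hρ0, hρr]; exact ⟨norm_nonneg _, hy.le⟩
  obtain ⟨t, ht, hρt⟩ := intermediate_value_Icc hr.le hρc hmem
  have ht0 : 0 ≤ t := ht.1
  have hy0' : (0:ℝ) < ‖y‖ := norm_pos_iff.2 hy0
  refine ⟨(t / ‖y‖) • y, ?_⟩
  rw [volMap_eq n hr]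
  have hnx : ‖(t / ‖y‖) • y‖ = t := by
    rw [norm_smul, Real.norm_eq_abs, abs_of_nonneg (by positivity),
      div_mul_cancel₀ _ hy0'.ne']
  rw [hnx, smul_smul]
  have : (1 + σ * psiV n r t) * (t / ‖y‖) = ρ t / ‖y‖ := by rw [hρ]; ring
  rw [this, hρt, div_self hy0'.ne', one_smul]

/-- Derivative bound for the inverse of the volume-adjusting map:
there is `C = C(n) > 0` such that for every `r > 0`, `σ ∈ (0, 2^{−n})` and every point `y`
at which `g = f⁻¹` is differentiable, `‖Dg(y) − I‖ ≤ C σ`. -/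
theorem volMap_inverse_derivative_close_to_identity
    (n : ℕ) (hn : 1 ≤ n) :
    ∃ C > (0 : ℝ), ∀ (r : ℝ), 0 < r → ∀ σ ∈ Set.Ioo (0 : ℝ) (2 ^ n)⁻¹,
      ∀ y : EuclideanSpace ℝ (Fin n),
        DifferentiableAt ℝ (Function.invFun (volMap n r σ)) y →
        ‖fderiv ℝ (Function.invFun (volMap n r σ)) y -
            ContinuousLinearMap.id ℝ (EuclideanSpace ℝ (Fin n))‖ ≤ C * σ := by
  refine ⟨2 ^ n * (2 ^ n + n * 2 ^ (n+1)), by positivity, ?_⟩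
  intro r hr σ hσ y hg
  obtain ⟨hσ0, hσ1⟩ := hσ
  set f := volMap n r σ with hf
  set g := Function.invFun f with hgdef
  have hsurj : Function.Surjective f := volMap_surj n hn hr hσ0.le hσ1.le
  have hginv : ∀ z, f (g z) = z := fun z => Function.rightInverse_invFun hsurj z
  set K : ℝ := 2 ^ n + n * 2 ^ (n+1) with hK
  have hKpos : 0 < K := by positivity
  have h2pow : (0:ℝ) < 2 ^ n := by positivity
  have lipu : ∀ z, ‖(g z - z) - (g y - y)‖ ≤ (2 ^ n * K * σ) * ‖z - y‖ := by
    intro z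
    have hx : ‖g z - g y‖ ≤ 2 ^ n * ‖z - y‖ := by
      have hexp := expansive n hn hr hσ0.le hσ1.le (g z) (g y)
      rw [← hf, hginv, hginv] at hexp
      calc ‖g z - g y‖ = 2 ^ n * ((2 ^ n : ℝ)⁻¹ * ‖g z - g y‖) := by field_simp
        _ ≤ 2 ^ n * ‖z - y‖ := mul_le_mul_of_nonneg_left hexp h2pow.le
    have hd := diff_bound n hn hr hσ0.le (g z) (g y)
    rw [← hf, hginv, hginv] at hd
    have hveq : (g z - z) - (g y - y) = -(z - y - (g z - g y)) := by abel
    rw [hveq, norm_neg]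
    calc ‖z - y - (g z - g y)‖ ≤ σ * K * ‖g z - g y‖ := hd
      _ ≤ σ * K * (2 ^ n * ‖z - y‖) := by gcongr
      _ = (2 ^ n * K * σ) * ‖z - y‖ := by ring
  have hCσ : (0:ℝ) ≤ 2 ^ n * K * σ := by positivity
  have hfd : fderiv ℝ (fun z => g z - z) y
      = fderiv ℝ g y - ContinuousLinearMap.id ℝ (EuclideanSpace ℝ (Fin n)) := by
    rw [fderiv_fun_sub hg differentiableAt_fun_id, fderiv_id']
  have hb := norm_fderiv_le_of_lip' ℝ hCσ (Filter.Eventually.of_forall lipu)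
  rw [hfd] at hb
  calc ‖fderiv ℝ g y - ContinuousLinearMap.id ℝ (EuclideanSpace ℝ (Fin n))‖
      ≤ 2 ^ n * K * σ := hb
    _ = 2 ^ n * (2 ^ n + n * 2 ^ (n+1)) * σ := by rw [hK]
end
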